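/- arXiv:1309.6686 — 3 statements merged into one kernel-verified Lean document; each statement's English description precedes it below -/
import Mathlib

section
/- For every k ≥ 0 and every n ≥ k, Pa(n, P_k) = (k+1)·C(n−k, ⌊(n−k)/2⌋), where P_k is the chain on k+1 elements. -/
open Finset

/-- A weak embedding of a poset `P` into the Boolean lattice `B_n`:
an injective map such that `a < b` implies `f a ⊊ f b`. -/
def IsWeakEmbedding {P : Type*} [PartialOrder P] {n : ℕ} (f : P → Finset (Fin n)) : Prop :=
  Function.Injective f ∧ ∀ a b : P, a < b → f a ⊂ f b

/-- A (weak) copy of the poset `P` in `B_n`: the image of a weak embedding. -/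
def IsCopy (P : Type*) [PartialOrder P] [Fintype P] {n : ℕ}
    (C : Finset (Finset (Fin n))) : Prop :=
  ∃ f : P → Finset (Fin n), IsWeakEmbedding f ∧ C = Finset.image f Finset.univ

/-- Two families of subsets of `[n]` are unrelated if no member of one is comparable
(under inclusion) with a member of the other. -/
def Unrelated {n : ℕ} (F₁ F₂ : Finset (Finset (Fin n))) : Prop :=
  ∀ A ∈ F₁, ∀ B ∈ F₂, ¬ A ⊆ B ∧ ¬ B ⊆ A

/-- `F` is a union of pairwise unrelated copies of `P` in `B_n`. -/
def IsUnionOfUnrelatedCopies (P : Type*) [PartialOrder P] [Fintype P] {n : ℕ}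
    (F : Finset (Finset (Fin n))) : Prop :=
  ∃ 𝒞 : Finset (Finset (Finset (Fin n))),
    (∀ C ∈ 𝒞, IsCopy P C) ∧
    (∀ C₁ ∈ 𝒞, ∀ C₂ ∈ 𝒞, C₁ ≠ C₂ → Unrelated C₁ C₂) ∧
    F = 𝒞.sup id

/-- `Pa P n`: the maximum size of a family of subsets of `[n]` that is a union of
pairwise unrelated copies of `P`. -/
noncomputable def Pa (P : Type*) [PartialOrder P] [Fintype P] (n : ℕ) : ℕ :=
  sSup {m | ∃ F : Finset (Finset (Fin n)), IsUnionOfUnrelatedCopies P F ∧ F.card = m}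

namespace PaChainAux

variable {n : ℕ}

/-- A permutation mapping `P` onto `L` and `Q \ P` onto `Q \ L`, fixing `Qᶜ` pointwise. -/
lemma exists_perm_map {α : Type*} [Fintype α] [DecidableEq α] {P L Q : Finset α}
    (hP : P ⊆ Q) (hL : L ⊆ Q) (hcard : P.card = L.card) :
    ∃ σ : Equiv.Perm α, (∀ x ∈ P, σ x ∈ L) ∧ (∀ x ∈ Q \ P, σ x ∈ Q \ L) ∧ ∀ x ∉ Q, σ x = x := by
  classical
  have h2 : (Q \ P).card = (Q \ L).card := by
    rw [card_sdiff_of_subset hP, card_sdiff_of_subset hL, hcard]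
  let e₁ : (P : Finset α) ≃ (L : Finset α) := Finset.equivOfCardEq hcard
  let e₂ := Finset.equivOfCardEq h2
  let f : α → α := fun x =>
    if h : x ∈ P then (e₁ ⟨x, h⟩ : α)
    else if h2 : x ∈ Q \ P then (e₂ ⟨x, h2⟩ : α) else x
  have hfP : ∀ x (h : x ∈ P), f x = (e₁ ⟨x, h⟩ : α) := by
    intro x h; simp only [f, dif_pos h]
  have hfQP : ∀ x (h : x ∈ Q \ P), f x = (e₂ ⟨x, h⟩ : α) := by
    intro x h
    have hx : x ∉ P := (mem_sdiff.1 h).2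
    simp only [f, dif_neg hx, dif_pos h]
  have hfO : ∀ x, x ∉ Q → f x = x := by
    intro x h
    have h1 : x ∉ P := fun hx => h (hP hx)
    have h2 : x ∉ Q \ P := fun hx => h (mem_sdiff.1 hx).1
    simp only [f, dif_neg h1, dif_neg h2]
  have hmemL : ∀ x ∈ P, f x ∈ L := fun x h => by rw [hfP x h]; exact coe_mem _
  have hmemQL : ∀ x ∈ Q \ P, f x ∈ Q \ L := fun x h => by rw [hfQP x h]; exact coe_mem _
  have hinj : Function.Injective f := by
    intro x y hxy
    by_cases hx : x ∈ P
    · by_cases hy : y ∈ P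
      · have := hxy; rw [hfP x hx, hfP y hy] at this
        have := e₁.injective (Subtype.coe_injective this)
        exact congrArg Subtype.val this
      · exfalso
        have h1 : f x ∈ L := hmemL x hx
        by_cases hy2 : y ∈ Q
        · have h2 : f y ∈ Q \ L := hmemQL y (mem_sdiff.2 ⟨hy2, hy⟩)
          rw [hxy] at h1; exact (mem_sdiff.1 h2).2 h1
        · rw [hfO y hy2] at hxy; rw [hxy] at h1; exact hy2 (hL h1)
    · by_cases hy : y ∈ P
      · exfalso
        have h1 : f y ∈ L := hmemL y hy
        by_cases hx2 : x ∈ Q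
        · have h2 : f x ∈ Q \ L := hmemQL x (mem_sdiff.2 ⟨hx2, hx⟩)
          rw [hxy] at h2; exact (mem_sdiff.1 h2).2 h1
        · rw [hfO x hx2] at hxy; rw [← hxy] at h1; exact hx2 (hL h1)
      · by_cases hx2 : x ∈ Q
        · by_cases hy2 : y ∈ Q
          · have hx3 : x ∈ Q \ P := mem_sdiff.2 ⟨hx2, hx⟩
            have hy3 : y ∈ Q \ P := mem_sdiff.2 ⟨hy2, hy⟩
            have := hxy; rw [hfQP x hx3, hfQP y hy3] at this
            have := e₂.injective (Subtype.coe_injective this)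
            exact congrArg Subtype.val this
          · exfalso
            have h1 : f x ∈ Q \ L := hmemQL x (mem_sdiff.2 ⟨hx2, hx⟩)
            rw [hfO y hy2] at hxy; rw [hxy] at h1; exact hy2 (mem_sdiff.1 h1).1
        · by_cases hy2 : y ∈ Q
          · exfalso
            have h1 : f y ∈ Q \ L := hmemQL y (mem_sdiff.2 ⟨hy2, hy⟩)
            rw [hfO x hx2] at hxy; rw [← hxy] at h1; exact hx2 (mem_sdiff.1 h1).1
          · rw [hfO x hx2, hfO y hy2] at hxy; exact hxy
  refine ⟨Equiv.ofBijective f (Finite.injective_iff_bijective.mp hinj), hmemL, hmemQL, hfO⟩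

/-- The `b` smallest elements of `Q`. -/
def lowPart {α : Type*} [LinearOrder α] [DecidableEq α] (Q : Finset α) (b : ℕ) : Finset α :=
  ((Q.sort (· ≤ ·)).take b).toFinset

lemma lowPart_subset {α : Type*} [LinearOrder α] [DecidableEq α] (Q : Finset α) (b : ℕ) :
    lowPart Q b ⊆ Q := by
  intro x hx
  rw [lowPart, List.mem_toFinset] at hx
  exact (Finset.mem_sort (α := α) (· ≤ ·)).1 (List.mem_of_mem_take hx)

lemma card_lowPart {α : Type*} [LinearOrder α] [DecidableEq α] (Q : Finset α) {b : ℕ}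
    (hb : b ≤ Q.card) : (lowPart Q b).card = b := by
  have hnd : ((Q.sort (· ≤ ·)).take b).Nodup :=
    (Q.sort_nodup (· ≤ ·)).sublist (List.take_sublist _ _)
  rw [lowPart, List.card_toFinset, hnd.dedup]
  rw [List.length_take, Finset.length_sort]
  exact Nat.min_eq_left hb

lemma lowPart_lt {α : Type*} [LinearOrder α] [DecidableEq α] {Q : Finset α} {b : ℕ} {x y : α}
    (hx : x ∈ lowPart Q b) (hy : y ∈ Q) (hy2 : y ∉ lowPart Q b) : x < y := by
  rw [lowPart, List.mem_toFinset] at hx hy2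
  have hyl : y ∈ (Q.sort (· ≤ ·)) := (Finset.mem_sort (α := α) (· ≤ ·)).2 hy
  have hyd : y ∈ (Q.sort (· ≤ ·)).drop b := by
    have h0 : y ∈ (Q.sort (· ≤ ·)).take b ++ (Q.sort (· ≤ ·)).drop b := by
      rw [List.take_append_drop]; exact hyl
    rcases List.mem_append.1 h0 with h | h
    · exact absurd h hy2
    · exact h
  exact (Q.sortedLT_sort).pairwise.rel_of_mem_take_of_mem_drop hx hyd

/-- The event that every element of `B` occurs before every element of `R` in the
permutation `π` (reading positions via `π.symm`). -/
def Ev (B R : Finset (Fin n)) : Finset (Equiv.Perm (Fin n)) :=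
  Finset.univ.filter fun π => ∀ x ∈ B, ∀ y ∈ R, π.symm x < π.symm y

noncomputable def sig (b : ℕ) (P Q : Finset (Fin n)) : Equiv.Perm (Fin n) :=
  if h : P ⊆ Q ∧ P.card = (lowPart Q b).card then
    (exists_perm_map h.1 (lowPart_subset Q b) h.2).choose
  else 1

lemma sig_spec (b : ℕ) (P Q : Finset (Fin n)) (h1 : P ⊆ Q) (h2 : P.card = (lowPart Q b).card) :
    (∀ x ∈ P, sig b P Q x ∈ lowPart Q b) ∧ (∀ x ∈ Q \ P, sig b P Q x ∈ Q \ lowPart Q b) ∧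
      ∀ x ∉ Q, sig b P Q x = x := by
  rw [sig, dif_pos ⟨h1, h2⟩]
  exact (exists_perm_map h1 (lowPart_subset Q b) h2).choose_spec

lemma factorial_le_Ev (B R : Finset (Fin n)) (hd : Disjoint B R) :
    n.factorial ≤ (B.card + R.card).choose B.card * (Ev B R).card := by
  classical
  set b := B.card with hb
  set u := B.card + R.card with hu
  have hbu : b ≤ u := Nat.le_add_right _ _
  set U := B ∪ R with hUdef
  have hUcard : U.card = u := card_union_of_disjoint hd
  set PQ : Equiv.Perm (Fin n) → Finset (Fin n) := fun π => U.map π.symm.toEmbedding with hPQdef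
  set PB : Equiv.Perm (Fin n) → Finset (Fin n) := fun π => B.map π.symm.toEmbedding with hPBdef
  have memPQ : ∀ (π : Equiv.Perm (Fin n)) p, p ∈ PQ π ↔ π p ∈ U := by
    intro π p
    simp only [hPQdef, mem_map, Equiv.coe_toEmbedding]
    constructor
    · rintro ⟨a, ha, rfl⟩; simpa using ha
    · intro h; exact ⟨π p, h, by simp⟩
  have memPB : ∀ (π : Equiv.Perm (Fin n)) p, p ∈ PB π ↔ π p ∈ B := by
    intro π p
    simp only [hPBdef, mem_map, Equiv.coe_toEmbedding]
    constructor
    · rintro ⟨a, ha, rfl⟩; simpa using ha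
    · intro h; exact ⟨π p, h, by simp⟩
  have hPBQ : ∀ π, PB π ⊆ PQ π := fun π => map_subset_map.2 subset_union_left
  have hPBcard : ∀ π, (PB π).card = b := fun π => card_map _
  have hPQcard : ∀ π, (PQ π).card = u := fun π => by rw [hPQdef]; simp [card_map, hUcard]
  have hlowcard : ∀ π, (lowPart (PQ π) b).card = b := fun π =>
    card_lowPart _ (by rw [hPQcard]; exact hbu)
  have hσspec : ∀ π, (∀ x ∈ PB π, sig b (PB π) (PQ π) x ∈ lowPart (PQ π) b) ∧
      (∀ x ∈ PQ π \ PB π, sig b (PB π) (PQ π) x ∈ PQ π \ lowPart (PQ π) b) ∧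
      ∀ x ∉ PQ π, sig b (PB π) (PQ π) x = x := fun π =>
    sig_spec b _ _ (hPBQ π) (by rw [hPBcard, hlowcard])
  have hσQ : ∀ (π : Equiv.Perm (Fin n)) p, p ∈ PQ π ↔ sig b (PB π) (PQ π) p ∈ PQ π := by
    intro π p
    obtain ⟨s1, s2, s3⟩ := hσspec π
    constructor
    · intro hp
      by_cases hpB : p ∈ PB π
      · exact lowPart_subset _ _ (s1 p hpB)
      · exact (mem_sdiff.1 (s2 p (mem_sdiff.2 ⟨hp, hpB⟩))).1
    · intro hp; by_contra hpn; rw [s3 p hpn] at hp; exact hpn hp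
  set Φ : Equiv.Perm (Fin n) → Equiv.Perm (Fin n) :=
    fun π => π * (sig b (PB π) (PQ π))⁻¹ with hΦdef
  have hsymm : ∀ (π σ : Equiv.Perm (Fin n)) x, (π * σ⁻¹).symm x = σ (π.symm x) := by
    intro π σ x
    rw [Equiv.symm_apply_eq]
    simp [Equiv.Perm.mul_apply]
  have hΦmem : ∀ π, Φ π ∈ Ev B R := by
    intro π
    obtain ⟨s1, s2, s3⟩ := hσspec π
    rw [Ev, mem_filter]
    refine ⟨mem_univ _, ?_⟩
    intro x hx y hy
    rw [hΦdef]
    simp only [hsymm]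
    have hxB : π.symm x ∈ PB π := by
      rw [memPB, Equiv.apply_symm_apply]; exact hx
    have hyU : π.symm y ∈ PQ π := by
      rw [memPQ, Equiv.apply_symm_apply]; exact subset_union_right hy
    have hyB : π.symm y ∉ PB π := by
      intro hc
      rw [memPB, Equiv.apply_symm_apply] at hc
      exact disjoint_left.1 hd hc hy
    have h2 := s2 _ (mem_sdiff.2 ⟨hyU, hyB⟩)
    exact lowPart_lt (s1 _ hxB) (mem_sdiff.1 h2).1 (mem_sdiff.1 h2).2
  have hPQΦ : ∀ π, PQ (Φ π) = PQ π := by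
    intro π
    ext p
    rw [memPQ]
    have h1 : (Φ π) p = π ((sig b (PB π) (PQ π))⁻¹ p) := rfl
    rw [h1, ← memPQ]
    rw [hσQ π ((sig b (PB π) (PQ π))⁻¹ p)]
    rw [Equiv.Perm.inv_def, Equiv.apply_symm_apply]
  have key : ∀ π'' ∈ Ev B R, (univ.filter fun π => Φ π = π'').card ≤ u.choose b := by
    intro π'' _
    have h1 : (univ.filter fun π => Φ π = π'').card ≤ ((PQ π'').powersetCard b).card := by
      apply card_le_card_of_injOn (fun π => PB π)
      · intro π hπ
        rw [mem_coe, mem_filter] at hπ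
        rw [mem_coe, mem_powersetCard]
        exact ⟨by rw [← hπ.2, hPQΦ]; exact hPBQ π, hPBcard π⟩
      · intro π₁ h₁ π₂ h₂ heq
        rw [mem_coe, mem_filter] at h₁ h₂
        have hq : PQ π₁ = PQ π₂ := by rw [← hPQΦ π₁, ← hPQΦ π₂, h₁.2, h₂.2]
        have e₁ : π₁ = Φ π₁ * sig b (PB π₁) (PQ π₁) := by
          rw [hΦdef]; simp
        have e₂ : π₂ = Φ π₂ * sig b (PB π₂) (PQ π₂) := by
          rw [hΦdef]; simp
        have heq' : PB π₁ = PB π₂ := heq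
        rw [e₁, e₂, h₁.2, h₂.2, heq', hq]
    rwa [card_powersetCard, hPQcard] at h1
  have main := card_le_mul_card_image_of_maps_to (f := Φ) (s := univ) (t := Ev B R)
    (fun a _ => hΦmem a) (u.choose b) key
  rwa [card_univ, Fintype.card_perm, Fintype.card_fin] at main

lemma Ev_disjoint {B₁ R₁ B₂ R₂ : Finset (Fin n)} {x y : Fin n}
    (hx1 : x ∈ B₁) (hx2 : x ∈ R₂) (hy1 : y ∈ B₂) (hy2 : y ∈ R₁) :
    Disjoint (Ev B₁ R₁) (Ev B₂ R₂) := by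
  rw [disjoint_left]
  intro π h1 h2
  rw [Ev, mem_filter] at h1 h2
  exact lt_asymm (h1.2 x hx1 y hy2) (h2.2 y hy1 x hx2)

lemma copy_chain {k : ℕ} {C : Finset (Finset (Fin n))} (h : IsCopy (Fin (k + 1)) C) :
    ∃ B T : Finset (Fin n), B ∈ C ∧ T ∈ C ∧ B ⊆ T ∧ B.card + k ≤ T.card := by
  obtain ⟨f, ⟨-, fmono⟩, hC⟩ := h
  have hmem : ∀ i : Fin (k + 1), f i ∈ C := by
    intro i; rw [hC]; exact mem_image_of_mem f (mem_univ i)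
  have hcard : ∀ i : ℕ, ∀ hi : i < k + 1, (f 0).card + i ≤ (f ⟨i, hi⟩).card := by
    intro i
    induction i with
    | zero => intro hi; simp
    | succ j ih =>
      intro hi
      have hj : j < k + 1 := Nat.lt_of_succ_lt hi
      have hlt : (⟨j, hj⟩ : Fin (k + 1)) < ⟨j + 1, hi⟩ := by
        rw [Fin.lt_def]; exact Nat.lt_succ_self j
      have := card_lt_card (fmono _ _ hlt)
      have h0 := ih hj
      omega
  refine ⟨f 0, f (Fin.last k), hmem 0, hmem (Fin.last k), ?_, ?_⟩
  · rcases Nat.eq_zero_or_pos k with hk | hk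
    · subst hk
      have : (Fin.last 0) = (0 : Fin 1) := rfl
      rw [this]
    · have hlt : (0 : Fin (k + 1)) < Fin.last k := by
        rw [Fin.lt_def]; simpa using hk
      exact (fmono _ _ hlt).subset
  · have := hcard k (Nat.lt_succ_self k)
    simpa [Fin.last] using this

lemma central_le {a c : ℕ} (h : a ≤ c) : a.choose (a / 2) ≤ c.choose (c / 2) := by
  induction c with
  | zero => interval_cases a; simp
  | succ c ih =>
    rcases Nat.lt_or_ge a (c + 1) with hl | hg
    · have h1 := ih (Nat.lt_succ_iff.1 hl)
      calc a.choose (a / 2) ≤ c.choose (c / 2) := h1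
        _ ≤ (c + 1).choose (c / 2) := Nat.choose_le_choose _ (Nat.le_succ c)
        _ ≤ (c + 1).choose ((c + 1) / 2) := Nat.choose_le_middle _ _
    · have : a = c + 1 := le_antisymm h hg
      subst this; exact le_refl _

lemma card_copies_le {k : ℕ} (hkn : k ≤ n) (𝒞 : Finset (Finset (Finset (Fin n))))
    (hcopy : ∀ C ∈ 𝒞, IsCopy (Fin (k + 1)) C)
    (hunrel : ∀ C₁ ∈ 𝒞, ∀ C₂ ∈ 𝒞, C₁ ≠ C₂ → Unrelated C₁ C₂) :
    𝒞.card ≤ (n - k).choose ((n - k) / 2) := by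
  classical
  set N := (n - k).choose ((n - k) / 2) with hN
  have key : ∀ C : Finset (Finset (Fin n)), ∃ B T : Finset (Fin n),
      C ∈ 𝒞 → (B ∈ C ∧ T ∈ C ∧ B ⊆ T ∧ B.card + k ≤ T.card) := by
    intro C
    by_cases hC : C ∈ 𝒞
    · obtain ⟨B, T, h1, h2, h3, h4⟩ := copy_chain (hcopy C hC)
      exact ⟨B, T, fun _ => ⟨h1, h2, h3, h4⟩⟩
    · exact ⟨∅, ∅, fun h => absurd h hC⟩
  choose Bf Tf hBT using key
  -- each event is big
  have hbig : ∀ C ∈ 𝒞, n.factorial ≤ N * (Ev (Bf C) ((Tf C)ᶜ)).card := by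
    intro C hC
    obtain ⟨hB, hT, hsub, hcard⟩ := hBT C hC
    have hdisj : Disjoint (Bf C) ((Tf C)ᶜ) :=
      Disjoint.mono_left hsub disjoint_compl_right
    have h1 := factorial_le_Ev (Bf C) ((Tf C)ᶜ) hdisj
    have hTn : (Tf C).card ≤ n := by
      simpa using card_le_univ (Tf C)
    have hcompl : ((Tf C)ᶜ).card = n - (Tf C).card := by
      simp [card_compl]
    have hle : (Bf C).card + ((Tf C)ᶜ).card ≤ n - k := by omega
    have h2 : ((Bf C).card + ((Tf C)ᶜ).card).choose (Bf C).card ≤ N := by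
      calc ((Bf C).card + ((Tf C)ᶜ).card).choose (Bf C).card
          ≤ ((Bf C).card + ((Tf C)ᶜ).card).choose (((Bf C).card + ((Tf C)ᶜ).card) / 2) :=
            Nat.choose_le_middle _ _
        _ ≤ N := central_le hle
    calc n.factorial ≤ ((Bf C).card + ((Tf C)ᶜ).card).choose (Bf C).card
          * (Ev (Bf C) ((Tf C)ᶜ)).card := h1
      _ ≤ N * (Ev (Bf C) ((Tf C)ᶜ)).card := Nat.mul_le_mul_right _ h2
  -- events are pairwise disjoint
  have hdisj : ∀ C₁ ∈ 𝒞, ∀ C₂ ∈ 𝒞, C₁ ≠ C₂ →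
      Disjoint (Ev (Bf C₁) ((Tf C₁)ᶜ)) (Ev (Bf C₂) ((Tf C₂)ᶜ)) := by
    intro C₁ h₁ C₂ h₂ hne
    obtain ⟨hB₁, hT₁, -, -⟩ := hBT C₁ h₁
    obtain ⟨hB₂, hT₂, -, -⟩ := hBT C₂ h₂
    have u12 := (hunrel C₁ h₁ C₂ h₂ hne (Bf C₁) hB₁ (Tf C₂) hT₂).1
    have u21 := (hunrel C₂ h₂ C₁ h₁ hne.symm (Bf C₂) hB₂ (Tf C₁) hT₁).1
    obtain ⟨x, hx1, hx2⟩ := not_subset.1 u12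
    obtain ⟨y, hy1, hy2⟩ := not_subset.1 u21
    exact Ev_disjoint hx1 (mem_compl.2 hx2) hy1 (mem_compl.2 hy2)
  -- sum of events
  have hsum : ∑ C ∈ 𝒞, (Ev (Bf C) ((Tf C)ᶜ)).card ≤ n.factorial := by
    rw [← card_biUnion hdisj]
    calc (𝒞.biUnion fun C => Ev (Bf C) ((Tf C)ᶜ)).card
        ≤ (univ : Finset (Equiv.Perm (Fin n))).card := card_le_univ _
      _ = n.factorial := by rw [card_univ, Fintype.card_perm, Fintype.card_fin]
  have htotal : 𝒞.card * n.factorial ≤ N * n.factorial := by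
    calc 𝒞.card * n.factorial = ∑ _C ∈ 𝒞, n.factorial := by
          rw [Finset.sum_const, smul_eq_mul]
      _ ≤ ∑ C ∈ 𝒞, N * (Ev (Bf C) ((Tf C)ᶜ)).card := Finset.sum_le_sum hbig
      _ = N * ∑ C ∈ 𝒞, (Ev (Bf C) ((Tf C)ᶜ)).card := by rw [Finset.mul_sum]
      _ ≤ N * n.factorial := Nat.mul_le_mul_left _ hsum
  exact Nat.le_of_mul_le_mul_right htotal (Nat.factorial_pos n)

lemma family_card_le {k : ℕ} (hkn : k ≤ n) {F : Finset (Finset (Fin n))}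
    (h : IsUnionOfUnrelatedCopies (Fin (k + 1)) F) :
    F.card ≤ (k + 1) * (n - k).choose ((n - k) / 2) := by
  classical
  obtain ⟨𝒞, hcopy, hunrel, rfl⟩ := h
  have h1 : 𝒞.sup id = 𝒞.biUnion id := Finset.sup_eq_biUnion 𝒞 id
  rw [h1]
  calc (𝒞.biUnion id).card ≤ ∑ C ∈ 𝒞, (id C).card := card_biUnion_le
    _ ≤ ∑ _C ∈ 𝒞, (k + 1) := by
        apply Finset.sum_le_sum
        intro C hC
        obtain ⟨f, -, hCf⟩ := hcopy C hC
        calc (id C).card = (Finset.image f univ).card := by rw [id, hCf]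
          _ ≤ (univ : Finset (Fin (k + 1))).card := card_image_le
          _ = k + 1 := by simp
    _ = 𝒞.card * (k + 1) := by rw [Finset.sum_const, smul_eq_mul]
    _ ≤ (n - k).choose ((n - k) / 2) * (k + 1) :=
        Nat.mul_le_mul_right _ (card_copies_le hkn 𝒞 hcopy hunrel)
    _ = (k + 1) * (n - k).choose ((n - k) / 2) := Nat.mul_comm _ _

lemma exists_family (k : ℕ) (hkn : k ≤ n) :
    ∃ F : Finset (Finset (Fin n)), IsUnionOfUnrelatedCopies (Fin (k + 1)) F ∧
      F.card = (k + 1) * (n - k).choose ((n - k) / 2) := by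
  classical
  set m := n - k with hm
  have hmn : m ≤ n := Nat.sub_le n k
  have hmk : m + k = n := by omega
  have hb : ∀ x ∈ Finset.range m, x < n := fun x hx => lt_of_lt_of_le (mem_range.1 hx) hmn
  set Base : Finset (Fin n) := (Finset.range m).attachFin hb with hBase
  have memBase : ∀ x : Fin n, x ∈ Base ↔ (x : ℕ) < m := by
    intro x; rw [hBase, Finset.mem_attachFin, mem_range]
  have hBaseCard : Base.card = m := by rw [hBase, Finset.card_attachFin, card_range]
  have ht : ∀ j : Fin (k + 1), ∀ x ∈ Finset.Ico m (m + (j : ℕ)), x < n := by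
    intro j x hx
    have h1 := (mem_Ico.1 hx).2
    have h2 : (j : ℕ) ≤ k := Nat.lt_succ_iff.1 j.isLt
    omega
  set tail : Fin (k + 1) → Finset (Fin n) :=
    fun j => (Finset.Ico m (m + (j : ℕ))).attachFin (ht j) with htail
  have memtail : ∀ (j : Fin (k + 1)) (x : Fin n),
      x ∈ tail j ↔ m ≤ (x : ℕ) ∧ (x : ℕ) < m + (j : ℕ) := by
    intro j x; rw [htail]; simp only [Finset.mem_attachFin, mem_Ico]
  have htailcard : ∀ j : Fin (k + 1), (tail j).card = (j : ℕ) := by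
    intro j; rw [htail]; simp [Finset.card_attachFin, Nat.card_Ico]
  set g : Finset (Fin n) → Fin (k + 1) → Finset (Fin n) := fun S j => S ∪ tail j with hg
  have hdisjS : ∀ S : Finset (Fin n), S ⊆ Base → ∀ j, Disjoint S (tail j) := by
    intro S hS j
    rw [disjoint_left]
    intro a ha hat
    have h1 := (memBase a).1 (hS ha)
    have h2 := ((memtail j a).1 hat).1
    omega
  have hgcard : ∀ S, S ⊆ Base → ∀ j, (g S j).card = S.card + (j : ℕ) := by
    intro S hS j
    rw [hg]
    simp only
    rw [card_union_of_disjoint (hdisjS S hS j), htailcard]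
  have hgmono : ∀ S, S ⊆ Base → ∀ a b : Fin (k + 1), a < b → g S a ⊂ g S b := by
    intro S hS a b hab
    have hsub : g S a ⊆ g S b := by
      apply union_subset_union_right
      intro x hx
      rw [memtail] at hx ⊢
      have : (a : ℕ) < (b : ℕ) := hab
      omega
    rw [ssubset_iff_subset_ne]
    refine ⟨hsub, fun hEq => ?_⟩
    have := hgcard S hS a
    rw [hEq, hgcard S hS b] at this
    have : (a : ℕ) = (b : ℕ) := by omega
    exact absurd (Fin.ext this) (ne_of_lt hab)
  have hginj : ∀ S, S ⊆ Base → Function.Injective (g S) := by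
    intro S hS a b hab
    have h1 := hgcard S hS a
    rw [hab, hgcard S hS b] at h1
    exact Fin.ext (by omega)
  -- key separation lemma
  have hkey : ∀ S S' : Finset (Fin n), S ⊆ Base → S' ⊆ Base → S.card = S'.card →
      ∀ j j' : Fin (k + 1), g S j ⊆ g S' j' → S = S' := by
    intro S S' hS hS' hcard j j' hsub
    apply eq_of_subset_of_card_le _ (le_of_eq hcard.symm)
    intro x hx
    have hx2 : x ∈ g S' j' := hsub (subset_union_left hx)
    rcases mem_union.1 hx2 with h | h
    · exact h
    · exfalso
      have h1 := (memBase x).1 (hS hx)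
      have h2 := ((memtail j' x).1 h).1
      omega
  set A := Base.powersetCard (m / 2) with hA
  have memA : ∀ S, S ∈ A ↔ S ⊆ Base ∧ S.card = m / 2 := fun S => mem_powersetCard
  set copy : Finset (Fin n) → Finset (Finset (Fin n)) :=
    fun S => Finset.image (g S) Finset.univ with hcopy
  set 𝒞 := A.image copy with h𝒞
  have hunrel : ∀ S ∈ A, ∀ S' ∈ A, S ≠ S' → Unrelated (copy S) (copy S') := by
    intro S hS S' hS' hne
    intro A₁ hA₁ A₂ hA₂
    obtain ⟨j₁, -, rfl⟩ := mem_image.1 hA₁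
    obtain ⟨j₂, -, rfl⟩ := mem_image.1 hA₂
    obtain ⟨hSb, hSc⟩ := (memA S).1 hS
    obtain ⟨hSb', hSc'⟩ := (memA S').1 hS'
    constructor
    · intro hsub
      exact hne (hkey S S' hSb hSb' (by omega) j₁ j₂ hsub)
    · intro hsub
      exact hne.symm (hkey S' S hSb' hSb (by omega) j₂ j₁ hsub)
  have hdisjcopy : ∀ S ∈ A, ∀ S' ∈ A, S ≠ S' → Disjoint (copy S) (copy S') := by
    intro S hS S' hS' hne
    rw [disjoint_left]
    intro X hX hX'
    exact ((hunrel S hS S' hS' hne) X hX X hX').1 Subset.rfl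
  have hcopyinj : ∀ S ∈ A, ∀ S' ∈ A, copy S = copy S' → S = S' := by
    intro S hS S' hS' hEq
    by_contra hne
    have hd := hdisjcopy S hS S' hS' hne
    have hmem : g S 0 ∈ copy S := mem_image_of_mem _ (mem_univ _)
    rw [disjoint_left] at hd
    exact hd hmem (hEq ▸ hmem)
  refine ⟨𝒞.sup id, ⟨𝒞, ?_, ?_, rfl⟩, ?_⟩
  · intro C hC
    obtain ⟨S, hS, rfl⟩ := mem_image.1 hC
    exact ⟨g S, ⟨hginj S ((memA S).1 hS).1, hgmono S ((memA S).1 hS).1⟩, rfl⟩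
  · intro C₁ h₁ C₂ h₂ hne
    obtain ⟨S, hS, rfl⟩ := mem_image.1 h₁
    obtain ⟨S', hS', rfl⟩ := mem_image.1 h₂
    exact hunrel S hS S' hS' (fun h => hne (by rw [h]))
  · have hsup : 𝒞.sup id = A.biUnion copy := by
      ext X
      rw [Finset.mem_sup, mem_biUnion]
      constructor
      · rintro ⟨C, hC, hX⟩
        obtain ⟨S, hS, rfl⟩ := mem_image.1 hC
        exact ⟨S, hS, hX⟩
      · rintro ⟨S, hS, hX⟩
        exact ⟨copy S, mem_image_of_mem _ hS, hX⟩
    rw [hsup, card_biUnion hdisjcopy]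
    have hcards : ∀ S ∈ A, (copy S).card = k + 1 := by
      intro S hS
      rw [hcopy]
      simp only
      rw [Finset.card_image_of_injective _ (hginj S ((memA S).1 hS).1)]
      simp
    rw [Finset.sum_congr rfl hcards, Finset.sum_const, smul_eq_mul]
    rw [hA, Finset.card_powersetCard, hBaseCard, Nat.mul_comm]

end PaChainAux

/-- Griggs–Stahl–Trotter. For `k ≥ 0` and `n ≥ k`,
`Pa(n, P_k) = (k+1)·C(n−k, ⌊(n−k)/2⌋)`, where `P_k` is the chain on `k+1`
elements (formalized as `Fin (k+1)`). -/
theorem pa_chain (k n : ℕ) (hkn : k ≤ n) :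
    Pa (Fin (k + 1)) n = (k + 1) * (n - k).choose ((n - k) / 2) := by
  classical
  obtain ⟨F, hF, hFcard⟩ := PaChainAux.exists_family k hkn
  rw [Pa]
  have hne : {m | ∃ G : Finset (Finset (Fin n)),
      IsUnionOfUnrelatedCopies (Fin (k + 1)) G ∧ G.card = m}.Nonempty :=
    ⟨F.card, F, hF, rfl⟩
  apply le_antisymm
  · apply csSup_le hne
    rintro x ⟨G, hG, rfl⟩
    exact PaChainAux.family_card_le hkn hG
  · apply le_csSup
    · refine ⟨(k + 1) * (n - k).choose ((n - k) / 2), ?_⟩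
      rintro x ⟨G, hG, rfl⟩
      exact PaChainAux.family_card_le hkn hG
    · exact ⟨F, hF, hFcard⟩
end

section
/- For every finite poset P, as n → ∞, Pa*(n, P) is asymptotically equal to (|P| / c*(P)) · C(n, ⌊n/2⌋); that is, Pa*(n,P) / C(n, ⌊n/2⌋) → |P| / c*(P). -/
/-- A strong embedding of a poset `P` into the Boolean lattice `B_n`:
an injective map such that `a < b` iff `f a ⊊ f b`. -/
def IsStrongEmbedding {P : Type*} [PartialOrder P] {n : ℕ} (f : P → Finset (Fin n)) : Prop :=
  Function.Injective f ∧ ∀ a b : P, a < b ↔ f a ⊂ f b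

/-- An induced copy of the poset `P` in `B_n`: the image of a strong embedding. -/
def IsInducedCopy (P : Type*) [PartialOrder P] [Fintype P] {n : ℕ}
    (C : Finset (Finset (Fin n))) : Prop :=
  ∃ f : P → Finset (Fin n), IsStrongEmbedding f ∧ C = Finset.image f Finset.univ


/-- `F` is a union of pairwise unrelated induced copies of `P` in `B_n`. -/
def IsUnionOfUnrelatedInducedCopies (P : Type*) [PartialOrder P] [Fintype P] {n : ℕ}
    (F : Finset (Finset (Fin n))) : Prop :=
  ∃ 𝒞 : Finset (Finset (Finset (Fin n))),
    (∀ C ∈ 𝒞, IsInducedCopy P C) ∧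
    (∀ C₁ ∈ 𝒞, ∀ C₂ ∈ 𝒞, C₁ ≠ C₂ → Unrelated C₁ C₂) ∧
    F = 𝒞.sup id

/-- `Pa* P n`: the maximum size of a family of subsets of `[n]` that is a union of
pairwise unrelated induced copies of `P`. -/
noncomputable def PaStar (P : Type*) [PartialOrder P] [Fintype P] (n : ℕ) : ℕ :=
  sSup {m | ∃ F : Finset (Finset (Fin n)), IsUnionOfUnrelatedInducedCopies P F ∧ F.card = m}

/-- The convex closure of a family `F` of subsets of `[n]`:
all `S` with `A ⊆ S ⊆ B` for some `A, B ∈ F`. -/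
def convexClosure {n : ℕ} (F : Finset (Finset (Fin n))) : Finset (Finset (Fin n)) :=
  Finset.univ.filter (fun S => ∃ A ∈ F, ∃ B ∈ F, A ⊆ S ∧ S ⊆ B)

/-- `c*(P)`: the minimum size of the convex closure of the image of a strong embedding
of `P` into a Boolean lattice `B_k`, over all `k` and all strong embeddings. -/
noncomputable def closureNumStar (P : Type*) [PartialOrder P] [Fintype P] : ℕ :=
  sInf {m | ∃ (k : ℕ) (f : P → Finset (Fin k)), IsStrongEmbedding f ∧
    (convexClosure (Finset.image f Finset.univ)).card = m}


open Finset

section PermCount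

variable {n : ℕ} {κ : Type} [Fintype κ] [DecidableEq κ]

/-- Permutations respecting a pair of colorings, as an equiv with fiberwise bijections. -/
def permColorEquiv (φ ψ : Fin n → κ) :
    {σ : Equiv.Perm (Fin n) // ∀ x, ψ (σ x) = φ x} ≃ Π c, ({x // φ x = c} ≃ {y // ψ y = c}) where
  toFun σ c :=
    { toFun := fun x => ⟨σ.1 x.1, by rw [σ.2]; exact x.2⟩
      invFun := fun y => ⟨σ.1.symm y.1, by
        have := σ.2 (σ.1.symm y.1)
        rw [Equiv.apply_symm_apply] at this
        rw [← this]; exact y.2⟩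
      left_inv := fun x => by ext; simp
      right_inv := fun y => by ext; simp }
  invFun e :=
    ⟨(Equiv.sigmaFiberEquiv φ).symm.trans ((Equiv.sigmaCongrRight e).trans (Equiv.sigmaFiberEquiv ψ)),
      by intro x; exact (e (φ x) ⟨x, rfl⟩).2⟩
  left_inv σ := by
    ext x
    rfl
  right_inv e := by
    funext c
    ext x
    obtain ⟨x, hx⟩ := x
    subst hx
    rfl

lemma card_perm_color (φ ψ : Fin n → κ)
    (h : ∀ c, (univ.filter (fun x => φ x = c)).card = (univ.filter (fun y => ψ y = c)).card) :
    (univ.filter (fun σ : Equiv.Perm (Fin n) => ∀ x, ψ (σ x) = φ x)).card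
      = ∏ c, (univ.filter (fun x => φ x = c)).card.factorial := by
  classical
  rw [← Fintype.card_subtype]
  rw [Fintype.card_congr (permColorEquiv φ ψ)]
  rw [Fintype.card_pi]
  refine Finset.prod_congr rfl (fun c _ => ?_)
  have h1 : Fintype.card {x // φ x = c} = (univ.filter (fun x => φ x = c)).card :=
    Fintype.card_subtype _
  have h2 : Fintype.card {y // ψ y = c} = (univ.filter (fun y => ψ y = c)).card :=
    Fintype.card_subtype _
  have hcc : Fintype.card {x // φ x = c} = Fintype.card {y // ψ y = c} := by
    rw [h1, h2, h c]
  rw [Fintype.card_equiv (Fintype.equivOfCardEq hcc), h1]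

end PermCount


open Finset

section Hits

variable {n : ℕ}

def Hits (σ : Equiv.Perm (Fin n)) (S : Finset (Fin n)) : Prop :=
  ∀ i, σ i ∈ S ↔ (i : ℕ) < S.card

instance {σ : Equiv.Perm (Fin n)} {S : Finset (Fin n)} : Decidable (Hits σ S) :=
  inferInstanceAs (Decidable (∀ i, _ ∈ _ ↔ _))

lemma hits_comparable {σ : Equiv.Perm (Fin n)} {S T : Finset (Fin n)}
    (hS : Hits σ S) (hT : Hits σ T) : S ⊆ T ∨ T ⊆ S := by
  rcases le_total S.card T.card with h | h
  · left
    intro x hx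
    obtain ⟨i, rfl⟩ := σ.surjective x
    exact (hT i).mpr (lt_of_lt_of_le ((hS i).mp hx) h)
  · right
    intro x hx
    obtain ⟨i, rfl⟩ := σ.surjective x
    exact (hS i).mpr (lt_of_lt_of_le ((hT i).mp hx) h)

lemma filter_val_lt_card (s : ℕ) (hs : s ≤ n) :
    ((univ : Finset (Fin n)).filter (fun x : Fin n => (x : ℕ) < s)).card = s := by
  have h1 : ((univ : Finset (Fin n)).filter (fun x : Fin n => (x : ℕ) < s)).map Fin.valEmbedding
      = (range n).filter (· < s) := by
    ext y
    simp only [mem_map, mem_filter, mem_univ, true_and, mem_range, Fin.valEmbedding_apply]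
    constructor
    · rintro ⟨x, hx, rfl⟩; exact ⟨x.isLt, hx⟩
    · rintro ⟨hy, hys⟩; exact ⟨⟨y, hy⟩, hys, rfl⟩
  have h2 : (range n).filter (· < s) = range s := by
    ext y; simp only [mem_filter, mem_range]; omega
  have := congrArg Finset.card h1
  rwa [Finset.card_map, h2, Finset.card_range] at this

lemma filter_mem_card (S : Finset (Fin n)) :
    ((univ : Finset (Fin n)).filter (fun x : Fin n => x ∈ S)).card = S.card := by
  congr 1
  ext x; simp

lemma card_hits (S : Finset (Fin n)) :
    ((univ : Finset (Equiv.Perm (Fin n))).filter (fun σ => Hits σ S)).card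
      = S.card.factorial * (n - S.card).factorial := by
  classical
  have hs : S.card ≤ n := by
    simpa using Finset.card_le_univ S
  have key := card_perm_color (n := n) (κ := Bool)
    (fun x : Fin n => decide ((x : ℕ) < S.card)) (fun y : Fin n => decide (y ∈ S)) ?_
  · have hcond : ∀ σ : Equiv.Perm (Fin n),
        (∀ x : Fin n, decide (σ x ∈ S) = decide ((x : ℕ) < S.card)) ↔ Hits σ S := by
      intro σ
      constructor
      · intro h i; exact decide_eq_decide.mp (h i)
      · intro h i; exact decide_eq_decide.mpr (h i)
    calc ((univ : Finset (Equiv.Perm (Fin n))).filter (fun σ => Hits σ S)).card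
        = ((univ : Finset (Equiv.Perm (Fin n))).filter
            (fun σ => ∀ x : Fin n, decide (σ x ∈ S) = decide ((x : ℕ) < S.card))).card := by
          congr 1; apply Finset.filter_congr; intro σ _; simpa using (hcond σ).symm
      _ = ∏ c : Bool, ((univ : Finset (Fin n)).filter
            (fun x : Fin n => decide ((x : ℕ) < S.card) = c)).card.factorial := key
      _ = S.card.factorial * (n - S.card).factorial := by
          rw [Fintype.prod_bool]
          congr 1
          · congr 1
            calc ((univ : Finset (Fin n)).filter (fun x : Fin n => decide ((x:ℕ) < S.card) = true)).card
                = ((univ : Finset (Fin n)).filter (fun x : Fin n => (x:ℕ) < S.card)).card := by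
                  congr 1; apply Finset.filter_congr; intro x _; simp
              _ = S.card := filter_val_lt_card _ hs
          · congr 1
            have : ((univ : Finset (Fin n)).filter (fun x : Fin n => decide ((x:ℕ) < S.card) = false))
                = univ \ ((univ : Finset (Fin n)).filter (fun x : Fin n => (x:ℕ) < S.card)) := by
              ext x; simp
            rw [this, Finset.card_sdiff_of_subset (Finset.filter_subset _ _), filter_val_lt_card _ hs,
              Finset.card_univ, Fintype.card_fin]
  · intro c
    cases c
    · have e1 : ((univ : Finset (Fin n)).filter (fun x : Fin n => decide ((x:ℕ) < S.card) = false))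
          = univ \ ((univ : Finset (Fin n)).filter (fun x : Fin n => (x:ℕ) < S.card)) := by
        ext x; simp
      have e2 : ((univ : Finset (Fin n)).filter (fun y => decide (y ∈ S) = false))
          = univ \ ((univ : Finset (Fin n)).filter (fun y : Fin n => y ∈ S)) := by
        ext x; simp
      rw [e1, e2, Finset.card_sdiff_of_subset (Finset.filter_subset _ _),
        Finset.card_sdiff_of_subset (Finset.filter_subset _ _), filter_val_lt_card _ hs, filter_mem_card]
    · have e1 : ((univ : Finset (Fin n)).filter (fun x : Fin n => decide ((x:ℕ) < S.card) = true))
          = ((univ : Finset (Fin n)).filter (fun x : Fin n => (x:ℕ) < S.card)) := by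
        ext x; simp
      have e2 : ((univ : Finset (Fin n)).filter (fun y => decide (y ∈ S) = true))
          = ((univ : Finset (Fin n)).filter (fun y : Fin n => y ∈ S)) := by
        ext x; simp
      rw [e1, e2, filter_val_lt_card _ hs, filter_mem_card]

end Hits


open Finset

section HitsPair

variable {n : ℕ}

lemma card_hits_pair {S T : Finset (Fin n)} (hST : S ⊆ T) :
    ((univ : Finset (Equiv.Perm (Fin n))).filter (fun σ => Hits σ S ∧ Hits σ T)).card
      = S.card.factorial * (T.card - S.card).factorial * (n - T.card).factorial := by
  classical
  have hs : S.card ≤ n := by simpa using Finset.card_le_univ S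
  have ht : T.card ≤ n := by simpa using Finset.card_le_univ T
  have hst : S.card ≤ T.card := Finset.card_le_card hST
  have key := card_perm_color (n := n) (κ := Bool × Bool)
    (fun x : Fin n => (decide ((x : ℕ) < S.card), decide ((x : ℕ) < T.card)))
    (fun y : Fin n => (decide (y ∈ S), decide (y ∈ T))) ?_
  · have hcond : ∀ σ : Equiv.Perm (Fin n),
        (∀ x : Fin n, (decide (σ x ∈ S), decide (σ x ∈ T))
            = (decide ((x : ℕ) < S.card), decide ((x : ℕ) < T.card)))
          ↔ (Hits σ S ∧ Hits σ T) := by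
      intro σ
      constructor
      · intro h
        constructor
        · intro i; exact decide_eq_decide.mp (congrArg Prod.fst (h i))
        · intro i; exact decide_eq_decide.mp (congrArg Prod.snd (h i))
      · rintro ⟨h1, h2⟩ i
        exact Prod.ext (decide_eq_decide.mpr (h1 i)) (decide_eq_decide.mpr (h2 i))
    calc ((univ : Finset (Equiv.Perm (Fin n))).filter (fun σ => Hits σ S ∧ Hits σ T)).card
        = ((univ : Finset (Equiv.Perm (Fin n))).filter
            (fun σ => ∀ x : Fin n, (decide (σ x ∈ S), decide (σ x ∈ T))
              = (decide ((x : ℕ) < S.card), decide ((x : ℕ) < T.card)))).card := by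
          congr 1; apply Finset.filter_congr; intro σ _; simpa using (hcond σ).symm
      _ = ∏ c : Bool × Bool, ((univ : Finset (Fin n)).filter
            (fun x : Fin n => (decide ((x : ℕ) < S.card), decide ((x : ℕ) < T.card)) = c)).card.factorial := key
      _ = S.card.factorial * (T.card - S.card).factorial * (n - T.card).factorial := by
          rw [Fintype.prod_prod_type]
          rw [Fintype.prod_bool, Fintype.prod_bool, Fintype.prod_bool]
          have e_tt : ((univ : Finset (Fin n)).filter
              (fun x : Fin n => (decide ((x : ℕ) < S.card), decide ((x : ℕ) < T.card)) = (true, true)))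
              = (univ : Finset (Fin n)).filter (fun x : Fin n => (x:ℕ) < S.card) := by
            ext x
            simp only [mem_filter, mem_univ, true_and, Prod.mk.injEq, decide_eq_true_eq]
            constructor
            · rintro ⟨h1, _⟩; exact h1
            · intro h; exact ⟨h, lt_of_lt_of_le h hst⟩
          have e_tf : ((univ : Finset (Fin n)).filter
              (fun x : Fin n => (decide ((x : ℕ) < S.card), decide ((x : ℕ) < T.card)) = (true, false)))
              = ∅ := by
            ext x
            simp only [mem_filter, mem_univ, true_and, Prod.mk.injEq, decide_eq_true_eq,
              decide_eq_false_iff_not, notMem_empty, iff_false, not_and]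
            intro h1 h2; exact h2 (lt_of_lt_of_le h1 hst)
          have e_ft : ((univ : Finset (Fin n)).filter
              (fun x : Fin n => (decide ((x : ℕ) < S.card), decide ((x : ℕ) < T.card)) = (false, true)))
              = ((univ : Finset (Fin n)).filter (fun x : Fin n => (x:ℕ) < T.card))
                \ ((univ : Finset (Fin n)).filter (fun x : Fin n => (x:ℕ) < S.card)) := by
            ext x
            simp only [mem_filter, mem_univ, true_and, Prod.mk.injEq, mem_sdiff,
              decide_eq_true_eq, decide_eq_false_iff_not]
            tauto
          have e_ff : ((univ : Finset (Fin n)).filter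
              (fun x : Fin n => (decide ((x : ℕ) < S.card), decide ((x : ℕ) < T.card)) = (false, false)))
              = univ \ ((univ : Finset (Fin n)).filter (fun x : Fin n => (x:ℕ) < T.card)) := by
            ext x
            simp only [mem_filter, mem_univ, true_and, Prod.mk.injEq, mem_sdiff,
              decide_eq_false_iff_not]
            constructor
            · rintro ⟨h1, h2⟩; exact h2
            · intro h2; exact ⟨fun h => h2 (lt_of_lt_of_le h hst), h2⟩
          rw [e_tt, e_tf, e_ft, e_ff]
          rw [Finset.card_sdiff_of_subset (by intro x hx; simp only [mem_filter, mem_univ, true_and] at *; exact lt_of_lt_of_le hx hst),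
            Finset.card_sdiff_of_subset (Finset.filter_subset _ _)]
          rw [filter_val_lt_card _ hs, filter_val_lt_card _ ht, Finset.card_empty,
            Finset.card_univ, Fintype.card_fin]
          simp [Nat.factorial]
          ring
  · intro c
    have e1 : ((univ : Finset (Fin n)).filter (fun y : Fin n => (decide (y ∈ S), decide (y ∈ T)) = c)).card
        = ((univ : Finset (Fin n)).filter
            (fun x : Fin n => (decide ((x : ℕ) < S.card), decide ((x : ℕ) < T.card)) = c)).card := by
      obtain ⟨a, b⟩ := c
      cases a <;> cases b
      · -- (false, false)
        have eψ : ((univ : Finset (Fin n)).filter (fun y : Fin n => (decide (y ∈ S), decide (y ∈ T)) = (false, false)))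
            = univ \ ((univ : Finset (Fin n)).filter (fun y : Fin n => y ∈ T)) := by
          ext y
          simp only [mem_filter, mem_univ, true_and, Prod.mk.injEq, mem_sdiff,
            decide_eq_false_iff_not]
          constructor
          · rintro ⟨_, h2⟩; exact h2
          · intro h2; exact ⟨fun h => h2 (hST h), h2⟩
        have eφ : ((univ : Finset (Fin n)).filter
            (fun x : Fin n => (decide ((x : ℕ) < S.card), decide ((x : ℕ) < T.card)) = (false, false)))
            = univ \ ((univ : Finset (Fin n)).filter (fun x : Fin n => (x:ℕ) < T.card)) := by
          ext x
          simp only [mem_filter, mem_univ, true_and, Prod.mk.injEq, mem_sdiff,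
            decide_eq_false_iff_not]
          constructor
          · rintro ⟨_, h2⟩; exact h2
          · intro h2; exact ⟨fun h => h2 (lt_of_lt_of_le h hst), h2⟩
        rw [eψ, eφ, Finset.card_sdiff_of_subset (Finset.filter_subset _ _),
          Finset.card_sdiff_of_subset (Finset.filter_subset _ _), filter_mem_card, filter_val_lt_card _ ht]
      · -- (false, true)
        have eψ : ((univ : Finset (Fin n)).filter (fun y : Fin n => (decide (y ∈ S), decide (y ∈ T)) = (false, true)))
            = ((univ : Finset (Fin n)).filter (fun y : Fin n => y ∈ T))
              \ ((univ : Finset (Fin n)).filter (fun y : Fin n => y ∈ S)) := by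
          ext y
          simp only [mem_filter, mem_univ, true_and, Prod.mk.injEq, mem_sdiff,
            decide_eq_true_eq, decide_eq_false_iff_not]
          tauto
        have eφ : ((univ : Finset (Fin n)).filter
            (fun x : Fin n => (decide ((x : ℕ) < S.card), decide ((x : ℕ) < T.card)) = (false, true)))
            = ((univ : Finset (Fin n)).filter (fun x : Fin n => (x:ℕ) < T.card))
              \ ((univ : Finset (Fin n)).filter (fun x : Fin n => (x:ℕ) < S.card)) := by
          ext x
          simp only [mem_filter, mem_univ, true_and, Prod.mk.injEq, mem_sdiff,
            decide_eq_true_eq, decide_eq_false_iff_not]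
          tauto
        rw [eψ, eφ,
          Finset.card_sdiff_of_subset (by intro y hy; simp only [mem_filter, mem_univ, true_and] at *; exact hST hy),
          Finset.card_sdiff_of_subset (by intro x hx; simp only [mem_filter, mem_univ, true_and] at *; exact lt_of_lt_of_le hx hst),
          filter_mem_card, filter_mem_card, filter_val_lt_card _ hs, filter_val_lt_card _ ht]
      · -- (true, false)
        have eψ : ((univ : Finset (Fin n)).filter (fun y : Fin n => (decide (y ∈ S), decide (y ∈ T)) = (true, false)))
            = ∅ := by
          ext y
          simp only [mem_filter, mem_univ, true_and, Prod.mk.injEq, decide_eq_true_eq,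
            decide_eq_false_iff_not, notMem_empty, iff_false, not_and]
          intro h1 h2; exact h2 (hST h1)
        have eφ : ((univ : Finset (Fin n)).filter
            (fun x : Fin n => (decide ((x : ℕ) < S.card), decide ((x : ℕ) < T.card)) = (true, false)))
            = ∅ := by
          ext x
          simp only [mem_filter, mem_univ, true_and, Prod.mk.injEq, decide_eq_true_eq,
            decide_eq_false_iff_not, notMem_empty, iff_false, not_and]
          intro h1 h2; exact h2 (lt_of_lt_of_le h1 hst)
        rw [eψ, eφ]
      · -- (true, true)
        have eψ : ((univ : Finset (Fin n)).filter (fun y : Fin n => (decide (y ∈ S), decide (y ∈ T)) = (true, true)))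
            = ((univ : Finset (Fin n)).filter (fun y : Fin n => y ∈ S)) := by
          ext y
          simp only [mem_filter, mem_univ, true_and, Prod.mk.injEq, decide_eq_true_eq]
          constructor
          · rintro ⟨h1, _⟩; exact h1
          · intro h; exact ⟨h, hST h⟩
        have eφ : ((univ : Finset (Fin n)).filter
            (fun x : Fin n => (decide ((x : ℕ) < S.card), decide ((x : ℕ) < T.card)) = (true, true)))
            = ((univ : Finset (Fin n)).filter (fun x : Fin n => (x:ℕ) < S.card)) := by
          ext x
          simp only [mem_filter, mem_univ, true_and, Prod.mk.injEq, decide_eq_true_eq]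
          constructor
          · rintro ⟨h1, _⟩; exact h1
          · intro h; exact ⟨h, lt_of_lt_of_le h hst⟩
        rw [eψ, eφ, filter_mem_card, filter_val_lt_card _ hs]
    exact e1.symm

end HitsPair

section Events

variable {n : ℕ}

def Ev (S : Finset (Fin n)) : Finset (Equiv.Perm (Fin n)) :=
  univ.filter (fun σ => Hits σ S)

noncomputable def EvU (D : Finset (Finset (Fin n))) : Finset (Equiv.Perm (Fin n)) := by
  classical
  exact univ.filter (fun σ => ∃ S ∈ D, Hits σ S)

lemma mem_evU {D : Finset (Finset (Fin n))} {σ : Equiv.Perm (Fin n)} :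
    σ ∈ EvU D ↔ ∃ S ∈ D, Hits σ S := by
  classical
  simp [EvU]

lemma ev_subset_evU {S : Finset (Fin n)} {D : Finset (Finset (Fin n))} (hS : S ∈ D) :
    Ev S ⊆ EvU D := by
  intro σ hσ
  rw [mem_evU]
  simp only [Ev, mem_filter, mem_univ, true_and] at hσ
  exact ⟨S, hS, hσ⟩

lemma bonferroni (D : Finset (Finset (Fin n))) :
    ∑ S ∈ D, (Ev S).card ≤ (EvU D).card + ∑ S ∈ D, ∑ T ∈ D.erase S, (Ev S ∩ Ev T).card := by
  classical
  induction D using Finset.induction_on with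
  | empty => simp
  | @insert a D ha ih =>
    rw [Finset.sum_insert ha]
    have hsplit : EvU (insert a D) = Ev a ∪ EvU D := by
      ext σ
      simp only [mem_evU, Finset.mem_union, Finset.mem_insert, Ev, mem_filter, mem_univ, true_and]
      constructor
      · rintro ⟨S, hS | hS, hh⟩
        · left; rw [hS] at hh; exact hh
        · right; exact ⟨S, hS, hh⟩
      · rintro (h | ⟨S, hS, hh⟩)
        · exact ⟨a, Or.inl rfl, h⟩
        · exact ⟨S, Or.inr hS, hh⟩
    have hunion : (Ev a).card + (EvU D).card
        = (EvU (insert a D)).card + ((Ev a) ∩ (EvU D)).card := by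
      rw [hsplit]
      exact (Finset.card_union_add_card_inter _ _).symm
    have hint : ((Ev a) ∩ (EvU D)).card ≤ ∑ T ∈ D, ((Ev a) ∩ (Ev T)).card := by
      have hsub : (Ev a) ∩ (EvU D) ⊆ D.biUnion (fun T => (Ev a) ∩ (Ev T)) := by
        intro σ hσ
        rw [Finset.mem_inter, mem_evU] at hσ
        obtain ⟨h1, S, hS, hh⟩ := hσ
        rw [Finset.mem_biUnion]
        refine ⟨S, hS, ?_⟩
        rw [Finset.mem_inter]
        exact ⟨h1, by simp only [Ev, mem_filter, mem_univ, true_and]; exact hh⟩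
      exact le_trans (Finset.card_le_card hsub) (Finset.card_biUnion_le)
    have hpair : ∑ T ∈ D, ((Ev a) ∩ (Ev T)).card
          + ∑ S ∈ D, ∑ T ∈ D.erase S, (Ev S ∩ Ev T).card
        ≤ ∑ S ∈ insert a D, ∑ T ∈ (insert a D).erase S, (Ev S ∩ Ev T).card := by
      rw [Finset.sum_insert ha, Finset.erase_insert ha]
      refine Nat.add_le_add le_rfl ?_
      refine Finset.sum_le_sum (fun S hS => ?_)
      refine Finset.sum_le_sum_of_subset ?_
      exact Finset.erase_subset_erase _ (Finset.subset_insert _ _)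
    calc (Ev a).card + ∑ S ∈ D, (Ev S).card
        ≤ (Ev a).card + ((EvU D).card + ∑ S ∈ D, ∑ T ∈ D.erase S, (Ev S ∩ Ev T).card) := by
          exact Nat.add_le_add le_rfl ih
      _ = ((Ev a).card + (EvU D).card) + ∑ S ∈ D, ∑ T ∈ D.erase S, (Ev S ∩ Ev T).card := by ring
      _ = ((EvU (insert a D)).card + ((Ev a) ∩ (EvU D)).card)
            + ∑ S ∈ D, ∑ T ∈ D.erase S, (Ev S ∩ Ev T).card := by rw [hunion]
      _ ≤ ((EvU (insert a D)).card + ∑ T ∈ D, ((Ev a) ∩ (Ev T)).card)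
            + ∑ S ∈ D, ∑ T ∈ D.erase S, (Ev S ∩ Ev T).card := by
          exact Nat.add_le_add (Nat.add_le_add le_rfl hint) le_rfl
      _ = (EvU (insert a D)).card + (∑ T ∈ D, ((Ev a) ∩ (Ev T)).card
            + ∑ S ∈ D, ∑ T ∈ D.erase S, (Ev S ∩ Ev T).card) := by ring
      _ ≤ (EvU (insert a D)).card + ∑ S ∈ insert a D, ∑ T ∈ (insert a D).erase S, (Ev S ∩ Ev T).card := by
          exact Nat.add_le_add le_rfl hpair

end Events


open Finset

section Binom

lemma pow_helper : ∀ (c s : ℕ), 10 * c ≤ s → c * 10 ^ s ≤ 11 ^ s := by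
  intro c
  induction c with
  | zero => intro s _; simp
  | succ c ih =>
    intro s hs
    obtain ⟨s', rfl⟩ : ∃ s', s = s' + 10 := ⟨s - 10, by omega⟩
    have hs' : 10 * c ≤ s' := by omega
    have H := ih s' hs'
    rcases Nat.eq_zero_or_pos c with hc | hc
    · subst hc
      have : 10 ^ (s' + 10) ≤ 11 ^ (s' + 10) := Nat.pow_le_pow_left (by norm_num) _
      simpa using this
    · have h1 : (c + 1) * 10 ^ (s' + 10) = (c + 1) * 10 ^ 10 * 10 ^ s' := by ring
      have h2 : 11 ^ (s' + 10) = 11 ^ 10 * 11 ^ s' := by ring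
      rw [h1, h2]
      have h3 : (c + 1) * 10 ^ 10 ≤ c * 11 ^ 10 := by nlinarith
      calc (c + 1) * 10 ^ 10 * 10 ^ s' ≤ c * 11 ^ 10 * 10 ^ s' :=
            Nat.mul_le_mul_right _ h3
        _ = 11 ^ 10 * (c * 10 ^ s') := by ring
        _ ≤ 11 ^ 10 * 11 ^ s' := Nat.mul_le_mul_left _ H
  
lemma decay_step {n k : ℕ} (h : 11 * n ≤ 21 * k) :
    11 * n.choose (k + 1) ≤ 10 * n.choose k := by
  have key := Nat.choose_succ_right_eq n k
  have h2 : 11 * (n.choose (k + 1) * (k + 1)) ≤ 10 * (n.choose k * (k + 1)) := by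
    rw [key]
    have : 11 * (n - k) ≤ 10 * (k + 1) := by omega
    calc 11 * (n.choose k * (n - k)) = n.choose k * (11 * (n - k)) := by ring
      _ ≤ n.choose k * (10 * (k + 1)) := Nat.mul_le_mul_left _ this
      _ = 10 * (n.choose k * (k + 1)) := by ring
  have h3 : (11 * n.choose (k + 1)) * (k + 1) ≤ (10 * n.choose k) * (k + 1) := by
    calc (11 * n.choose (k + 1)) * (k + 1) = 11 * (n.choose (k + 1) * (k + 1)) := by ring
      _ ≤ 10 * (n.choose k * (k + 1)) := h2
      _ = (10 * n.choose k) * (k + 1) := by ring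
  exact Nat.le_of_mul_le_mul_right h3 (Nat.succ_pos k)

lemma decay_iter {n k : ℕ} (h : 11 * n ≤ 21 * k) :
    ∀ s, 11 ^ s * n.choose (k + s) ≤ 10 ^ s * n.choose k := by
  intro s
  induction s with
  | zero => simp
  | succ s ih =>
    have hks : 11 * n ≤ 21 * (k + s) := by omega
    have step := decay_step hks
    calc 11 ^ (s + 1) * n.choose (k + (s + 1))
        = 11 ^ s * (11 * n.choose ((k + s) + 1)) := by ring
      _ ≤ 11 ^ s * (10 * n.choose (k + s)) := Nat.mul_le_mul_left _ step
      _ = 10 * (11 ^ s * n.choose (k + s)) := by ring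
      _ ≤ 10 * (10 ^ s * n.choose k) := Nat.mul_le_mul_left _ ih
      _ = 10 ^ (s + 1) * n.choose k := by ring

lemma band_lemma (c : ℕ) : ∃ N, ∀ n ≥ N, ∀ ℓ, (3 * ℓ ≤ n ∨ 2 * n ≤ 3 * ℓ) →
    c * n.choose ℓ ≤ n.choose (n / 2) := by
  refine ⟨210 * c + 630, fun n hn ℓ hℓ => ?_⟩
  -- reduce to the upper tail
  rcases le_or_gt ℓ n with hln | hln
  swap
  · rw [Nat.choose_eq_zero_of_lt hln]
    simp
  have main : ∀ m, m ≤ n → 2 * n ≤ 3 * m → c * n.choose m ≤ n.choose (n / 2) := by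
    intro m hmn h2n
    set s := n / 21 with hs
    have hds := Nat.div_add_mod n 21
    have hmod : n % 21 < 21 := Nat.mod_lt _ (by norm_num)
    have hks : s ≤ m := by omega
    set k := m - s with hk
    have hkm : m = k + s := by omega
    have h11 : 11 * n ≤ 21 * k := by omega
    have iter := decay_iter h11 s
    rw [← hkm] at iter
    have hmid : n.choose k ≤ n.choose (n / 2) := Nat.choose_le_middle k n
    have hpow : c * 10 ^ s ≤ 11 ^ s := pow_helper c s (by omega)
    -- c * C(n,m) * 11^s ≤ 11^s * C(n,m) * c ≤ ...
    have h5 : (11 ^ s * c) * n.choose m ≤ 11 ^ s * (10 ^ s * n.choose k) := by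
      calc (11 ^ s * c) * n.choose m = c * (11 ^ s * n.choose m) := by ring
        _ ≤ c * (10 ^ s * n.choose k) := Nat.mul_le_mul_left _ iter
        _ = (c * 10 ^ s) * n.choose k := by ring
        _ ≤ 11 ^ s * n.choose k := Nat.mul_le_mul_right _ hpow
        _ ≤ 11 ^ s * (10 ^ s * n.choose k) := by
            have : (1:ℕ) ≤ 10 ^ s := Nat.one_le_pow _ _ (by norm_num)
            calc 11 ^ s * n.choose k = 11 ^ s * (1 * n.choose k) := by ring
              _ ≤ 11 ^ s * (10 ^ s * n.choose k) := by
                  exact Nat.mul_le_mul_left _ (Nat.mul_le_mul_right _ this)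
    have h6 : (11 ^ s) * (c * n.choose m) ≤ (11 ^ s) * n.choose (n / 2) := by
      calc (11 ^ s) * (c * n.choose m) = c * (11 ^ s * n.choose m) := by ring
        _ ≤ c * (10 ^ s * n.choose k) := Nat.mul_le_mul_left _ iter
        _ = (c * 10 ^ s) * n.choose k := by ring
        _ ≤ 11 ^ s * n.choose k := Nat.mul_le_mul_right _ hpow
        _ ≤ 11 ^ s * n.choose (n / 2) := Nat.mul_le_mul_left _ hmid
    exact Nat.le_of_mul_le_mul_left h6 (Nat.pow_pos (by norm_num))
  rcases hℓ with h | h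
  · -- lower tail: use symmetry
    have hsym : n.choose (n - ℓ) = n.choose ℓ := Nat.choose_symm hln
    rw [← hsym]
    exact main (n - ℓ) (by omega) (by omega)
  · exact main ℓ hln h

lemma mono_incr_below {n a b : ℕ} (hb : b ≤ n / 2) (hab : a ≤ b) :
    n.choose a ≤ n.choose b := by
  induction b with
  | zero => simp_all
  | succ b ih =>
    rcases Nat.eq_or_lt_of_le hab with rfl | hlt
    · exact le_rfl
    · have h1 : a ≤ b := by omega
      have h2 : b ≤ n / 2 := by omega
      exact le_trans (ih h2 h1) (Nat.choose_le_succ_of_lt_half_left (by omega))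

end Binom


open Finset

section Upper

variable {n : ℕ}

lemma ev_inter (S T : Finset (Fin n)) :
    Ev S ∩ Ev T = (univ : Finset (Equiv.Perm (Fin n))).filter (fun σ => Hits σ S ∧ Hits σ T) := by
  ext σ; simp [Ev]

lemma fact_ratio_bound {d r m : ℕ} (hd : 1 ≤ d) (hm : m ≤ 3 * (r + 1)) :
    m * d.factorial * r.factorial ≤ 3 * (r + d).factorial := by
  induction d with
  | zero => omega
  | succ d ih =>
    rcases Nat.eq_zero_or_pos d with rfl | hd'
    · simp only [Nat.factorial_one, Nat.factorial]
      calc m * 1 * r.factorial ≤ (3 * (r+1)) * r.factorial := by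
            exact Nat.mul_le_mul_right _ (by omega)
        _ = 3 * ((r+1) * r.factorial) := by ring
    · have H := ih hd'
      calc m * (d+1).factorial * r.factorial
          = (d+1) * (m * d.factorial * r.factorial) := by
            rw [Nat.factorial_succ]; ring
        _ ≤ (d+1) * (3 * (r + d).factorial) := Nat.mul_le_mul_left _ H
        _ ≤ (r+d+1) * (3 * (r + d).factorial) := Nat.mul_le_mul_right _ (by omega)
        _ = 3 * ((r+d+1) * (r + d).factorial) := by ring
        _ = 3 * (r + (d+1)).factorial := by rw [← Nat.factorial_succ]; congr 1

lemma pair_bound {S T : Finset (Fin n)} (hST : S ⊆ T) (hne : S ≠ T)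
    (hband : 3 * T.card < 2 * n) :
    n * (Ev S ∩ Ev T).card ≤ 3 * (Ev S).card := by
  classical
  have hsub : S.card < T.card := Finset.card_lt_card (Finset.ssubset_iff_subset_ne.mpr ⟨hST, hne⟩)
  have htn : T.card ≤ n := by simpa using Finset.card_le_univ T
  rw [ev_inter, card_hits_pair hST]
  have : (Ev S).card = S.card.factorial * (n - S.card).factorial := card_hits S
  rw [this]
  set s := S.card
  set t := T.card
  set d := t - s with hd
  set r := n - t with hr
  have h1 : n - s = r + d := by omega
  have h2 : t - s = d := rfl
  have key : n * d.factorial * r.factorial ≤ 3 * (r + d).factorial :=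
    fact_ratio_bound (by omega) (by omega)
  calc n * (s.factorial * d.factorial * r.factorial)
      = s.factorial * (n * d.factorial * r.factorial) := by ring
    _ ≤ s.factorial * (3 * (r + d).factorial) := Nat.mul_le_mul_left _ key
    _ = 3 * (s.factorial * (r+d).factorial) := by ring
    _ = 3 * (s.factorial * (n - s).factorial) := by rw [h1]

lemma ev_card_ge (S : Finset (Fin n)) :
    (n / 2).factorial * (n - n / 2).factorial ≤ (Ev S).card := by
  have hs : S.card ≤ n := by simpa using Finset.card_le_univ S
  have h1 : n.choose S.card * (S.card.factorial * (n - S.card).factorial) = n.factorial := by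
    rw [← Nat.mul_assoc]; exact Nat.choose_mul_factorial_mul_factorial hs
  have h2 : n.choose (n/2) * ((n/2).factorial * (n - n/2).factorial) = n.factorial := by
    rw [← Nat.mul_assoc]; exact Nat.choose_mul_factorial_mul_factorial (Nat.div_le_self n 2)
  have h3 : n.choose S.card ≤ n.choose (n/2) := Nat.choose_le_middle _ _
  have hpos : 0 < n.choose S.card := Nat.choose_pos hs
  rw [show Ev S = (univ : Finset (Equiv.Perm (Fin n))).filter (fun σ => Hits σ S) from rfl,
    card_hits]
  by_contra hcon
  push_neg at hcon
  have : n.choose S.card * (S.card.factorial * (n - S.card).factorial)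
      < n.choose (n/2) * ((n/2).factorial * (n - n/2).factorial) :=
    Nat.mul_lt_mul_of_le_of_lt h3 hcon (Nat.lt_of_lt_of_le hpos h3)
  omega

lemma ev_card_ge_strong {S : Finset (Fin n)} {c : ℕ}
    (h : c * n.choose S.card ≤ n.choose (n / 2)) :
    c * ((n / 2).factorial * (n - n / 2).factorial) ≤ (Ev S).card := by
  have hs : S.card ≤ n := by simpa using Finset.card_le_univ S
  have h1 : n.choose S.card * (S.card.factorial * (n - S.card).factorial) = n.factorial := by
    rw [← Nat.mul_assoc]; exact Nat.choose_mul_factorial_mul_factorial hs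
  have h2 : n.choose (n/2) * ((n/2).factorial * (n - n/2).factorial) = n.factorial := by
    rw [← Nat.mul_assoc]; exact Nat.choose_mul_factorial_mul_factorial (Nat.div_le_self n 2)
  have hpos : 0 < n.choose S.card := Nat.choose_pos hs
  rw [show Ev S = (univ : Finset (Equiv.Perm (Fin n))).filter (fun σ => Hits σ S) from rfl,
    card_hits]
  have key : n.choose S.card * (c * ((n / 2).factorial * (n - n / 2).factorial))
      ≤ n.choose S.card * (S.card.factorial * (n - S.card).factorial) := by
    rw [h1]
    calc n.choose S.card * (c * ((n / 2).factorial * (n - n / 2).factorial))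
        = (c * n.choose S.card) * ((n / 2).factorial * (n - n / 2).factorial) := by ring
      _ ≤ n.choose (n/2) * ((n / 2).factorial * (n - n / 2).factorial) :=
          Nat.mul_le_mul_right _ h
      _ = n.factorial := h2
  exact Nat.le_of_mul_le_mul_left key hpos

lemma evU_mono {D₁ D₂ : Finset (Finset (Fin n))} (h : D₁ ⊆ D₂) : EvU D₁ ⊆ EvU D₂ := by
  intro σ hσ
  rw [mem_evU] at *
  obtain ⟨S, hS, hh⟩ := hσ
  exact ⟨S, h hS, hh⟩

/-- Per-copy estimate. -/
lemma percopy {c : ℕ} (hc : 1 ≤ c)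
    (hband : ∀ ℓ, (3 * ℓ ≤ n ∨ 2 * n ≤ 3 * ℓ) → c * n.choose ℓ ≤ n.choose (n / 2))
    (D : Finset (Finset (Fin n))) (hcard : c ≤ D.card) :
    (n - 6 * c) * (c * ((n / 2).factorial * (n - n / 2).factorial)) ≤ n * (EvU D).card := by
  classical
  set A := (n / 2).factorial * (n - n / 2).factorial with hA
  by_cases hall : ∀ S ∈ D, n < 3 * S.card ∧ 3 * S.card < 2 * n
  · -- band case: Bonferroni
    obtain ⟨D', hD'sub, hD'card⟩ := Finset.exists_subset_card_eq hcard
    have hbon := bonferroni D'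
    have hper : ∀ S ∈ D', ∀ T ∈ D'.erase S,
        n * (Ev S ∩ Ev T).card ≤ 3 * ((Ev S).card + (Ev T).card) := by
      intro S hS T hT
      have hTD : T ∈ D' := Finset.mem_of_mem_erase hT
      have hne : S ≠ T := fun h => (Finset.ne_of_mem_erase hT) h.symm
      have hbandT : 3 * T.card < 2 * n := (hall T (hD'sub hTD)).2
      have hbandS : 3 * S.card < 2 * n := (hall S (hD'sub hS)).2
      by_cases h1 : S ⊆ T
      · calc n * (Ev S ∩ Ev T).card ≤ 3 * (Ev S).card := pair_bound h1 hne hbandT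
          _ ≤ 3 * ((Ev S).card + (Ev T).card) := by omega
      · by_cases h2 : T ⊆ S
        · have hcomm : Ev S ∩ Ev T = Ev T ∩ Ev S := Finset.inter_comm _ _
          rw [hcomm]
          calc n * (Ev T ∩ Ev S).card ≤ 3 * (Ev T).card :=
              pair_bound h2 (fun h => hne h.symm) hbandS
            _ ≤ 3 * ((Ev S).card + (Ev T).card) := by omega
        · have hemp : Ev S ∩ Ev T = ∅ := by
            rw [ev_inter, Finset.filter_eq_empty_iff]
            rintro σ _ ⟨ha, hb⟩
            rcases hits_comparable ha hb with h | h
            · exact h1 h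
            · exact h2 h
          rw [hemp]; simp
    have herr : n * (∑ S ∈ D', ∑ T ∈ D'.erase S, (Ev S ∩ Ev T).card)
        ≤ 6 * c * ∑ S ∈ D', (Ev S).card := by
      have inner : ∀ S ∈ D', ∑ T ∈ D'.erase S, n * (Ev S ∩ Ev T).card
          ≤ 3 * c * (Ev S).card + 3 * ∑ T ∈ D', (Ev T).card := by
        intro S hS
        calc ∑ T ∈ D'.erase S, n * (Ev S ∩ Ev T).card
            ≤ ∑ T ∈ D'.erase S, 3 * ((Ev S).card + (Ev T).card) :=
              Finset.sum_le_sum (fun T hT => hper S hS T hT)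
          _ = 3 * ((D'.erase S).card * (Ev S).card + ∑ T ∈ D'.erase S, (Ev T).card) := by
              rw [← Finset.mul_sum, Finset.sum_add_distrib, Finset.sum_const, smul_eq_mul]
          _ ≤ 3 * (c * (Ev S).card + ∑ T ∈ D', (Ev T).card) := by
              refine Nat.mul_le_mul_left _ (Nat.add_le_add ?_ ?_)
              · refine Nat.mul_le_mul_right _ ?_
                calc (D'.erase S).card ≤ D'.card := Finset.card_le_card (Finset.erase_subset _ _)
                  _ = c := hD'card
              · exact Finset.sum_le_sum_of_subset (Finset.erase_subset _ _)
          _ = 3 * c * (Ev S).card + 3 * ∑ T ∈ D', (Ev T).card := by ring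
      calc n * (∑ S ∈ D', ∑ T ∈ D'.erase S, (Ev S ∩ Ev T).card)
          = ∑ S ∈ D', ∑ T ∈ D'.erase S, n * (Ev S ∩ Ev T).card := by
            rw [Finset.mul_sum]
            exact Finset.sum_congr rfl (fun S _ => Finset.mul_sum _ _ _)
        _ ≤ ∑ S ∈ D', (3 * c * (Ev S).card + 3 * ∑ T ∈ D', (Ev T).card) :=
            Finset.sum_le_sum inner
        _ = 3 * c * ∑ S ∈ D', (Ev S).card + D'.card * (3 * ∑ T ∈ D', (Ev T).card) := by
            rw [Finset.sum_add_distrib, ← Finset.mul_sum, Finset.sum_const, smul_eq_mul]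
        _ = 6 * c * ∑ S ∈ D', (Ev S).card := by rw [hD'card]; ring
    have key1 : c * A ≤ ∑ S ∈ D', (Ev S).card := by
      calc c * A = ∑ _S ∈ D', A := by rw [Finset.sum_const, smul_eq_mul, hD'card]
        _ ≤ ∑ S ∈ D', (Ev S).card := Finset.sum_le_sum (fun S _ => ev_card_ge S)
    have hEvUm : (EvU D').card ≤ (EvU D).card := Finset.card_le_card (evU_mono hD'sub)
    have main : n * (∑ S ∈ D', (Ev S).card)
        ≤ n * (EvU D).card + 6 * c * ∑ S ∈ D', (Ev S).card := by
      calc n * (∑ S ∈ D', (Ev S).card)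
          ≤ n * ((EvU D').card + ∑ S ∈ D', ∑ T ∈ D'.erase S, (Ev S ∩ Ev T).card) :=
            Nat.mul_le_mul_left _ hbon
        _ = n * (EvU D').card + n * (∑ S ∈ D', ∑ T ∈ D'.erase S, (Ev S ∩ Ev T).card) := by ring
        _ ≤ n * (EvU D).card + 6 * c * ∑ S ∈ D', (Ev S).card :=
            Nat.add_le_add (Nat.mul_le_mul_left _ hEvUm) herr
    have final : (n - 6 * c) * (∑ S ∈ D', (Ev S).card) ≤ n * (EvU D).card := by
      rw [Nat.sub_mul]
      rw [Nat.sub_le_iff_le_add]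
      calc n * ∑ S ∈ D', (Ev S).card
          ≤ n * (EvU D).card + 6 * c * ∑ S ∈ D', (Ev S).card := main
        _ = n * (EvU D).card + 6 * c * ∑ S ∈ D', (Ev S).card := rfl
    calc (n - 6 * c) * (c * A) ≤ (n - 6 * c) * ∑ S ∈ D', (Ev S).card :=
          Nat.mul_le_mul_left _ key1
      _ ≤ n * (EvU D).card := final
  · -- single-set case
    push_neg at hall
    obtain ⟨S, hS, hout⟩ := hall
    have hout' : 3 * S.card ≤ n ∨ 2 * n ≤ 3 * S.card := by omega
    have h1 : c * A ≤ (Ev S).card := ev_card_ge_strong (hband _ hout')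
    have h2 : Ev S ⊆ EvU D := by
      intro σ hσ
      rw [mem_evU]
      simp only [Ev, mem_filter, mem_univ, true_and] at hσ
      exact ⟨S, hS, hσ⟩
    calc (n - 6 * c) * (c * A) ≤ n * (c * A) := Nat.mul_le_mul_right _ (by omega)
      _ ≤ n * (Ev S).card := Nat.mul_le_mul_left _ h1
      _ ≤ n * (EvU D).card := Nat.mul_le_mul_left _ (Finset.card_le_card h2)

end Upper


open Finset

section ClosureBasics

variable {P : Type*} [PartialOrder P] [Fintype P] {n : ℕ}

lemma mem_convexClosure {F : Finset (Finset (Fin n))} {S : Finset (Fin n)} :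
    S ∈ convexClosure F ↔ ∃ A ∈ F, ∃ B ∈ F, A ⊆ S ∧ S ⊆ B := by
  simp [convexClosure]

lemma subset_convexClosure (F : Finset (Finset (Fin n))) : F ⊆ convexClosure F := by
  intro S hS
  exact mem_convexClosure.mpr ⟨S, hS, S, hS, subset_rfl, subset_rfl⟩

lemma exists_strong_embedding (P : Type*) [PartialOrder P] [Fintype P] :
    ∃ f : P → Finset (Fin (Fintype.card P)), IsStrongEmbedding f := by
  classical
  set e := Fintype.equivFin P with he
  refine ⟨fun p => (univ.filter (fun q : P => q ≤ p)).image e, ?_, ?_⟩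
  · intro p q hpq
    have hmem : ∀ r s : P, e r ∈ (univ.filter (fun q : P => q ≤ s)).image e ↔ r ≤ s := by
      intro r s
      simp only [Finset.mem_image, Finset.mem_filter, Finset.mem_univ, true_and]
      constructor
      · rintro ⟨r', hr', hre⟩
        rwa [← e.injective hre]
      · intro h; exact ⟨r, h, rfl⟩
    have hpq2 : (univ.filter (fun r : P => r ≤ p)).image ⇑e
        = (univ.filter (fun r : P => r ≤ q)).image ⇑e := hpq
    have h1 : p ≤ q := by
      have := (hmem p p).mpr le_rfl
      rw [hpq2] at this
      exact (hmem p q).mp this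
    have h2 : q ≤ p := by
      have := (hmem q q).mpr le_rfl
      rw [← hpq2] at this
      exact (hmem q p).mp this
    exact le_antisymm h1 h2
  · intro a b
    have hmem : ∀ r s : P, e r ∈ (univ.filter (fun q : P => q ≤ s)).image e ↔ r ≤ s := by
      intro r s
      simp only [Finset.mem_image, Finset.mem_filter, Finset.mem_univ, true_and]
      constructor
      · rintro ⟨r', hr', hre⟩
        rwa [← e.injective hre]
      · intro h; exact ⟨r, h, rfl⟩
    constructor
    · intro hab
      constructor
      · intro x hx
        simp only [Finset.mem_image, Finset.mem_filter, Finset.mem_univ, true_and] at hx ⊢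
        obtain ⟨r, hr, rfl⟩ := hx
        exact ⟨r, le_trans hr hab.le, rfl⟩
      · intro hsub
        have : e b ∈ (univ.filter (fun q : P => q ≤ a)).image e := hsub ((hmem b b).mpr le_rfl)
        have hba : b ≤ a := (hmem b a).mp this
        exact absurd (lt_of_le_of_lt hba hab) (lt_irrefl _)
    · rintro ⟨hsub, hne⟩
      have hab : a ≤ b := (hmem a b).mp (hsub ((hmem a a).mpr le_rfl))
      rcases eq_or_lt_of_le hab with rfl | h
      · exact absurd subset_rfl hne
      · exact h

lemma closureNumStar_spec (P : Type*) [PartialOrder P] [Fintype P] :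
    ∃ (k : ℕ) (f : P → Finset (Fin k)), IsStrongEmbedding f ∧
      (convexClosure (Finset.image f Finset.univ)).card = closureNumStar P := by
  obtain ⟨f, hf⟩ := exists_strong_embedding P
  have hmem : closureNumStar P ∈ {m | ∃ (k : ℕ) (f : P → Finset (Fin k)), IsStrongEmbedding f ∧
      (convexClosure (Finset.image f Finset.univ)).card = m} :=
    Nat.sInf_mem ⟨_, Fintype.card P, f, hf, rfl⟩
  obtain ⟨k, g, hg, hcard⟩ := hmem
  exact ⟨k, g, hg, hcard⟩

lemma closure_card_ge {C : Finset (Finset (Fin n))} (h : IsInducedCopy P C) :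
    closureNumStar P ≤ (convexClosure C).card := by
  obtain ⟨f, hf, rfl⟩ := h
  exact Nat.sInf_le ⟨n, f, hf, rfl⟩

lemma copy_card {C : Finset (Finset (Fin n))} (h : IsInducedCopy P C) :
    C.card = Fintype.card P := by
  obtain ⟨f, hf, rfl⟩ := h
  rw [Finset.card_image_of_injective _ hf.1, Finset.card_univ]

lemma closureNumStar_pos (P : Type*) [PartialOrder P] [Fintype P] (hp : 0 < Fintype.card P) :
    1 ≤ closureNumStar P := by
  obtain ⟨k, f, hf, hcard⟩ := closureNumStar_spec P
  rw [← hcard]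
  have hne : (Finset.image f Finset.univ : Finset (Finset (Fin k))).Nonempty := by
    rw [Finset.image_nonempty]
    rwa [← Finset.card_pos, Finset.card_univ]
  obtain ⟨S, hS⟩ := hne
  exact Finset.card_pos.mpr ⟨S, subset_convexClosure _ hS⟩

end ClosureBasics

section UpperMain

variable {P : Type*} [PartialOrder P] [Fintype P] {n : ℕ}

lemma evU_cc_disjoint {C₁ C₂ : Finset (Finset (Fin n))} (h : Unrelated C₁ C₂) :
    Disjoint (EvU (convexClosure C₁)) (EvU (convexClosure C₂)) := by
  rw [Finset.disjoint_left]
  intro σ h1 h2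
  rw [mem_evU] at h1 h2
  obtain ⟨S₁, hS₁, hh₁⟩ := h1
  obtain ⟨S₂, hS₂, hh₂⟩ := h2
  obtain ⟨A₁, hA₁, B₁, hB₁, hA₁S, hSB₁⟩ := mem_convexClosure.mp hS₁
  obtain ⟨A₂, hA₂, B₂, hB₂, hA₂S, hSB₂⟩ := mem_convexClosure.mp hS₂
  rcases hits_comparable hh₁ hh₂ with hsub | hsub
  · exact (h A₁ hA₁ B₂ hB₂).1 (subset_trans hA₁S (subset_trans hsub hSB₂))
  · exact (h B₁ hB₁ A₂ hA₂).2 (subset_trans hA₂S (subset_trans hsub hSB₁))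

lemma sum_evU_le (𝒞 : Finset (Finset (Finset (Fin n))))
    (hunrel : ∀ C₁ ∈ 𝒞, ∀ C₂ ∈ 𝒞, C₁ ≠ C₂ → Unrelated C₁ C₂) :
    ∑ C ∈ 𝒞, (EvU (convexClosure C)).card ≤ n.factorial := by
  classical
  rw [← Finset.card_biUnion (fun C₁ h₁ C₂ h₂ hne => evU_cc_disjoint (hunrel C₁ h₁ C₂ h₂ hne))]
  calc (𝒞.biUnion (fun C => EvU (convexClosure C))).card
      ≤ (univ : Finset (Equiv.Perm (Fin n))).card := Finset.card_le_univ _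
    _ = n.factorial := by rw [Finset.card_univ, Fintype.card_perm, Fintype.card_fin]

lemma family_card (𝒞 : Finset (Finset (Finset (Fin n))))
    (hcopy : ∀ C ∈ 𝒞, IsInducedCopy P C)
    (hunrel : ∀ C₁ ∈ 𝒞, ∀ C₂ ∈ 𝒞, C₁ ≠ C₂ → Unrelated C₁ C₂) :
    (𝒞.sup id).card = 𝒞.card * Fintype.card P := by
  classical
  have hdisj : ∀ C₁ ∈ 𝒞, ∀ C₂ ∈ 𝒞, C₁ ≠ C₂ → Disjoint (id C₁) (id C₂) := by
    intro C₁ h₁ C₂ h₂ hne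
    rw [Finset.disjoint_left]
    intro X hX₁ hX₂
    exact (hunrel C₁ h₁ C₂ h₂ hne X hX₁ X hX₂).1 subset_rfl
  rw [Finset.sup_eq_biUnion, Finset.card_biUnion hdisj]
  calc ∑ C ∈ 𝒞, (id C).card = ∑ _C ∈ 𝒞, Fintype.card P :=
      Finset.sum_congr rfl (fun C hC => copy_card (hcopy C hC))
    _ = 𝒞.card * Fintype.card P := by rw [Finset.sum_const, smul_eq_mul]

lemma upper_bound (P : Type*) [PartialOrder P] [Fintype P] (hp : 0 < Fintype.card P) :
    ∃ N : ℕ, ∀ n ≥ N, ∀ F : Finset (Finset (Fin n)),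
      IsUnionOfUnrelatedInducedCopies P F →
      F.card * (closureNumStar P * (n - 6 * closureNumStar P))
        ≤ Fintype.card P * (n * n.choose (n / 2)) := by
  classical
  set c := closureNumStar P with hc_def
  have hc : 1 ≤ c := closureNumStar_pos P hp
  obtain ⟨N₀, hN₀⟩ := band_lemma c
  refine ⟨N₀, fun n hn F hF => ?_⟩
  obtain ⟨𝒞, hcopy, hunrel, rfl⟩ := hF
  set A := (n / 2).factorial * (n - n / 2).factorial with hA_def
  have hApos : 0 < A := Nat.mul_pos (Nat.factorial_pos _) (Nat.factorial_pos _)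
  have hpercopy : ∀ C ∈ 𝒞, (n - 6 * c) * (c * A) ≤ n * (EvU (convexClosure C)).card := by
    intro C hC
    refine percopy hc (fun ℓ hℓ => hN₀ n hn ℓ hℓ) (convexClosure C) ?_
    exact closure_card_ge (hcopy C hC)
  have hsum : 𝒞.card * ((n - 6 * c) * (c * A)) ≤ n * n.factorial := by
    calc 𝒞.card * ((n - 6 * c) * (c * A))
        = ∑ _C ∈ 𝒞, (n - 6 * c) * (c * A) := by rw [Finset.sum_const, smul_eq_mul]
      _ ≤ ∑ C ∈ 𝒞, n * (EvU (convexClosure C)).card := Finset.sum_le_sum hpercopy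
      _ = n * ∑ C ∈ 𝒞, (EvU (convexClosure C)).card := (Finset.mul_sum _ _ _).symm
      _ ≤ n * n.factorial := Nat.mul_le_mul_left _ (sum_evU_le 𝒞 hunrel)
  have hfact : n.factorial = n.choose (n / 2) * A := by
    rw [hA_def, ← Nat.mul_assoc]
    exact (Nat.choose_mul_factorial_mul_factorial (Nat.div_le_self n 2)).symm
  have hFcard : (𝒞.sup id).card = 𝒞.card * Fintype.card P := family_card 𝒞 hcopy hunrel
  rw [hFcard]
  have key : ((𝒞.card * Fintype.card P) * (c * (n - 6 * c))) * A
      ≤ (Fintype.card P * (n * n.choose (n / 2))) * A := by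
    calc ((𝒞.card * Fintype.card P) * (c * (n - 6 * c))) * A
        = Fintype.card P * (𝒞.card * ((n - 6 * c) * (c * A))) := by ring
      _ ≤ Fintype.card P * (n * n.factorial) := Nat.mul_le_mul_left _ hsum
      _ = (Fintype.card P * (n * n.choose (n / 2))) * A := by rw [hfact]; ring
  exact Nat.le_of_mul_le_mul_right key hApos

end UpperMain


open Finset

section Glue

variable {a b : ℕ}

def glue (A : Finset (Fin a)) (B : Finset (Fin b)) : Finset (Fin (a + b)) :=
  A.map (Fin.castAddEmb b) ∪ B.map (Fin.natAddEmb a)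

lemma glue_subset_iff {A A' : Finset (Fin a)} {B B' : Finset (Fin b)} :
    glue A B ⊆ glue A' B' ↔ A ⊆ A' ∧ B ⊆ B' := by
  constructor
  · intro h
    constructor
    · intro x hx
      have hmem : (Fin.castAdd b x) ∈ glue A' B' := by
        apply h
        simp only [glue, Finset.mem_union, Finset.mem_map]
        exact Or.inl ⟨x, hx, rfl⟩
      simp only [glue, Finset.mem_union, Finset.mem_map] at hmem
      rcases hmem with ⟨y, hy, hyx⟩ | ⟨y, hy, hyx⟩
      · have : y = x := by
          apply Fin.castAdd_injective a b  -- may need fixing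
          exact hyx
        rwa [← this]
      · exfalso
        have h1 : ((Fin.natAddEmb a y : Fin (a + b)) : ℕ) = a + y := by simp
        have h2 : ((Fin.castAdd b x : Fin (a + b)) : ℕ) = x := by simp
        rw [hyx] at h1
        omega
    · intro x hx
      have hmem : (Fin.natAdd a x) ∈ glue A' B' := by
        apply h
        simp only [glue, Finset.mem_union, Finset.mem_map]
        exact Or.inr ⟨x, hx, rfl⟩
      simp only [glue, Finset.mem_union, Finset.mem_map] at hmem
      rcases hmem with ⟨y, hy, hyx⟩ | ⟨y, hy, hyx⟩
      · exfalso
        have h1 : ((Fin.castAddEmb b y : Fin (a + b)) : ℕ) = y := by simp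
        have h2 : ((Fin.natAdd a x : Fin (a + b)) : ℕ) = a + x := by simp
        rw [hyx] at h1
        omega
      · have : y = x := by
          have h1 : ((Fin.natAddEmb a y : Fin (a + b)) : ℕ) = a + y := by simp
          have h2 : ((Fin.natAdd a x : Fin (a + b)) : ℕ) = a + x := by simp
          rw [hyx] at h1
          have : (y : ℕ) = (x : ℕ) := by omega
          exact Fin.ext this
        rwa [← this]
  · rintro ⟨h1, h2⟩
    apply Finset.union_subset
    · exact subset_trans (Finset.map_subset_map.mpr h1) Finset.subset_union_left
    · exact subset_trans (Finset.map_subset_map.mpr h2) Finset.subset_union_right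

lemma glue_eq_iff {A A' : Finset (Fin a)} {B B' : Finset (Fin b)} :
    glue A B = glue A' B' ↔ A = A' ∧ B = B' := by
  constructor
  · intro h
    have h1 := glue_subset_iff.mp h.le
    have h2 := glue_subset_iff.mp h.ge
    exact ⟨subset_antisymm h1.1 h2.1, subset_antisymm h1.2 h2.2⟩
  · rintro ⟨rfl, rfl⟩; rfl

lemma glue_ssubset_iff {A A' : Finset (Fin a)} {B B' : Finset (Fin b)} :
    glue A B ⊂ glue A' B' ↔ (A ⊆ A' ∧ B ⊆ B') ∧ ¬(A = A' ∧ B = B') := by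
  rw [Finset.ssubset_iff_subset_ne, glue_subset_iff, Ne, glue_eq_iff]

/-- Gluing a constant left part onto a strong embedding. -/
lemma strong_glue_right {P : Type*} [PartialOrder P] {m : ℕ} (A : Finset (Fin a))
    {g : P → Finset (Fin m)} (hg : IsStrongEmbedding g) :
    IsStrongEmbedding (fun p => glue A (g p)) := by
  constructor
  · intro p q h
    exact hg.1 (glue_eq_iff.mp h).2
  · intro p q
    rw [hg.2 p q]
    constructor
    · intro h
      rw [glue_ssubset_iff]
      exact ⟨⟨subset_rfl, h.subset⟩, fun hh => h.ne hh.2⟩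
    · intro h
      rw [glue_ssubset_iff] at h
      refine Finset.ssubset_iff_subset_ne.mpr ⟨h.1.2, fun heq => h.2 ⟨rfl, heq⟩⟩

/-- Gluing a constant right part onto a strong embedding. -/
lemma strong_glue_left {P : Type*} [PartialOrder P] (B : Finset (Fin b))
    {f : P → Finset (Fin a)} (hf : IsStrongEmbedding f) :
    IsStrongEmbedding (fun p => glue (f p) B) := by
  constructor
  · intro p q h
    exact hf.1 (glue_eq_iff.mp h).1
  · intro p q
    rw [hf.2 p q]
    constructor
    · intro h
      rw [glue_ssubset_iff]
      exact ⟨⟨h.subset, subset_rfl⟩, fun hh => h.ne hh.1⟩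
    · intro h
      rw [glue_ssubset_iff] at h
      refine Finset.ssubset_iff_subset_ne.mpr ⟨h.1.1, fun heq => h.2 ⟨heq, rfl⟩⟩

end Glue


open Finset

section DescList

variable {α : Type*} [DecidableEq α]

lemma pairwise_flatMap {β γ : Type*} {R : γ → γ → Prop} {f : β → List γ} :
    ∀ {l : List β}, List.Pairwise (fun a a' => ∀ x ∈ f a, ∀ y ∈ f a', R x y) l →
      (∀ a ∈ l, (f a).Pairwise R) → (l.flatMap f).Pairwise R := by
  intro l
  induction l with
  | nil => intro _ _; simp
  | cons a l ih =>
    intro hpair hinner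
    rw [List.flatMap_cons, List.pairwise_append]
    refine ⟨hinner a (List.mem_cons_self), ?_, ?_⟩
    · exact ih (List.pairwise_cons.mp hpair).2 (fun b hb => hinner b (List.mem_cons_of_mem a hb))
    · intro x hx y hy
      rw [List.mem_flatMap] at hy
      obtain ⟨b, hb, hyb⟩ := hy
      exact (List.pairwise_cons.mp hpair).1 b hb x hx y hyb

lemma length_flatMap_const {β γ : Type*} (l : List β) (f : β → List γ) (c : ℕ)
    (h : ∀ a ∈ l, (f a).length = c) : (l.flatMap f).length = l.length * c := by
  induction l with
  | nil => simp
  | cons a l ih =>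
    rw [List.flatMap_cons, List.length_append, h a (List.mem_cons_self),
      ih (fun b hb => h b (List.mem_cons_of_mem a hb)), List.length_cons]
    ring

lemma pairwise_of_nodup_of_mem {β : Type*} {R : β → β → Prop} {l : List β}
    (hnd : l.Nodup) (h : ∀ x ∈ l, ∀ y ∈ l, x ≠ y → R x y) : l.Pairwise R := by
  have h1 : l.Pairwise (fun x y => x ≠ y → R x y) := by
    apply List.pairwise_of_forall_mem_list
    intro x hx y hy
    exact h x hx y hy
  have h2 : l.Pairwise (fun x y => x ≠ y ∧ (x ≠ y → R x y)) := hnd.and h1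
  exact h2.imp (fun h => h.2 h.1)

noncomputable def descList (𝒜 : Finset (Finset α)) (K : ℕ) : List (Finset α) :=
  (List.range (K + 1)).flatMap (fun i => (𝒜.filter (fun A => A.card = K - i)).toList)

lemma mem_descList {𝒜 : Finset (Finset α)} {K : ℕ} (h𝒜 : ∀ A ∈ 𝒜, A.card ≤ K)
    {A : Finset α} : A ∈ descList 𝒜 K ↔ A ∈ 𝒜 := by
  simp only [descList, List.mem_flatMap, List.mem_range, Finset.mem_toList, Finset.mem_filter]
  constructor
  · rintro ⟨i, _, hA, _⟩; exact hA
  · intro hA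
    exact ⟨K - A.card, by omega, hA, by have := h𝒜 A hA; omega⟩

lemma pairwise_descList (𝒜 : Finset (Finset α)) (K : ℕ) :
    (descList 𝒜 K).Pairwise (fun A B => B.card ≤ A.card ∧ A ≠ B) := by
  apply pairwise_flatMap
  · have hr : (List.range (K + 1)).Pairwise (· < ·) := List.pairwise_lt_range
    refine hr.imp_of_mem ?_
    intro i j hi hj hij
    rw [List.mem_range] at hi hj
    intro x hx y hy
    rw [Finset.mem_toList, Finset.mem_filter] at hx hy
    constructor
    · omega
    · intro hxy
      rw [hxy] at hx
      omega
  · intro i _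
    apply pairwise_of_nodup_of_mem (Finset.nodup_toList _)
    intro x hx y hy hxy
    rw [Finset.mem_toList, Finset.mem_filter] at hx hy
    exact ⟨by omega, hxy⟩

lemma nodup_descList (𝒜 : Finset (Finset α)) (K : ℕ) : (descList 𝒜 K).Nodup := by
  have := pairwise_descList 𝒜 K
  exact this.imp (fun h => h.2)

lemma length_descList (𝒜 : Finset (Finset α)) (K : ℕ) (h𝒜 : ∀ A ∈ 𝒜, A.card ≤ K) :
    (descList 𝒜 K).length = 𝒜.card := by
  have h1 : (descList 𝒜 K).toFinset = 𝒜 := by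
    ext A
    rw [List.mem_toFinset, mem_descList h𝒜]
  calc (descList 𝒜 K).length = (descList 𝒜 K).toFinset.card :=
      (List.toFinset_card_of_nodup (nodup_descList 𝒜 K)).symm
    _ = 𝒜.card := by rw [h1]

end DescList


open Finset

section PaletteStep

variable {P : Type*} [PartialOrder P] [Fintype P]

lemma palette_step {k₀ : ℕ}
    (f₀ : P → Finset (Fin k₀)) (hf₀ : IsStrongEmbedding f₀) (m : ℕ)
    (l : List (P → Finset (Fin m)))
    (hstrong : ∀ g ∈ l, IsStrongEmbedding g)
    (hpair : l.Pairwise (fun g h => ∀ p q : P, ¬ g p ⊆ h q)) :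
    ∃ l' : List (P → Finset (Fin (k₀ + m))),
      (∀ g ∈ l', IsStrongEmbedding g) ∧
      l'.Pairwise (fun g h => ∀ p q : P, ¬ g p ⊆ h q) ∧
      l'.length = 2 ^ m
        + (2 ^ k₀ - (convexClosure (Finset.image f₀ Finset.univ)).card) * l.length := by
  classical
  set F₀ := Finset.image f₀ Finset.univ with hF₀
  set D := convexClosure F₀ with hDdef
  have himg : F₀ ⊆ D := subset_convexClosure F₀
  have himgq : ∀ q : P, f₀ q ∈ D := fun q => himg (Finset.mem_image_of_mem f₀ (mem_univ q))
  have hbetween : ∀ S₁ ∈ D, ∀ S₂ ∈ D, ∀ X : Finset (Fin k₀), S₁ ⊆ X → X ⊆ S₂ → X ∈ D := by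
    intro S₁ h₁ S₂ h₂ X hX₁ hX₂
    obtain ⟨A₁, hA₁, B₁, _, hA₁S, _⟩ := mem_convexClosure.mp h₁
    obtain ⟨A₂, _, B₂, hB₂, _, hSB₂⟩ := mem_convexClosure.mp h₂
    exact mem_convexClosure.mpr ⟨A₁, hA₁, B₂, hB₂, subset_trans hA₁S hX₁, subset_trans hX₂ hSB₂⟩
  set W := (univ : Finset (Finset (Fin k₀))) \ D with hWdef
  set Wp := W.filter (fun A => ∃ S ∈ D, S ⊆ A) with hWpdef
  set Wm := W.filter (fun A => ∃ S ∈ D, A ⊆ S) with hWmdef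
  set W0 := (W \ Wp) \ Wm with hW0def
  have hWnotD : ∀ {A}, A ∈ W → A ∉ D := by
    intro A hA
    exact (Finset.mem_sdiff.mp hA).2
  have hWpW : Wp ⊆ W := Finset.filter_subset _ _
  have hWmW : Wm ⊆ W := Finset.filter_subset _ _
  have hW0W : W0 ⊆ W := subset_trans (Finset.sdiff_subset) Finset.sdiff_subset
  have hdisjpm : Disjoint Wp Wm := by
    rw [Finset.disjoint_left]
    intro A hAp hAm
    obtain ⟨hAW, S, hS, hSA⟩ := Finset.mem_filter.mp hAp
    obtain ⟨_, S', hS', hAS'⟩ := Finset.mem_filter.mp hAm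
    exact hWnotD hAW (hbetween S hS S' hS' A hSA hAS')
  have hW0p : ∀ {A}, A ∈ W0 → ¬ ∃ S ∈ D, S ⊆ A := by
    intro A hA hex
    have h1 : A ∈ W \ Wp := (Finset.mem_sdiff.mp hA).1
    have h2 : A ∈ Wp := Finset.mem_filter.mpr ⟨(Finset.mem_sdiff.mp h1).1, hex⟩
    exact (Finset.mem_sdiff.mp h1).2 h2
  have hW0m : ∀ {A}, A ∈ W0 → ¬ ∃ S ∈ D, A ⊆ S := by
    intro A hA hex
    have h1 : A ∈ Wm := Finset.mem_filter.mpr ⟨hW0W hA, hex⟩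
    exact (Finset.mem_sdiff.mp hA).2 h1
  have hWp_ex : ∀ {A}, A ∈ Wp → ∃ S ∈ D, S ⊆ A := fun hA => (Finset.mem_filter.mp hA).2
  have hWm_ex : ∀ {A}, A ∈ Wm → ∃ S ∈ D, A ⊆ S := fun hA => (Finset.mem_filter.mp hA).2
  have hcard_le : ∀ A : Finset (Fin k₀), A.card ≤ k₀ := by
    intro A
    simpa using Finset.card_le_univ A
  have hcard_lem : ∀ T : Finset (Fin m), T.card ≤ m := by
    intro T
    simpa using Finset.card_le_univ T
  -- the parts
  set OW : (P → Finset (Fin (k₀ + m))) → (P → Finset (Fin (k₀ + m))) → Prop :=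
    fun g h => ∀ p q : P, ¬ g p ⊆ h q with hOW
  set slicePart : Finset (Finset (Fin k₀)) → List (P → Finset (Fin (k₀ + m))) :=
    fun 𝒜 => l.flatMap (fun g => (descList 𝒜 k₀).map (fun A => (fun p => glue A (g p)))) with hslice
  set transPart : List (P → Finset (Fin (k₀ + m))) :=
    (descList (univ : Finset (Finset (Fin m))) m).map (fun T => (fun p => glue (f₀ p) T))
    with htrans
  -- membership characterizations
  have mem_slicePart : ∀ {𝒜 : Finset (Finset (Fin k₀))} {x},
      x ∈ slicePart 𝒜 → ∃ g ∈ l, ∃ A ∈ 𝒜, x = fun p => glue A (g p) := by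
    intro 𝒜 x hx
    rw [hslice, List.mem_flatMap] at hx
    obtain ⟨g, hg, hx⟩ := hx
    rw [List.mem_map] at hx
    obtain ⟨A, hA, rfl⟩ := hx
    exact ⟨g, hg, A, (mem_descList (fun A _ => hcard_le A)).mp hA, rfl⟩
  have mem_transPart : ∀ {x}, x ∈ transPart → ∃ T : Finset (Fin m), x = fun p => glue (f₀ p) T := by
    intro x hx
    rw [htrans, List.mem_map] at hx
    obtain ⟨T, _, rfl⟩ := hx
    exact ⟨T, rfl⟩
  -- strongness
  have strong_slicePart : ∀ (𝒜 : Finset (Finset (Fin k₀))), ∀ x ∈ slicePart 𝒜,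
      IsStrongEmbedding x := by
    intro 𝒜 x hx
    obtain ⟨g, hg, A, _, rfl⟩ := mem_slicePart hx
    exact strong_glue_right A (hstrong g hg)
  have strong_transPart : ∀ x ∈ transPart, IsStrongEmbedding x := by
    intro x hx
    obtain ⟨T, rfl⟩ := mem_transPart hx
    exact strong_glue_left T hf₀
  -- pairwise within slice parts
  have pairwise_slicePart : ∀ (𝒜 : Finset (Finset (Fin k₀))), (slicePart 𝒜).Pairwise OW := by
    intro 𝒜
    rw [hslice]
    apply pairwise_flatMap
    · refine hpair.imp_of_mem ?_
      intro g g' _ _ hgg' x hx y hy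
      rw [List.mem_map] at hx hy
      obtain ⟨A, _, rfl⟩ := hx
      obtain ⟨A', _, rfl⟩ := hy
      intro p q hsub
      exact hgg' p q (glue_subset_iff.mp hsub).2
    · intro g _
      rw [List.pairwise_map]
      refine (pairwise_descList 𝒜 k₀).imp ?_
      rintro A A' ⟨hcard, hne⟩ p q hsub
      rw [glue_subset_iff] at hsub
      exact hne (Finset.eq_of_subset_of_card_le hsub.1 hcard)
  have pairwise_transPart : transPart.Pairwise OW := by
    rw [htrans, List.pairwise_map]
    refine (pairwise_descList _ _).imp ?_
    rintro T T' ⟨hcard, hne⟩ p q hsub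
    rw [glue_subset_iff] at hsub
    exact hne (Finset.eq_of_subset_of_card_le hsub.2 hcard)
  -- cross one-way facts
  have cross_plus_trans : ∀ x ∈ slicePart Wp, ∀ y ∈ transPart, OW x y := by
    intro x hx y hy
    obtain ⟨g, _, A, hA, rfl⟩ := mem_slicePart hx
    obtain ⟨T, rfl⟩ := mem_transPart hy
    intro p q hsub
    rw [glue_subset_iff] at hsub
    obtain ⟨S, hS, hSA⟩ := hWp_ex hA
    exact hWnotD (hWpW hA) (hbetween S hS (f₀ q) (himgq q) A hSA hsub.1)
  have cross_plus_zero : ∀ x ∈ slicePart Wp, ∀ y ∈ slicePart W0, OW x y := by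
    intro x hx y hy
    obtain ⟨g, _, A, hA, rfl⟩ := mem_slicePart hx
    obtain ⟨g', _, A', hA', rfl⟩ := mem_slicePart hy
    intro p q hsub
    rw [glue_subset_iff] at hsub
    obtain ⟨S, hS, hSA⟩ := hWp_ex hA
    exact hW0p hA' ⟨S, hS, subset_trans hSA hsub.1⟩
  have cross_plus_minus : ∀ x ∈ slicePart Wp, ∀ y ∈ slicePart Wm, OW x y := by
    intro x hx y hy
    obtain ⟨g, _, A, hA, rfl⟩ := mem_slicePart hx
    obtain ⟨g', _, A', hA', rfl⟩ := mem_slicePart hy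
    intro p q hsub
    rw [glue_subset_iff] at hsub
    obtain ⟨S, hS, hSA⟩ := hWp_ex hA
    obtain ⟨S', hS', hA'S'⟩ := hWm_ex hA'
    exact hWnotD (hWmW hA') (hbetween S hS S' hS' A' (subset_trans hSA hsub.1) hA'S')
  have cross_trans_zero : ∀ x ∈ transPart, ∀ y ∈ slicePart W0, OW x y := by
    intro x hx y hy
    obtain ⟨T, rfl⟩ := mem_transPart hx
    obtain ⟨g', _, A', hA', rfl⟩ := mem_slicePart hy
    intro p q hsub
    rw [glue_subset_iff] at hsub
    exact hW0p hA' ⟨f₀ p, himgq p, hsub.1⟩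
  have cross_trans_minus : ∀ x ∈ transPart, ∀ y ∈ slicePart Wm, OW x y := by
    intro x hx y hy
    obtain ⟨T, rfl⟩ := mem_transPart hx
    obtain ⟨g', _, A', hA', rfl⟩ := mem_slicePart hy
    intro p q hsub
    rw [glue_subset_iff] at hsub
    obtain ⟨S', hS', hA'S'⟩ := hWm_ex hA'
    exact hWnotD (hWmW hA') (hbetween (f₀ p) (himgq p) S' hS' A' hsub.1 hA'S')
  have cross_zero_minus : ∀ x ∈ slicePart W0, ∀ y ∈ slicePart Wm, OW x y := by
    intro x hx y hy
    obtain ⟨g, _, A, hA, rfl⟩ := mem_slicePart hx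
    obtain ⟨g', _, A', hA', rfl⟩ := mem_slicePart hy
    intro p q hsub
    rw [glue_subset_iff] at hsub
    obtain ⟨S', hS', hA'S'⟩ := hWm_ex hA'
    exact hW0m hA ⟨S', hS', subset_trans hsub.1 hA'S'⟩
  -- lengths
  have len_slicePart : ∀ (𝒜 : Finset (Finset (Fin k₀))), (slicePart 𝒜).length = l.length * 𝒜.card := by
    intro 𝒜
    rw [hslice]
    apply length_flatMap_const
    intro g _
    rw [List.length_map, length_descList _ _ (fun A _ => hcard_le A)]
  have len_transPart : transPart.length = 2 ^ m := by
    rw [htrans, List.length_map, length_descList _ _ (fun T _ => hcard_lem T)]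
    rw [Finset.card_univ, Fintype.card_finset, Fintype.card_fin]
  -- assemble
  refine ⟨slicePart Wp ++ (transPart ++ (slicePart W0 ++ slicePart Wm)), ?_, ?_, ?_⟩
  · intro x hx
    rcases List.mem_append.mp hx with h | h
    · exact strong_slicePart Wp x h
    rcases List.mem_append.mp h with h | h
    · exact strong_transPart x h
    rcases List.mem_append.mp h with h | h
    · exact strong_slicePart W0 x h
    · exact strong_slicePart Wm x h
  · rw [List.pairwise_append]
    refine ⟨pairwise_slicePart Wp, ?_, ?_⟩
    · rw [List.pairwise_append]
      refine ⟨pairwise_transPart, ?_, ?_⟩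
      · rw [List.pairwise_append]
        refine ⟨pairwise_slicePart W0, pairwise_slicePart Wm, cross_zero_minus⟩
      · intro x hx y hy
        rcases List.mem_append.mp hy with h | h
        · exact cross_trans_zero x hx y h
        · exact cross_trans_minus x hx y h
    · intro x hx y hy
      rcases List.mem_append.mp hy with h | h
      · exact cross_plus_trans x hx y h
      rcases List.mem_append.mp h with h | h
      · exact cross_plus_zero x hx y h
      · exact cross_plus_minus x hx y h
  · rw [List.length_append, List.length_append, List.length_append,
      len_slicePart, len_slicePart, len_slicePart, len_transPart]
    have hWcard : W.card = 2 ^ k₀ - D.card := by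
      rw [hWdef, Finset.card_sdiff_of_subset]
      · rw [Finset.card_univ, Fintype.card_finset, Fintype.card_fin]
      · exact Finset.subset_univ D
    have hsum : Wp.card + W0.card + Wm.card = W.card := by
      have h1 : W0 = (W \ Wp) \ Wm := hW0def
      have hWmsub : Wm ⊆ W \ Wp := by
        intro A hA
        rw [Finset.mem_sdiff]
        exact ⟨hWmW hA, fun hp => (Finset.disjoint_left.mp hdisjpm) hp hA⟩
      have c1 : (W \ Wp).card = W.card - Wp.card := Finset.card_sdiff_of_subset hWpW
      have c2 : W0.card = (W \ Wp).card - Wm.card := by rw [h1]; exact Finset.card_sdiff_of_subset hWmsub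
      have le1 : Wp.card ≤ W.card := Finset.card_le_card hWpW
      have le2 : Wm.card ≤ (W \ Wp).card := Finset.card_le_card hWmsub
      omega
    have hDle : D.card ≤ 2 ^ k₀ := by
      calc D.card ≤ (univ : Finset (Finset (Fin k₀))).card := Finset.card_le_univ D
        _ = 2 ^ k₀ := by rw [Finset.card_univ, Fintype.card_finset, Fintype.card_fin]
    -- goal already in terms of D
    -- goal: l.length * Wp.card + (2^m + (l.length * W0.card + l.length * Wm.card)) = 2^m + (2^k₀ - D.card) * l.length
    have : l.length * Wp.card + l.length * W0.card + l.length * Wm.card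
        = (2 ^ k₀ - D.card) * l.length := by
      rw [← Nat.mul_add, ← Nat.mul_add, hsum, hWcard]
      ring
    omega

end PaletteStep


open Finset

section LowerMain

variable {P : Type*} [PartialOrder P] [Fintype P]

lemma palette_main {k₀ : ℕ} (f₀ : P → Finset (Fin k₀)) (hf₀ : IsStrongEmbedding f₀) :
    ∀ t : ℕ, ∃ (k : ℕ) (l : List (P → Finset (Fin k))),
      (∀ g ∈ l, IsStrongEmbedding g) ∧
      l.Pairwise (fun g h => ∀ p q : P, ¬ g p ⊆ h q) ∧
      k = k₀ * (t + 1) ∧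
      2 ^ k ≤ (convexClosure (Finset.image f₀ Finset.univ)).card * l.length
        + (2 ^ k₀ - (convexClosure (Finset.image f₀ Finset.univ)).card) ^ (t + 1) := by
  classical
  set c := (convexClosure (Finset.image f₀ Finset.univ)).card with hc
  have hcle : c ≤ 2 ^ k₀ := by
    calc c ≤ (univ : Finset (Finset (Fin k₀))).card := Finset.card_le_univ _
      _ = 2 ^ k₀ := by rw [Finset.card_univ, Fintype.card_finset, Fintype.card_fin]
  intro t
  induction t with
  | zero =>
    refine ⟨k₀, [f₀], ?_, ?_, by ring, ?_⟩
    · intro g hg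
      rw [List.mem_singleton] at hg
      rw [hg]; exact hf₀
    · exact List.pairwise_singleton _ _
    · simp only [List.length_cons, List.length_nil, zero_add, pow_one, mul_one]
      omega
  | succ t ih =>
    obtain ⟨k, l, hstrong, hpair, hk, hbound⟩ := ih
    obtain ⟨l', hstrong', hpair', hlen'⟩ := palette_step f₀ hf₀ k l hstrong hpair
    refine ⟨k₀ + k, l', hstrong', hpair', by rw [hk]; ring, ?_⟩
    rw [hlen']
    set w := 2 ^ k₀ - c with hw
    have hcw : c + w = 2 ^ k₀ := by omega
    calc 2 ^ (k₀ + k) = (c + w) * 2 ^ k := by rw [pow_add, hcw]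
      _ = c * 2 ^ k + w * 2 ^ k := by ring
      _ ≤ c * 2 ^ k + w * (c * l.length + w ^ (t + 1)) :=
          Nat.add_le_add le_rfl (Nat.mul_le_mul_left _ hbound)
      _ = c * (2 ^ k + w * l.length) + w ^ (t + 2) := by ring
  
lemma unrelated_copies {k m : ℕ} (l : List (P → Finset (Fin k)))
    (hpair : l.Pairwise (fun g h => ∀ p q : P, ¬ g p ⊆ h q))
    (ℓ : Fin l.length → ℕ) (hmono : StrictMono ℓ)
    {i j : Fin l.length} {R R' : Finset (Fin m)} (hR : R.card = ℓ i) (hR' : R'.card = ℓ j)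
    (hne : ¬(i = j ∧ R = R')) :
    ∀ p q : P, ¬ glue (l.get i p) R ⊆ glue (l.get j q) R' := by
  intro p q hsub
  rw [glue_subset_iff] at hsub
  rcases lt_trichotomy i j with hij | hij | hij
  · have := (List.pairwise_iff_get.mp hpair) i j hij
    exact this p q hsub.1
  · subst hij
    have hRR' : R = R' := Finset.eq_of_subset_of_card_le hsub.2 (by omega)
    exact hne ⟨rfl, hRR'⟩
  · have h1 : R'.card < R.card := by
      rw [hR, hR']; exact hmono hij
    have h2 : R.card ≤ R'.card := Finset.card_le_card hsub.2
    omega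

lemma pastar_bddAbove (n : ℕ) :
    BddAbove {m | ∃ F : Finset (Finset (Fin n)), IsUnionOfUnrelatedInducedCopies P F ∧ F.card = m} := by
  refine ⟨2 ^ n, ?_⟩
  rintro x ⟨F, _, rfl⟩
  calc F.card ≤ (univ : Finset (Finset (Fin n))).card := Finset.card_le_univ F
    _ = 2 ^ n := by rw [Finset.card_univ, Fintype.card_finset, Fintype.card_fin]

lemma lower_assembly (hp : 0 < Fintype.card P)
    {k : ℕ} (l : List (P → Finset (Fin k)))
    (hstrong : ∀ g ∈ l, IsStrongEmbedding g)
    (hpair : l.Pairwise (fun g h => ∀ p q : P, ¬ g p ⊆ h q)) :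
    ∀ m : ℕ, 2 * l.length + 2 ≤ m →
      Fintype.card P * (l.length * m.choose (m / 2 - l.length)) ≤ PaStar P (k + m) := by
  classical
  intro m hm
  have hPne : Nonempty P := Fintype.card_pos_iff.mp hp
  set L := l.length with hL
  set ℓ : Fin L → ℕ := fun i => m / 2 - L + 1 + (i : ℕ) with hℓ
  have hmono : StrictMono ℓ := by
    intro i j hij
    simp only [hℓ]
    have : (i : ℕ) < (j : ℕ) := hij
    omega
  have hup : ∀ i : Fin L, ℓ i ≤ m / 2 := by
    intro i
    have := i.isLt
    simp only [hℓ]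
    omega
  have hlow : ∀ i : Fin L, m / 2 - L ≤ ℓ i := by
    intro i
    simp only [hℓ]
    omega
  set copySet : Fin L → Finset (Fin m) → Finset (Finset (Fin (k + m))) :=
    fun i R => Finset.image (fun p => glue (l.get i p) R) univ with hcopySet
  have hinduced : ∀ (i : Fin L) (R : Finset (Fin m)), IsInducedCopy P (copySet i R) := by
    intro i R
    exact ⟨fun p => glue (l.get i p) R, strong_glue_left R (hstrong _ (l.get_mem i)), rfl⟩
  have hnonempty : ∀ (i : Fin L) (R : Finset (Fin m)), (copySet i R).Nonempty := by
    intro i R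
    rw [hcopySet]
    apply Finset.image_nonempty.mpr
    exact Finset.univ_nonempty
  have hunrel : ∀ (i : Fin L) (R : Finset (Fin m)), R.card = ℓ i →
      ∀ (j : Fin L) (R' : Finset (Fin m)), R'.card = ℓ j →
      ¬(i = j ∧ R = R') → Unrelated (copySet i R) (copySet j R') := by
    intro i R hR j R' hR' hne X hX Y hY
    rw [hcopySet] at hX hY
    obtain ⟨p, _, rfl⟩ := Finset.mem_image.mp hX
    obtain ⟨q, _, rfl⟩ := Finset.mem_image.mp hY
    constructor
    · exact unrelated_copies l hpair ℓ hmono hR hR' hne p q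
    · refine unrelated_copies l hpair ℓ hmono hR' hR ?_ q p
      intro ⟨h1, h2⟩
      exact hne ⟨h1.symm, h2.symm⟩
  have hdistinct : ∀ (i : Fin L) (R : Finset (Fin m)), R.card = ℓ i →
      ∀ (j : Fin L) (R' : Finset (Fin m)), R'.card = ℓ j →
      copySet i R = copySet j R' → i = j ∧ R = R' := by
    intro i R hR j R' hR' heq
    by_contra hne
    obtain ⟨X, hX⟩ := hnonempty i R
    have hX' : X ∈ copySet j R' := heq ▸ hX
    exact (hunrel i R hR j R' hR' hne X hX X hX').1 subset_rfl
  set 𝒞 : Finset (Finset (Finset (Fin (k + m)))) :=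
    (univ : Finset (Fin L)).biUnion
      (fun i => ((univ : Finset (Finset (Fin m))).filter (fun R => R.card = ℓ i)).image
        (fun R => copySet i R)) with h𝒞
  have hmem𝒞 : ∀ C ∈ 𝒞, ∃ (i : Fin L) (R : Finset (Fin m)), R.card = ℓ i ∧ C = copySet i R := by
    intro C hC
    rw [h𝒞, Finset.mem_biUnion] at hC
    obtain ⟨i, _, hC⟩ := hC
    rw [Finset.mem_image] at hC
    obtain ⟨R, hR, rfl⟩ := hC
    rw [Finset.mem_filter] at hR
    exact ⟨i, R, hR.2, rfl⟩
  have hprop1 : ∀ C ∈ 𝒞, IsInducedCopy P C := by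
    intro C hC
    obtain ⟨i, R, _, rfl⟩ := hmem𝒞 C hC
    exact hinduced i R
  have hprop2 : ∀ C₁ ∈ 𝒞, ∀ C₂ ∈ 𝒞, C₁ ≠ C₂ → Unrelated C₁ C₂ := by
    intro C₁ h₁ C₂ h₂ hne
    obtain ⟨i, R, hR, rfl⟩ := hmem𝒞 C₁ h₁
    obtain ⟨j, R', hR', rfl⟩ := hmem𝒞 C₂ h₂
    refine hunrel i R hR j R' hR' ?_
    intro ⟨h1, h2⟩
    exact hne (by rw [h1, h2])
  have hcard𝒞 : 𝒞.card = ∑ i : Fin L, m.choose (ℓ i) := by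
    rw [h𝒞, Finset.card_biUnion]
    · refine Finset.sum_congr rfl (fun i _ => ?_)
      rw [Finset.card_image_of_injOn]
      · have : (univ : Finset (Finset (Fin m))).filter (fun R => R.card = ℓ i)
            = Finset.powersetCard (ℓ i) (univ : Finset (Fin m)) := by
          rw [Finset.powersetCard_eq_filter]
          ext R
          simp [Finset.mem_powerset]
        rw [this, Finset.card_powersetCard, Finset.card_univ, Fintype.card_fin]
      · intro R hR R' hR' heq
        rw [Finset.coe_filter] at hR hR'
        simp only [Set.mem_setOf_eq, mem_univ, true_and] at hR hR'
        exact (hdistinct i R hR i R' hR' heq).2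
    · intro i _ j _ hij
      rw [Function.onFun, Finset.disjoint_left]
      intro C hCi hCj
      rw [Finset.mem_image] at hCi hCj
      obtain ⟨R, hR, rfl⟩ := hCi
      obtain ⟨R', hR', heq⟩ := hCj
      rw [Finset.mem_filter] at hR hR'
      have := hdistinct j R' hR'.2 i R hR.2 heq
      exact hij this.1.symm
  have hsum_ge : L * m.choose (m / 2 - L) ≤ ∑ i : Fin L, m.choose (ℓ i) := by
    calc L * m.choose (m / 2 - L) = ∑ _i : Fin L, m.choose (m / 2 - L) := by
          rw [Finset.sum_const, Finset.card_univ, Fintype.card_fin, smul_eq_mul]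
      _ ≤ ∑ i : Fin L, m.choose (ℓ i) := by
          refine Finset.sum_le_sum (fun i _ => ?_)
          exact mono_incr_below (hup i) (hlow i)
  have hunion : IsUnionOfUnrelatedInducedCopies P (𝒞.sup id) := ⟨𝒞, hprop1, hprop2, rfl⟩
  have hFcard : (𝒞.sup id).card = 𝒞.card * Fintype.card P := family_card 𝒞 hprop1 hprop2
  have hle : (𝒞.sup id).card ≤ PaStar P (k + m) := by
    apply le_csSup (pastar_bddAbove (k + m))
    exact ⟨𝒞.sup id, hunion, rfl⟩
  calc Fintype.card P * (L * m.choose (m / 2 - L))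
      ≤ Fintype.card P * ∑ i : Fin L, m.choose (ℓ i) := Nat.mul_le_mul_left _ hsum_ge
    _ = 𝒞.card * Fintype.card P := by rw [hcard𝒞]; ring
    _ = (𝒞.sup id).card := hFcard.symm
    _ ≤ PaStar P (k + m) := hle

end LowerMain


open Finset Filter

section Limits

lemma ratio_up (n : ℕ) : (n + 1).choose ((n + 1) / 2) ≤ 2 * n.choose (n / 2) := by
  rcases Nat.even_or_odd n with ⟨a, rfl⟩ | ⟨a, rfl⟩
  · have h1 : (a + a + 1) / 2 = a := by omega
    have h2 : (a + a) / 2 = a := by omega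
    rw [h1, h2]
    rcases Nat.eq_zero_or_pos a with rfl | ha
    · simp
    · obtain ⟨a', rfl⟩ : ∃ a', a = a' + 1 := ⟨a - 1, by omega⟩
      have hp : (a' + 1 + (a' + 1) + 1).choose (a' + 1)
          = (a' + 1 + (a' + 1)).choose a' + (a' + 1 + (a' + 1)).choose (a' + 1) :=
        Nat.choose_succ_succ' (a' + 1 + (a' + 1)) a'
      have hle1 : (a' + 1 + (a' + 1)).choose a'
          ≤ (a' + 1 + (a' + 1)).choose ((a' + 1 + (a' + 1)) / 2) := Nat.choose_le_middle _ _
      have hle2 : (a' + 1 + (a' + 1)).choose (a' + 1)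
          ≤ (a' + 1 + (a' + 1)).choose ((a' + 1 + (a' + 1)) / 2) := Nat.choose_le_middle _ _
      have hmid : (a' + 1 + (a' + 1)) / 2 = a' + 1 := by omega
      rw [hmid] at hle1 hle2
      omega
  · have h1 : (2 * a + 1 + 1) / 2 = a + 1 := by omega
    have h2 : (2 * a + 1) / 2 = a := by omega
    rw [h1, h2]
    have hp : (2 * a + 1 + 1).choose (a + 1) = (2 * a + 1).choose a + (2 * a + 1).choose (a + 1) :=
      Nat.choose_succ_succ' (2 * a + 1) a
    have hsym : (2 * a + 1).choose (a + 1) = (2 * a + 1).choose a := by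
      have h4 := Nat.choose_symm (show a + 1 ≤ 2 * a + 1 by omega)
      rw [show 2 * a + 1 - (a + 1) = a by omega] at h4
      exact h4.symm
    omega

lemma ratio_down (n : ℕ) :
    (2 * n + 2) * n.choose (n / 2) ≤ (n + 2) * (n + 1).choose ((n + 1) / 2) := by
  rcases Nat.even_or_odd n with ⟨a, rfl⟩ | ⟨a, rfl⟩
  · have h1 : (a + a + 1) / 2 = a := by omega
    have h2 : (a + a) / 2 = a := by omega
    rw [h1, h2]
    have key := Nat.add_one_mul_choose_eq (a + a) a
    -- (a+a).succ * choose (a+a) a = choose (a+a+1) (a+1) * (a+1)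
    have hsym : (a + a + 1).choose (a + 1) = (a + a + 1).choose a := by
      have h4 := Nat.choose_symm (show a + 1 ≤ a + a + 1 by omega)
      rw [show a + a + 1 - (a + 1) = a by omega] at h4
      exact h4.symm
    have key2 : (a + a + 1) * (a + a).choose a = (a + a + 1).choose a * (a + 1) := by
      rw [← hsym]
      simpa [Nat.succ_eq_add_one] using key
    nlinarith [Nat.choose_pos (show a ≤ a + a + 1 by omega)]
  · have h1 : (2 * a + 1 + 1) / 2 = a + 1 := by omega
    have h2 : (2 * a + 1) / 2 = a := by omega
    rw [h1, h2]
    have hp : (2 * a + 1 + 1).choose (a + 1) = (2 * a + 1).choose a + (2 * a + 1).choose (a + 1) :=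
      Nat.choose_succ_succ' (2 * a + 1) a
    have hsym : (2 * a + 1).choose (a + 1) = (2 * a + 1).choose a := by
      have h4 := Nat.choose_symm (show a + 1 ≤ 2 * a + 1 by omega)
      rw [show 2 * a + 1 - (a + 1) = a by omega] at h4
      exact h4.symm
    rw [hsym] at hp
    nlinarith [Nat.choose_pos (show a ≤ 2 * a + 1 by omega)]

noncomputable def midBinom (n : ℕ) : ℝ := (n.choose (n / 2) : ℝ)

lemma midBinom_pos (n : ℕ) : 0 < midBinom n := by
  unfold midBinom
  exact_mod_cast Nat.choose_pos (Nat.div_le_self n 2)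

lemma tendsto_ratio : Tendsto (fun n : ℕ => midBinom (n + 1) / midBinom n) atTop (nhds 2) := by
  have hup : ∀ n : ℕ, midBinom (n + 1) / midBinom n ≤ 2 := by
    intro n
    rw [div_le_iff₀ (midBinom_pos n)]
    unfold midBinom
    calc ((n + 1).choose ((n + 1) / 2) : ℝ) ≤ ((2 * n.choose (n / 2) : ℕ) : ℝ) := by
          exact_mod_cast ratio_up n
      _ = 2 * (n.choose (n / 2) : ℝ) := by push_cast; ring
  have hdown : ∀ n : ℕ, (2 * (n : ℝ) + 2) / ((n : ℝ) + 2) ≤ midBinom (n + 1) / midBinom n := by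
    intro n
    rw [div_le_div_iff₀ (by positivity) (midBinom_pos n)]
    unfold midBinom
    calc (2 * (n : ℝ) + 2) * (n.choose (n / 2) : ℝ)
        = (((2 * n + 2) * n.choose (n / 2) : ℕ) : ℝ) := by push_cast; ring
      _ ≤ (((n + 2) * (n + 1).choose ((n + 1) / 2) : ℕ) : ℝ) := by exact_mod_cast ratio_down n
      _ = ((n + 1).choose ((n + 1) / 2) : ℝ) * ((n : ℝ) + 2) := by push_cast; ring
  have hlow_tendsto : Tendsto (fun n : ℕ => (2 * (n : ℝ) + 2) / ((n : ℝ) + 2)) atTop (nhds 2) := by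
    have heq : ∀ n : ℕ, (2 * (n : ℝ) + 2) / ((n : ℝ) + 2) = 2 - 2 / ((n : ℝ) + 2) := by
      intro n
      have hne : (n : ℝ) + 2 ≠ 0 := by positivity
      field_simp
      ring
    simp_rw [heq]
    have h0 : Tendsto (fun n : ℕ => 2 / ((n : ℝ) + 2)) atTop (nhds 0) := by
      apply Tendsto.div_atTop (tendsto_const_nhds)
      exact tendsto_atTop_add_const_right _ _ tendsto_natCast_atTop_atTop
    have h2 := (tendsto_const_nhds (x := (2:ℝ)) (f := (atTop : Filter ℕ))).sub h0
    simpa using h2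
  exact tendsto_of_tendsto_of_tendsto_of_le_of_le hlow_tendsto tendsto_const_nhds hdown hup

lemma tendsto_half_aux (j : ℕ) :
    Tendsto (fun x : ℕ => ((x : ℝ) - j) / ((x : ℝ) + j + 2)) atTop (nhds 1) := by
  have heq : ∀ x : ℕ, ((x : ℝ) - j) / ((x : ℝ) + j + 2)
      = 1 - (2 * j + 2) / ((x : ℝ) + j + 2) := by
    intro x
    have hne : (x : ℝ) + j + 2 ≠ 0 := by positivity
    field_simp
    ring
  simp_rw [heq]
  have h0 : Tendsto (fun x : ℕ => (2 * (j:ℝ) + 2) / ((x : ℝ) + j + 2)) atTop (nhds 0) := by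
    apply Tendsto.div_atTop (tendsto_const_nhds)
    have := tendsto_atTop_add_const_right (atTop : Filter ℕ) ((j : ℝ) + 2) tendsto_natCast_atTop_atTop
    apply this.congr
    intro x
    ring
  have h2 := (tendsto_const_nhds (x := (1:ℝ)) (f := (atTop : Filter ℕ))).sub h0
  simpa using h2

lemma tendsto_div_two_atTop : Tendsto (fun n : ℕ => n / 2) atTop atTop := by
  apply tendsto_atTop.mpr
  intro b
  rw [eventually_atTop]
  exact ⟨2 * b, fun n hn => by omega⟩

lemma tendsto_shift (j : ℕ) :
    Tendsto (fun n : ℕ => (n.choose (n / 2 - j) : ℝ) / midBinom n) atTop (nhds 1) := by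
  induction j with
  | zero =>
    have heq : ∀ n : ℕ, (n.choose (n / 2 - 0) : ℝ) / midBinom n = 1 := by
      intro n
      rw [Nat.sub_zero]
      exact div_self (ne_of_gt (midBinom_pos n))
    simp_rw [heq]
    exact tendsto_const_nhds
  | succ j ih =>
    have hstep : Tendsto
        (fun n : ℕ => (n.choose (n / 2 - (j + 1)) : ℝ) / (n.choose (n / 2 - j) : ℝ))
        atTop (nhds 1) := by
      have hub : ∀ n : ℕ, (n.choose (n / 2 - (j + 1)) : ℝ) / (n.choose (n / 2 - j) : ℝ) ≤ 1 := by
        intro n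
        rw [div_le_one (by exact_mod_cast Nat.choose_pos (by omega : n / 2 - j ≤ n))]
        exact_mod_cast mono_incr_below (by omega) (by omega)
      have hlb : ∀ n : ℕ, 2 * (j + 1) + 2 ≤ n →
          (((n / 2 : ℕ) : ℝ) - (j : ℝ)) / (((n / 2 : ℕ) : ℝ) + (j : ℝ) + 2)
            ≤ (n.choose (n / 2 - (j + 1)) : ℝ) / (n.choose (n / 2 - j) : ℝ) := by
        intro n hn
        have hj1 : j + 1 ≤ n / 2 := by omega
        set a := n / 2 - (j + 1) with ha
        have ha1 : a + 1 = n / 2 - j := by omega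
        have hchooseA_pos : (0:ℝ) < (n.choose a : ℝ) := by
          exact_mod_cast Nat.choose_pos (by omega : a ≤ n)
        have hsucc_pos : (0:ℝ) < (n.choose (a + 1) : ℝ) := by
          exact_mod_cast Nat.choose_pos (by omega : a + 1 ≤ n)
        rw [← ha1]
        rw [div_le_div_iff₀ (by positivity) hsucc_pos]
        have key := Nat.choose_succ_right_eq n a
        have hkey : (n.choose (a + 1) : ℝ) * ((a : ℝ) + 1) = (n.choose a : ℝ) * ((n : ℝ) - a) := by
          have h2 : ((n.choose (a + 1) * (a + 1) : ℕ) : ℝ) = ((n.choose a * (n - a) : ℕ) : ℝ) := by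
            exact_mod_cast congrArg (fun x : ℕ => (x : ℝ)) key
          push_cast [Nat.cast_sub (by omega : a ≤ n)] at h2
          linarith
        have hq1 : ((n / 2 : ℕ) : ℝ) - (j : ℝ) = (a : ℝ) + 1 := by
          have h4 : ((a + 1 : ℕ) : ℝ) = ((n / 2 - j : ℕ) : ℝ) := by rw [ha1]
          have h5 : ((n / 2 - j : ℕ) : ℝ) = ((n / 2 : ℕ) : ℝ) - (j : ℝ) := by
            have h6 : j ≤ n / 2 := by omega
            push_cast [Nat.cast_sub h6]
            ring
          push_cast at h4
          linarith
        have hq2 : (n : ℝ) - (a : ℝ) ≤ ((n / 2 : ℕ) : ℝ) + (j : ℝ) + 2 := by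
          have h5 : n - a ≤ n / 2 + j + 2 := by omega
          have h6 : ((n - a : ℕ) : ℝ) ≤ ((n / 2 + j + 2 : ℕ) : ℝ) := by exact_mod_cast h5
          rw [Nat.cast_sub (by omega : a ≤ n)] at h6
          push_cast at h6
          linarith
        rw [hq1]
        calc ((a : ℝ) + 1) * (n.choose (a + 1) : ℝ)
            = (n.choose (a + 1) : ℝ) * ((a : ℝ) + 1) := by ring
          _ = (n.choose a : ℝ) * ((n : ℝ) - a) := hkey
          _ ≤ (n.choose a : ℝ) * (((n / 2 : ℕ) : ℝ) + (j : ℝ) + 2) := by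
              exact mul_le_mul_of_nonneg_left hq2 (le_of_lt hchooseA_pos)
      have hlow : Tendsto (fun n : ℕ =>
          (((n / 2 : ℕ) : ℝ) - (j : ℝ)) / (((n / 2 : ℕ) : ℝ) + (j : ℝ) + 2)) atTop (nhds 1) :=
        (tendsto_half_aux j).comp tendsto_div_two_atTop
      refine tendsto_of_tendsto_of_tendsto_of_le_of_le' hlow tendsto_const_nhds ?_ ?_
      · filter_upwards [eventually_ge_atTop (2 * (j + 1) + 2)] with n hn
        exact hlb n hn
      · filter_upwards with n
        exact hub n
    have heq : ∀ n : ℕ, (n.choose (n / 2 - (j + 1)) : ℝ) / midBinom n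
        = ((n.choose (n / 2 - (j + 1)) : ℝ) / (n.choose (n / 2 - j) : ℝ))
          * ((n.choose (n / 2 - j) : ℝ) / midBinom n) := by
      intro n
      have hne : (n.choose (n / 2 - j) : ℝ) ≠ 0 :=
        Nat.cast_ne_zero.mpr (Nat.choose_pos (by omega : n / 2 - j ≤ n)).ne'
      field_simp
    have hfin := hstep.mul ih
    rw [one_mul] at hfin
    exact hfin.congr (fun n => (heq n).symm)

lemma tendsto_kshift (k j : ℕ) :
    Tendsto (fun n : ℕ => (((n - k).choose ((n - k) / 2 - j) : ℕ) : ℝ) / midBinom n) atTop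
      (nhds ((1 / 2) ^ k)) := by
  induction k with
  | zero => simpa using tendsto_shift j
  | succ k ih =>
    have hcomp : Tendsto (fun n : ℕ =>
        (((n - 1 - k).choose ((n - 1 - k) / 2 - j) : ℕ) : ℝ) / midBinom (n - 1)) atTop
        (nhds ((1 / 2) ^ k)) := ih.comp (tendsto_sub_atTop_nat 1)
    have hratio : Tendsto (fun n : ℕ => midBinom (n - 1) / midBinom n) atTop (nhds (1 / 2)) := by
      have h2 : Tendsto (fun n : ℕ => (midBinom (n + 1) / midBinom n)⁻¹) atTop (nhds 2⁻¹) :=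
        tendsto_ratio.inv₀ (by norm_num)
      have hcompose := h2.comp (tendsto_sub_atTop_nat 1)
      have heq : ∀ᶠ n : ℕ in atTop,
          ((fun n : ℕ => (midBinom (n + 1) / midBinom n)⁻¹) ∘ (fun n => n - 1)) n
            = midBinom (n - 1) / midBinom n := by
        filter_upwards [eventually_ge_atTop 1] with n hn
        have h3 : n - 1 + 1 = n := by omega
        simp only [Function.comp_apply, h3, inv_div]
      have := hcompose.congr' heq
      norm_num at this ⊢
      exact this
    have hfin := hcomp.mul hratio
    have heq2 : ∀ᶠ n : ℕ in atTop,
        (fun n : ℕ => (((n - 1 - k).choose ((n - 1 - k) / 2 - j) : ℕ) : ℝ) / midBinom (n - 1)) n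
          * (fun n : ℕ => midBinom (n - 1) / midBinom n) n
        = (((n - (k + 1)).choose ((n - (k + 1)) / 2 - j) : ℕ) : ℝ) / midBinom n := by
      filter_upwards with n
      have h3 : n - (k + 1) = n - 1 - k := by omega
      have hm : midBinom (n - 1) ≠ 0 := ne_of_gt (midBinom_pos _)
      rw [h3]
      field_simp
    have := hfin.congr' heq2
    have hval : (1 / 2 : ℝ) ^ k * (1 / 2) = (1 / 2) ^ (k + 1) := by rw [pow_succ]
    rwa [hval] at this

end Limits


open Finset Filter

section FinalGlue

variable {P : Type*} [PartialOrder P] [Fintype P]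

lemma empty_is_union (n : ℕ) : IsUnionOfUnrelatedInducedCopies P (∅ : Finset (Finset (Fin n))) := by
  refine ⟨∅, by simp, by simp, ?_⟩
  simp

lemma pastar_mem (n : ℕ) :
    ∃ F : Finset (Finset (Fin n)), IsUnionOfUnrelatedInducedCopies P F ∧ F.card = PaStar P n := by
  have hne : {m | ∃ F : Finset (Finset (Fin n)), IsUnionOfUnrelatedInducedCopies P F
      ∧ F.card = m}.Nonempty := ⟨0, ∅, empty_is_union n, rfl⟩
  have := Nat.sSup_mem hne (pastar_bddAbove n)
  exact this

lemma pastar_zero (hp : Fintype.card P = 0) (n : ℕ) : PaStar P n = 0 := by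
  have hempty : IsEmpty P := Fintype.card_eq_zero_iff.mp hp
  unfold PaStar
  have hset : {m | ∃ F : Finset (Finset (Fin n)), IsUnionOfUnrelatedInducedCopies P F
      ∧ F.card = m} = {0} := by
    ext m
    simp only [Set.mem_setOf_eq, Set.mem_singleton_iff]
    constructor
    · rintro ⟨F, ⟨𝒞, hcopy, _, rfl⟩, rfl⟩
      have hFempty : 𝒞.sup id = ⊥ := by
        apply le_antisymm _ bot_le
        apply Finset.sup_le
        intro C hC
        obtain ⟨f, _, rfl⟩ := hcopy C hC
        rw [Finset.univ_eq_empty, Finset.image_empty]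
        exact le_rfl
      rw [hFempty]
      rfl
    · rintro rfl
      exact ⟨∅, empty_is_union n, rfl⟩
  rw [hset]
  exact csSup_singleton 0

theorem paStar_asymptotics' (P : Type*) [PartialOrder P] [Fintype P] :
    Filter.Tendsto (fun n : ℕ => (PaStar P n : ℝ) / (n.choose (n / 2)))
      Filter.atTop (nhds ((Fintype.card P : ℝ) / (closureNumStar P : ℝ))) := by
  classical
  rcases Nat.eq_zero_or_pos (Fintype.card P) with hp | hp
  · have heq : (fun n : ℕ => (PaStar P n : ℝ) / (n.choose (n / 2))) = fun _ => 0 := by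
      funext n
      rw [pastar_zero hp]
      simp
    rw [heq, hp]
    simp only [Nat.cast_zero, zero_div]
    exact tendsto_const_nhds
  · set c := closureNumStar P with hcdef
    have hc1 : 1 ≤ c := closureNumStar_pos P hp
    set B : ℝ := (Fintype.card P : ℝ) / (c : ℝ) with hBdef
    have hppos : (0:ℝ) < (Fintype.card P : ℝ) := by exact_mod_cast hp
    have hcpos : (0:ℝ) < (c : ℝ) := by exact_mod_cast hc1
    have hBpos : 0 < B := div_pos hppos hcpos
    -- UPPER BOUND SETUP
    obtain ⟨N₁, hub⟩ := upper_bound P hp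
    have hUBreal : ∀ n, N₁ ≤ n → 6 * c < n →
        (PaStar P n : ℝ) / midBinom n
          ≤ (Fintype.card P : ℝ) * n / ((c : ℝ) * ((n - 6 * c : ℕ) : ℝ)) := by
      intro n hn1 hn2
      obtain ⟨F, hF, hFcard⟩ := pastar_mem (P := P) n
      have hnat := hub n hn1 F hF
      rw [hFcard] at hnat
      have hD : (0:ℝ) < (c : ℝ) * ((n - 6 * c : ℕ) : ℝ) := by
        apply mul_pos hcpos
        have : 1 ≤ n - 6 * c := by omega
        exact_mod_cast this
      rw [div_le_div_iff₀ (midBinom_pos n) hD]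
      have hcast : ((PaStar P n : ℝ)) * ((c : ℝ) * ((n - 6 * c : ℕ) : ℝ))
          ≤ (Fintype.card P : ℝ) * ((n : ℝ) * midBinom n) := by
        unfold midBinom
        exact_mod_cast hnat
      calc (PaStar P n : ℝ) * ((c : ℝ) * ((n - 6 * c : ℕ) : ℝ))
          ≤ (Fintype.card P : ℝ) * ((n : ℝ) * midBinom n) := hcast
        _ = (Fintype.card P : ℝ) * n * midBinom n := by ring
    have hUBtendsto : Tendsto (fun n : ℕ =>
        (Fintype.card P : ℝ) * n / ((c : ℝ) * ((n - 6 * c : ℕ) : ℝ))) atTop (nhds B) := by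
      have h0 : Tendsto (fun n : ℕ => (6 * c : ℝ) / ((n - 6 * c : ℕ) : ℝ)) atTop (nhds 0) := by
        apply Tendsto.div_atTop tendsto_const_nhds
        exact tendsto_natCast_atTop_atTop.comp (tendsto_sub_atTop_nat (6 * c))
      have h1 : Tendsto (fun n : ℕ => B * (1 + (6 * c : ℝ) / ((n - 6 * c : ℕ) : ℝ))) atTop
          (nhds B) := by
        have := (tendsto_const_nhds (x := (1:ℝ)) (f := (atTop : Filter ℕ))).add h0
        have h2 := (tendsto_const_nhds (x := B) (f := (atTop : Filter ℕ))).mul this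
        simpa using h2
      apply h1.congr'
      filter_upwards [eventually_ge_atTop (6 * c + 1)] with n hn
      have hpos : (0:ℝ) < ((n - 6 * c : ℕ) : ℝ) := by
        have : 1 ≤ n - 6 * c := by omega
        exact_mod_cast this
      have hsplit : (n : ℝ) = ((n - 6 * c : ℕ) : ℝ) + (6 * c : ℝ) := by
        have : ((n - 6 * c) + 6 * c : ℕ) = n := by omega
        exact_mod_cast (congrArg (fun x : ℕ => (x : ℝ)) this).symm
      rw [hBdef, hsplit]
      have hm : ((n - 6 * c : ℕ) : ℝ) ≠ 0 := ne_of_gt hpos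
      field_simp
    -- LOWER BOUND SETUP
    obtain ⟨k₀, f₀, hf₀, hceq⟩ := closureNumStar_spec P
    have hcle2k : c ≤ 2 ^ k₀ := by
      rw [hcdef, ← hceq]
      calc (convexClosure (Finset.image f₀ Finset.univ)).card
          ≤ (univ : Finset (Finset (Fin k₀))).card := Finset.card_le_univ _
        _ = 2 ^ k₀ := by rw [Finset.card_univ, Fintype.card_finset, Fintype.card_fin]
    set σ : ℝ := ((2 ^ k₀ - c : ℕ) : ℝ) / ((2 : ℝ) ^ k₀) with hσdef
    have h2kpos : (0:ℝ) < (2:ℝ) ^ k₀ := by positivity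
    have hσ0 : 0 ≤ σ := by
      apply div_nonneg _ (le_of_lt h2kpos)
      exact Nat.cast_nonneg _
    have hσ1 : σ < 1 := by
      rw [hσdef, div_lt_one h2kpos]
      have h3 : (2 ^ k₀ - c : ℕ) < 2 ^ k₀ := by
        have := Nat.one_le_two_pow (n := k₀)
        omega
      calc ((2 ^ k₀ - c : ℕ) : ℝ) < ((2 ^ k₀ : ℕ) : ℝ) := by exact_mod_cast h3
        _ = (2:ℝ) ^ k₀ := by push_cast; ring
    -- the ε-criterion
    rw [Metric.tendsto_atTop]
    intro ε hε
    -- choose t with B * σ^(t+1) < ε/4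
    have hpow := tendsto_pow_atTop_nhds_zero_of_lt_one hσ0 hσ1
    obtain ⟨t, ht⟩ := (Filter.Tendsto.eventually_lt_const
      (show (0:ℝ) < ε / 4 / B from by positivity) hpow).exists
    have hσt : B * σ ^ (t + 1) < ε / 4 := by
      have h5 : σ ^ (t + 1) ≤ σ ^ t := pow_le_pow_of_le_one hσ0 hσ1.le (Nat.le_succ t)
      calc B * σ ^ (t + 1) ≤ B * σ ^ t := by nlinarith
        _ < B * (ε / 4 / B) := by nlinarith
        _ = ε / 4 := by field_simp
    obtain ⟨k, l, hstrongL, hpairL, hkeq, hbound⟩ := palette_main f₀ hf₀ t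
    rw [hceq, ← hcdef] at hbound
    set L := l.length with hLdef
    have hwcast : ((2 ^ k₀ - c : ℕ) : ℝ) = (2:ℝ) ^ k₀ - (c : ℝ) := by
      rw [Nat.cast_sub hcle2k]
      push_cast
      ring
    have h2keq : (2:ℝ) ^ k = ((2:ℝ) ^ k₀) ^ (t + 1) := by rw [hkeq, pow_mul]
    have hσpow : σ ^ (t + 1) = ((2 ^ k₀ - c : ℕ) : ℝ) ^ (t + 1) / (2:ℝ) ^ k := by
      rw [hσdef, div_pow, h2keq]
    have hboundR : (2:ℝ) ^ k ≤ (c : ℝ) * L + ((2 ^ k₀ - c : ℕ) : ℝ) ^ (t + 1) := by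
      calc (2:ℝ) ^ k = ((2 ^ k : ℕ) : ℝ) := by push_cast; ring
        _ ≤ ((c * L + (2 ^ k₀ - c) ^ (t + 1) : ℕ) : ℝ) := by exact_mod_cast hbound
        _ = (c : ℝ) * L + ((2 ^ k₀ - c : ℕ) : ℝ) ^ (t + 1) := by push_cast; ring
    have hKpos : (0:ℝ) < (2:ℝ) ^ k := by positivity
    set W : ℝ := ((2 ^ k₀ - c : ℕ) : ℝ) ^ (t + 1) with hWdef
    have hWnn : 0 ≤ W := by rw [hWdef]; positivity
    have hkey : B - B * σ ^ (t + 1) ≤ (Fintype.card P : ℝ) * L * (1 / 2) ^ k := by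
      have hhalf : ((1:ℝ) / 2) ^ k = 1 / (2:ℝ) ^ k := by
        rw [div_pow, one_pow]
      rw [hσpow, hhalf, hBdef]
      have h1 : (Fintype.card P : ℝ) / c - (Fintype.card P : ℝ) / c * (W / (2:ℝ) ^ k)
          = (Fintype.card P : ℝ) * ((2:ℝ) ^ k - W) / ((c : ℝ) * (2:ℝ) ^ k) := by
        field_simp
      have h2 : (Fintype.card P : ℝ) * L * (1 / (2:ℝ) ^ k)
          = (Fintype.card P : ℝ) * ((c:ℝ) * L) / ((c : ℝ) * (2:ℝ) ^ k) := by
        field_simp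
      rw [h1, h2]
      rw [div_le_div_iff₀ (by positivity) (by positivity)]
      have h3 : (2:ℝ) ^ k - W ≤ (c:ℝ) * L := by linarith [hboundR]
      exact mul_le_mul_of_nonneg_right (mul_le_mul_of_nonneg_left h3 hppos.le)
        (le_of_lt (mul_pos hcpos hKpos))
    -- lower-bound limit
    have hkshift := tendsto_kshift k L
    have hLBtendsto : Tendsto (fun n : ℕ =>
        (Fintype.card P : ℝ) * L * ((((n - k).choose ((n - k) / 2 - L) : ℕ)) : ℝ) / midBinom n)
        atTop (nhds ((Fintype.card P : ℝ) * L * (1 / 2) ^ k)) := by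
      have h4 := (tendsto_const_nhds
        (x := ((Fintype.card P : ℝ) * L)) (f := (atTop : Filter ℕ))).mul hkshift
      apply h4.congr
      intro n
      rw [mul_div_assoc]
    have hLBn : ∀ n : ℕ, k + (2 * L + 2) ≤ n →
        (Fintype.card P : ℝ) * L * ((((n - k).choose ((n - k) / 2 - L) : ℕ)) : ℝ) / midBinom n
          ≤ (PaStar P n : ℝ) / midBinom n := by
      intro n hn
      have hnat := lower_assembly hp l hstrongL hpairL (n - k) (by omega)
      rw [show k + (n - k) = n from by omega] at hnat
      apply (div_le_div_iff_of_pos_right (midBinom_pos n)).mpr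
      calc (Fintype.card P : ℝ) * L * ((((n - k).choose ((n - k) / 2 - L) : ℕ)) : ℝ)
          = ((Fintype.card P * (L * (n - k).choose ((n - k) / 2 - L)) : ℕ) : ℝ) := by
            push_cast; ring
        _ ≤ (PaStar P n : ℝ) := by exact_mod_cast hnat
    -- eventual two-sided bounds
    have hUBev : ∀ᶠ n in atTop, (PaStar P n : ℝ) / midBinom n ≤ B + ε / 2 := by
      have h6 : ∀ᶠ n in atTop,
          (Fintype.card P : ℝ) * n / ((c : ℝ) * ((n - 6 * c : ℕ) : ℝ)) ≤ B + ε / 2 :=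
        Filter.Tendsto.eventually_le_const (show B < B + ε / 2 from by linarith) hUBtendsto
      filter_upwards [h6, eventually_ge_atTop N₁, eventually_ge_atTop (6 * c + 1)]
        with n h6n hn1 hn2
      exact le_trans (hUBreal n hn1 (by omega)) h6n
    have hLBev : ∀ᶠ n in atTop, B - ε / 2 ≤ (PaStar P n : ℝ) / midBinom n := by
      set V : ℝ := (Fintype.card P : ℝ) * L * (1 / 2) ^ k with hVdef
      have hV : B - ε / 4 ≤ V := by
        have := hσt
        linarith [hkey]
      have h8 : ∀ᶠ n in atTop, V - ε / 4 ≤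
          (Fintype.card P : ℝ) * L * ((((n - k).choose ((n - k) / 2 - L) : ℕ)) : ℝ) / midBinom n :=
        Filter.Tendsto.eventually_const_le (show V - ε / 4 < V from by linarith) hLBtendsto
      filter_upwards [h8, eventually_ge_atTop (k + (2 * L + 2))] with n h8n hn
      calc B - ε / 2 ≤ V - ε / 4 := by linarith
        _ ≤ (Fintype.card P : ℝ) * L * ((((n - k).choose ((n - k) / 2 - L) : ℕ)) : ℝ) / midBinom n := h8n
        _ ≤ (PaStar P n : ℝ) / midBinom n := hLBn n hn
    have hfinal : ∀ᶠ n in atTop,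
        dist ((PaStar P n : ℝ) / midBinom n) B < ε := by
      filter_upwards [hUBev, hLBev] with n h1 h2
      rw [Real.dist_eq, abs_lt]
      constructor <;> linarith
    obtain ⟨N, hN⟩ := eventually_atTop.mp hfinal
    exact ⟨N, hN⟩

end FinalGlue


/-- Main Theorem 2. For every finite poset `P`,
`Pa*(n, P) / C(n, ⌊n/2⌋) → |P| / c*(P)` as `n → ∞`. -/
theorem paStar_asymptotics (P : Type*) [PartialOrder P] [Fintype P] :
    Filter.Tendsto (fun n : ℕ => (PaStar P n : ℝ) / (n.choose (n / 2)))
      Filter.atTop (nhds ((Fintype.card P : ℝ) / (closureNumStar P : ℝ))) := by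
  exact paStar_asymptotics' P
end

section
/- Fix an integer m ≥ 1. Let ā(m, n) denote the minimum, over all families F of exactly m subsets of [n], of the number of full chains in B_n that intersect F. Then as n → ∞, ā(m, n) is asymptotically equal to m · n! / C(n, ⌊n/2⌋); that is, ā(m,n) · C(n, ⌊n/2⌋) / (m · n!) → 1. -/
/-- A full (maximal) chain in `B_n`, recorded as the function assigning to each
`i ∈ {0, …, n}` the subset of size `i` belonging to the chain. -/
def IsFullChain {n : ℕ} (c : Fin (n+1) → Finset (Fin n)) : Prop :=
  (∀ i : Fin (n+1), (c i).card = (i : ℕ)) ∧ ∀ i j : Fin (n+1), i ≤ j → c i ⊆ c j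

open scoped Classical in
/-- The number of full chains of `B_n` that contain at least one member of `F`. -/
noncomputable def chainCount {n : ℕ} (F : Finset (Finset (Fin n))) : ℕ :=
  (Finset.univ.filter (fun c : Fin (n+1) → Finset (Fin n) =>
    IsFullChain c ∧ ∃ i, c i ∈ F)).card

/-- `ā(m, n)`: the minimum, over all families `F` of exactly `m` subsets of `[n]`,
of the number of full chains of `B_n` meeting `F`. -/
noncomputable def abar (m n : ℕ) : ℕ :=
  sInf {a | ∃ F : Finset (Finset (Fin n)), F.card = m ∧ chainCount F = a}

open Finset
open scoped Classical

def lows (n k : ℕ) : Finset (Fin n) := Finset.univ.filter (fun j => (j : ℕ) < k)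

lemma mem_lows {n k : ℕ} {j : Fin n} : j ∈ lows n k ↔ (j : ℕ) < k := by
  simp [lows]

lemma card_lows {n k : ℕ} (h : k ≤ n) : (lows n k).card = k := by
  have : lows n k = (Finset.range k).attachFin
      (fun m hm => lt_of_lt_of_le (Finset.mem_range.mp hm) h) := by
    ext j; simp [mem_lows]
  rw [this, Finset.card_attachFin, Finset.card_range]

lemma lows_mono {n k t : ℕ} (h : k ≤ t) : lows n k ⊆ lows n t := by
  intro j hj; rw [mem_lows] at *; omega

lemma lows_zero {n : ℕ} : lows n 0 = ∅ := by
  ext j; simp [mem_lows]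

lemma lows_self {n : ℕ} : lows n n = Finset.univ := by
  ext j; simp [mem_lows, j.isLt]

lemma lows_succ {n k : ℕ} (h : k < n) :
    lows n (k+1) = insert ⟨k, h⟩ (lows n k) := by
  ext j
  simp only [mem_lows, Finset.mem_insert, Fin.ext_iff]
  omega

noncomputable def chainOf {n : ℕ} (σ : Equiv.Perm (Fin n)) : Fin (n+1) → Finset (Fin n) :=
  fun i => (lows n (i : ℕ)).image σ

lemma isFullChain_chainOf {n : ℕ} (σ : Equiv.Perm (Fin n)) : IsFullChain (chainOf σ) := by
  constructor
  · intro i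
    rw [chainOf, Finset.card_image_of_injective _ σ.injective,
      card_lows (Nat.lt_succ_iff.mp i.isLt)]
  · intro i j hij
    exact Finset.image_subset_image (lows_mono hij)

lemma chainOf_injective {n : ℕ} : Function.Injective (chainOf (n := n)) := by
  intro σ τ h
  refine Equiv.ext fun j => ?_
  have hsingle : lows n ((j : ℕ)+1) \ lows n (j : ℕ) = {j} := by
    ext x
    simp only [Finset.mem_sdiff, mem_lows, Finset.mem_singleton, Fin.ext_iff]
    omega
  have key : ∀ ρ : Equiv.Perm (Fin n),
      (lows n ((j : ℕ)+1)).image ⇑ρ \ (lows n (j : ℕ)).image ⇑ρ = {ρ j} := by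
    intro ρ
    rw [← Finset.image_sdiff _ _ ρ.injective, hsingle, Finset.image_singleton]
  have h1 := congrFun h ⟨(j : ℕ)+1, by omega⟩
  have h2 := congrFun h ⟨(j : ℕ), by omega⟩
  simp only [chainOf] at h1 h2
  have := key σ
  rw [h1, h2, key τ] at this
  exact (Finset.singleton_injective this).symm

lemma exists_perm_of_fullChain {n : ℕ} (c : Fin (n+1) → Finset (Fin n))
    (hc : IsFullChain c) : ∃ σ : Equiv.Perm (Fin n), chainOf σ = c := by
  -- the new element at each step
  have hdiffcard : ∀ j : Fin n, (c j.succ \ c j.castSucc).card = 1 := by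
    intro j
    rw [Finset.card_sdiff_of_subset (hc.2 _ _ (by simp [Fin.le_def]))]
    rw [hc.1, hc.1]
    simp
  have hne : ∀ j : Fin n, (c j.succ \ c j.castSucc).Nonempty := by
    intro j
    rw [← Finset.card_pos, hdiffcard]; norm_num
  set f : Fin n → Fin n := fun j => (c j.succ \ c j.castSucc).min' (hne j) with hf
  have hmem : ∀ j : Fin n, f j ∈ c j.succ ∧ f j ∉ c j.castSucc := by
    intro j
    have := Finset.min'_mem _ (hne j)
    exact Finset.mem_sdiff.mp this
  have hinj : Function.Injective f := by
    intro i j hij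
    by_contra hne'
    have hx : ∀ a b : Fin n, a < b → f a = f b → False := by
      intro a b hab heq
      have h1 : f a ∈ c a.succ := (hmem a).1
      have h2 : c a.succ ⊆ c b.castSucc := hc.2 _ _ (by
        simp only [Fin.le_def, Fin.val_succ, Fin.coe_castSucc]
        exact hab)
      have := h2 h1
      rw [heq] at this
      exact (hmem b).2 this
    rcases lt_trichotomy i j with h | h | h
    · exact hx i j h hij
    · exact hne' h
    · exact hx j i h hij.symm
  have hbij : Function.Bijective f := Finite.injective_iff_bijective.mp hinj
  refine ⟨Equiv.ofBijective f hbij, ?_⟩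
  have key : ∀ k (hk : k ≤ n), (lows n k).image f = c ⟨k, Nat.lt_succ_of_le hk⟩ := by
    intro k
    induction k with
    | zero =>
      intro _
      rw [lows_zero, Finset.image_empty]
      symm
      rw [← Finset.card_eq_zero]
      exact hc.1 ⟨0, by omega⟩
    | succ k ih =>
      intro hk
      have hkn : k < n := hk
      set j : Fin n := ⟨k, hkn⟩ with hj
      have hjs : j.succ = ⟨k+1, Nat.lt_succ_of_le hk⟩ := by ext; simp [hj]
      have hjc : j.castSucc = ⟨k, Nat.lt_succ_of_le (le_of_lt hkn)⟩ := by ext; simp [hj]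
      rw [lows_succ hkn, Finset.image_insert, ih (le_of_lt hkn)]
      have hm1 : f j ∈ c ⟨k+1, Nat.lt_succ_of_le hk⟩ := by
        have := (hmem j).1; rwa [hjs] at this
      have hm2 : f j ∉ c ⟨k, Nat.lt_succ_of_le (le_of_lt hkn)⟩ := by
        have := (hmem j).2; rwa [hjc] at this
      have hsub : insert (f j) (c ⟨k, Nat.lt_succ_of_le (le_of_lt hkn)⟩)
          ⊆ c ⟨k+1, Nat.lt_succ_of_le hk⟩ := by
        intro x hx
        rcases Finset.mem_insert.mp hx with h | h
        · exact h ▸ hm1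
        · exact hc.2 _ _ (by simp [Fin.le_def]) h
      apply Finset.eq_of_subset_of_card_le hsub
      rw [Finset.card_insert_of_notMem hm2, hc.1, hc.1]
  refine funext fun i => ?_
  have : i = ⟨(i : ℕ), i.isLt⟩ := by ext; rfl
  rw [chainOf]
  have hcoe : ⇑(Equiv.ofBijective f hbij) = f := rfl
  rw [hcoe, key (i : ℕ) (Nat.lt_succ_iff.mp i.isLt)]

lemma chainCount_eq_perm {n : ℕ} (F : Finset (Finset (Fin n))) :
    chainCount F = (Finset.univ.filter (fun σ : Equiv.Perm (Fin n) =>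
      ∃ S ∈ F, (lows n S.card).image ⇑σ = S)).card := by
  rw [chainCount]
  symm
  apply Finset.card_bij (fun σ _ => chainOf σ)
  · intro σ hσ
    simp only [Finset.mem_filter, Finset.mem_univ, true_and] at hσ ⊢
    refine ⟨isFullChain_chainOf σ, ?_⟩
    obtain ⟨S, hSF, hS⟩ := hσ
    have hcard : S.card ≤ n := by
      have := Finset.card_le_univ S
      simpa using this
    exact ⟨⟨S.card, Nat.lt_succ_of_le hcard⟩, by rw [chainOf]; simp only []; rw [hS]; exact hSF⟩
  · intro σ hσ τ hτ h
    exact chainOf_injective h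
  · intro c hc
    simp only [Finset.mem_filter, Finset.mem_univ, true_and] at hc
    obtain ⟨hfull, i, hiF⟩ := hc
    obtain ⟨σ, hσ⟩ := exists_perm_of_fullChain c hfull
    refine ⟨σ, ?_, hσ⟩
    simp only [Finset.mem_filter, Finset.mem_univ, true_and]
    refine ⟨c i, hiF, ?_⟩
    have hcard : (c i).card = (i : ℕ) := hfull.1 i
    have : (lows n (c i).card).image ⇑σ = chainOf σ ⟨(c i).card, by omega⟩ := rfl
    rw [this, hσ]
    congr 1
    ext
    simp [hcard]


section Glue
variable {n : ℕ} (A B S T : Finset (Fin n)) (hAB : A ⊆ B)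
variable (e₁ : {x // x ∈ A} ≃ {y // y ∈ S}) (e₂ : {x // x ∈ B \ A} ≃ {y // y ∈ T \ S})
variable (e₃ : {x // x ∈ Bᶜ} ≃ {y // y ∈ Tᶜ})

noncomputable def glueFun : Fin n → Fin n :=
  fun x => if h : x ∈ A then (e₁ ⟨x, h⟩ : Fin n)
    else if h' : x ∈ B \ A then (e₂ ⟨x, h'⟩ : Fin n)
    else (e₃ ⟨x, by
      simp only [Finset.mem_compl]
      exact fun hB => h' (Finset.mem_sdiff.mpr ⟨hB, h⟩)⟩ : Fin n)

lemma glue_apply₁ {x : Fin n} (h : x ∈ A) :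
    glueFun A B S T e₁ e₂ e₃ x = (e₁ ⟨x, h⟩ : Fin n) := dif_pos h

lemma glue_apply₂ {x : Fin n} (h : x ∈ B \ A) :
    glueFun A B S T e₁ e₂ e₃ x = (e₂ ⟨x, h⟩ : Fin n) := by
  have hA : x ∉ A := (Finset.mem_sdiff.mp h).2
  rw [glueFun, dif_neg hA, dif_pos h]

lemma glue_apply₃ {x : Fin n} (h : x ∉ B) (hA : A ⊆ B) :
    glueFun A B S T e₁ e₂ e₃ x = (e₃ ⟨x, Finset.mem_compl.mpr h⟩ : Fin n) := by
  have h1 : x ∉ A := fun hx => h (hA hx)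
  have h2 : x ∉ B \ A := fun hx => h (Finset.mem_sdiff.mp hx).1
  rw [glueFun, dif_neg h1, dif_neg h2]

lemma glue_injective (hST : S ⊆ T) (hAB' : A ⊆ B) :
    Function.Injective (glueFun A B S T e₁ e₂ e₃) := by
  have loc : ∀ x : Fin n, x ∈ A ∨ x ∈ B \ A ∨ x ∉ B := by
    intro x
    by_cases h1 : x ∈ A
    · exact Or.inl h1
    by_cases h2 : x ∈ B
    · exact Or.inr (Or.inl (Finset.mem_sdiff.mpr ⟨h2, h1⟩))
    · exact Or.inr (Or.inr h2)
  intro x y hxy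
  rcases loc x with hx | hx | hx <;> rcases loc y with hy | hy | hy
  · rw [glue_apply₁ A B S T e₁ e₂ e₃ hx, glue_apply₁ A B S T e₁ e₂ e₃ hy] at hxy
    have := e₁.injective (Subtype.ext hxy)
    exact congrArg Subtype.val this
  · rw [glue_apply₁ A B S T e₁ e₂ e₃ hx, glue_apply₂ A B S T e₁ e₂ e₃ hy] at hxy
    exact absurd (hxy ▸ (e₁ ⟨x, hx⟩).2) (Finset.mem_sdiff.mp (e₂ ⟨y, hy⟩).2).2
  · rw [glue_apply₁ A B S T e₁ e₂ e₃ hx, glue_apply₃ A B S T e₁ e₂ e₃ hy hAB'] at hxy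
    exact absurd (hST (hxy ▸ (e₁ ⟨x, hx⟩).2)) (Finset.mem_compl.mp (e₃ ⟨y, _⟩).2)
  · rw [glue_apply₂ A B S T e₁ e₂ e₃ hx, glue_apply₁ A B S T e₁ e₂ e₃ hy] at hxy
    exact absurd (hxy ▸ (e₁ ⟨y, hy⟩).2) (Finset.mem_sdiff.mp (e₂ ⟨x, hx⟩).2).2
  · rw [glue_apply₂ A B S T e₁ e₂ e₃ hx, glue_apply₂ A B S T e₁ e₂ e₃ hy] at hxy
    have := e₂.injective (Subtype.ext hxy)
    exact congrArg Subtype.val this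
  · rw [glue_apply₂ A B S T e₁ e₂ e₃ hx, glue_apply₃ A B S T e₁ e₂ e₃ hy hAB'] at hxy
    have h1 : (e₂ ⟨x, hx⟩ : Fin n) ∈ T := (Finset.mem_sdiff.mp (e₂ ⟨x, hx⟩).2).1
    exact absurd (hxy ▸ h1) (Finset.mem_compl.mp (e₃ ⟨y, _⟩).2)
  · rw [glue_apply₃ A B S T e₁ e₂ e₃ hx hAB', glue_apply₁ A B S T e₁ e₂ e₃ hy] at hxy
    exact absurd (hST (hxy ▸ (e₁ ⟨y, hy⟩).2)) (Finset.mem_compl.mp (e₃ ⟨x, _⟩).2)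
  · rw [glue_apply₃ A B S T e₁ e₂ e₃ hx hAB', glue_apply₂ A B S T e₁ e₂ e₃ hy] at hxy
    have h1 : (e₂ ⟨y, hy⟩ : Fin n) ∈ T := (Finset.mem_sdiff.mp (e₂ ⟨y, hy⟩).2).1
    exact absurd (hxy ▸ h1) (Finset.mem_compl.mp (e₃ ⟨x, _⟩).2)
  · rw [glue_apply₃ A B S T e₁ e₂ e₃ hx hAB', glue_apply₃ A B S T e₁ e₂ e₃ hy hAB'] at hxy
    have := e₃.injective (Subtype.ext hxy)
    exact congrArg Subtype.val this

lemma glue_image₁ : A.image (glueFun A B S T e₁ e₂ e₃) = S := by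
  ext y
  constructor
  · intro hy
    rcases Finset.mem_image.mp hy with ⟨x, hx, hgx⟩
    rw [glue_apply₁ A B S T e₁ e₂ e₃ hx] at hgx
    exact hgx ▸ (e₁ ⟨x, hx⟩).2
  · intro hy
    refine Finset.mem_image.mpr ⟨(e₁.symm ⟨y, hy⟩).1, (e₁.symm ⟨y, hy⟩).2, ?_⟩
    rw [glue_apply₁ A B S T e₁ e₂ e₃ (e₁.symm ⟨y, hy⟩).2]
    simp

lemma glue_image₂ : (B \ A).image (glueFun A B S T e₁ e₂ e₃) = T \ S := by
  ext y
  constructor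
  · intro hy
    rcases Finset.mem_image.mp hy with ⟨x, hx, hgx⟩
    rw [glue_apply₂ A B S T e₁ e₂ e₃ hx] at hgx
    exact hgx ▸ (e₂ ⟨x, hx⟩).2
  · intro hy
    refine Finset.mem_image.mpr ⟨(e₂.symm ⟨y, hy⟩).1, (e₂.symm ⟨y, hy⟩).2, ?_⟩
    rw [glue_apply₂ A B S T e₁ e₂ e₃ (e₂.symm ⟨y, hy⟩).2]
    simp

end Glue

section Count
variable {n : ℕ}

noncomputable def restrictEquiv {α β : Type*} [DecidableEq β] (f : α → β) (hf : Function.Injective f)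
    (A : Finset α) (B : Finset β) (h : A.image f = B) : {x // x ∈ A} ≃ {y // y ∈ B} :=
  Equiv.ofBijective (fun x => ⟨f x.1, h ▸ Finset.mem_image_of_mem f x.2⟩)
    ⟨fun a b hab => Subtype.ext (hf (by simpa using hab)),
     fun y => by
      have hy : y.1 ∈ A.image f := h ▸ y.2
      rcases Finset.mem_image.mp hy with ⟨a, ha, hfa⟩
      exact ⟨⟨a, ha⟩, Subtype.ext hfa⟩⟩

@[simp] lemma restrictEquiv_apply {α β : Type*} [DecidableEq β] (f : α → β) (hf : Function.Injective f)
    (A : Finset α) (B : Finset β) (h : A.image f = B) (x : {x // x ∈ A}) :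
    (restrictEquiv f hf A B h x : β) = f x.1 := rfl

lemma image_compl_perm (σ : Equiv.Perm (Fin n)) (B S : Finset (Fin n))
    (h : B.image σ = S) : Bᶜ.image σ = Sᶜ := by
  have huniv : (Finset.univ : Finset (Fin n)).image σ = Finset.univ := by
    ext x
    simp only [Finset.mem_image, Finset.mem_univ, iff_true, true_and]
    exact ⟨σ.symm x, by simp⟩
  rw [Finset.compl_eq_univ_sdiff, Finset.compl_eq_univ_sdiff,
    Finset.image_sdiff _ _ σ.injective, huniv, h]

theorem card_perm_two_levels (A B S T : Finset (Fin n)) (hAB : A ⊆ B) (hST : S ⊆ T)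
    (h1 : A.card = S.card) (h2 : B.card = T.card) :
    Fintype.card {σ : Equiv.Perm (Fin n) // A.image ⇑σ = S ∧ B.image ⇑σ = T}
      = A.card.factorial * (B \ A).card.factorial * Bᶜ.card.factorial := by
  classical
  set Φ : {σ : Equiv.Perm (Fin n) // A.image ⇑σ = S ∧ B.image ⇑σ = T} →
      ({x // x ∈ A} ≃ {y // y ∈ S}) × ({x // x ∈ B \ A} ≃ {y // y ∈ T \ S}) ×
        ({x // x ∈ Bᶜ} ≃ {y // y ∈ Tᶜ}) :=
    fun σ => (restrictEquiv σ.1 σ.1.injective A S σ.2.1,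
      restrictEquiv σ.1 σ.1.injective (B \ A) (T \ S)
        (by rw [Finset.image_sdiff _ _ σ.1.injective, σ.2.1, σ.2.2]),
      restrictEquiv σ.1 σ.1.injective Bᶜ Tᶜ (image_compl_perm σ.1 B T σ.2.2)) with hΦ
  have hbij : Function.Bijective Φ := by
    constructor
    · rintro ⟨σ, hσ⟩ ⟨τ, hτ⟩ h
      have h1' := congrArg Prod.fst h
      have h2' := congrArg (fun p => p.2.1) h
      have h3' := congrArg (fun p => p.2.2) h
      refine Subtype.ext (Equiv.ext fun x => ?_)
      by_cases hx : x ∈ A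
      · have := congrArg (fun e => (e ⟨x, hx⟩ : Fin n)) h1'
        simpa [hΦ] using this
      · by_cases hx2 : x ∈ B \ A
        · have := congrArg (fun e => (e ⟨x, hx2⟩ : Fin n)) h2'
          simpa [hΦ] using this
        · have hxB : x ∈ Bᶜ := by
            simp only [Finset.mem_compl]
            exact fun hB => hx2 (Finset.mem_sdiff.mpr ⟨hB, hx⟩)
          have := congrArg (fun e => (e ⟨x, hxB⟩ : Fin n)) h3'
          simpa [hΦ] using this
    · rintro ⟨e₁, e₂, e₃⟩
      set g := glueFun A B S T e₁ e₂ e₃ with hg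
      have hginj : Function.Injective g := glue_injective A B S T e₁ e₂ e₃ hST hAB
      have hgbij : Function.Bijective g := Finite.injective_iff_bijective.mp hginj
      set σ : Equiv.Perm (Fin n) := Equiv.ofBijective g hgbij with hσ
      have hcoe : ⇑σ = g := rfl
      have himg1 : A.image ⇑σ = S := by rw [hcoe]; exact glue_image₁ A B S T e₁ e₂ e₃
      have himg2' : (B \ A).image ⇑σ = T \ S := by rw [hcoe]; exact glue_image₂ A B S T e₁ e₂ e₃
      have himg2 : B.image ⇑σ = T := by
        rw [← Finset.union_sdiff_of_subset hAB, Finset.image_union, himg1, himg2',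
          Finset.union_sdiff_of_subset hST]
      refine ⟨⟨σ, himg1, himg2⟩, ?_⟩
      rw [hΦ]
      refine Prod.ext ?_ (Prod.ext ?_ ?_)
      · exact Equiv.ext fun x => Subtype.ext (by
          simp only [restrictEquiv_apply, hcoe]
          exact glue_apply₁ A B S T e₁ e₂ e₃ x.2)
      · exact Equiv.ext fun x => Subtype.ext (by
          simp only [restrictEquiv_apply, hcoe]
          exact glue_apply₂ A B S T e₁ e₂ e₃ x.2)
      · exact Equiv.ext fun x => Subtype.ext (by
          simp only [restrictEquiv_apply, hcoe]
          exact glue_apply₃ A B S T e₁ e₂ e₃ (Finset.mem_compl.mp x.2) hAB)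
  rw [Fintype.card_of_bijective hbij, Fintype.card_prod, Fintype.card_prod]
  have c1 : Fintype.card ({x // x ∈ A} ≃ {y // y ∈ S}) = A.card.factorial := by
    rw [Fintype.card_equiv (Fintype.equivOfCardEq (by simp [h1])), Fintype.card_coe]
  have c2 : Fintype.card ({x // x ∈ B \ A} ≃ {y // y ∈ T \ S}) = (B \ A).card.factorial := by
    rw [Fintype.card_equiv (Fintype.equivOfCardEq (by
      simp only [Fintype.card_coe]
      rw [Finset.card_sdiff_of_subset hAB, Finset.card_sdiff_of_subset hST, h1, h2])), Fintype.card_coe]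
  have c3 : Fintype.card ({x // x ∈ Bᶜ} ≃ {y // y ∈ Tᶜ}) = Bᶜ.card.factorial := by
    rw [Fintype.card_equiv (Fintype.equivOfCardEq (by
      simp only [Fintype.card_coe]
      rw [Finset.card_compl, Finset.card_compl, h2])), Fintype.card_coe]
  rw [c1, c2, c3, mul_assoc]

end Count


section Hits
variable {n : ℕ}

noncomputable def hitSet (n : ℕ) (S : Finset (Fin n)) : Finset (Equiv.Perm (Fin n)) :=
  Finset.univ.filter fun σ => (lows n S.card).image ⇑σ = S

lemma card_le_n (S : Finset (Fin n)) : S.card ≤ n := by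
  simpa using Finset.card_le_univ S

lemma card_hitSet (S : Finset (Fin n)) :
    (hitSet n S).card = S.card.factorial * (n - S.card).factorial := by
  have hS : S.card ≤ n := card_le_n S
  rw [hitSet, ← Fintype.card_subtype]
  have e : {σ : Equiv.Perm (Fin n) // (lows n S.card).image ⇑σ = S} ≃
      {σ : Equiv.Perm (Fin n) // (lows n S.card).image ⇑σ = S ∧ (lows n S.card).image ⇑σ = S} :=
    Equiv.subtypeEquivRight (fun σ => (and_self_iff (a := (lows n S.card).image ⇑σ = S)).symm)
  rw [Fintype.card_congr e,
    card_perm_two_levels (lows n S.card) (lows n S.card) S S subset_rfl subset_rfl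
      (card_lows hS) (card_lows hS)]
  rw [card_lows hS, Finset.sdiff_self, Finset.card_empty, Finset.card_compl,
    card_lows hS, Fintype.card_fin]
  simp

lemma hitSet_inter (S T : Finset (Fin n)) :
    hitSet n S ∩ hitSet n T = Finset.univ.filter
      (fun σ : Equiv.Perm (Fin n) =>
        (lows n S.card).image ⇑σ = S ∧ (lows n T.card).image ⇑σ = T) := by
  ext σ; simp [hitSet, Finset.mem_inter]

lemma card_hitSet_inter (S T : Finset (Fin n)) (hST : S ⊂ T) :
    (hitSet n S ∩ hitSet n T).card
      = S.card.factorial * (T.card - S.card).factorial * (n - T.card).factorial := by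
  have hTn : T.card ≤ n := card_le_n T
  have hs : S.card ≤ T.card := Finset.card_le_card hST.subset
  rw [hitSet_inter, ← Fintype.card_subtype,
    card_perm_two_levels (lows n S.card) (lows n T.card) S T
      (lows_mono hs) hST.subset (card_lows (le_trans hs hTn)) (card_lows hTn)]
  rw [card_lows (le_trans hs hTn),
    Finset.card_sdiff_of_subset (lows_mono hs), card_lows hTn, card_lows (le_trans hs hTn),
    Finset.card_compl, card_lows hTn, Fintype.card_fin]

lemma hitSet_inter_empty (S T : Finset (Fin n)) (hne : S ≠ T)
    (h1 : ¬ S ⊂ T) (h2 : ¬ T ⊂ S) : hitSet n S ∩ hitSet n T = ∅ := by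
  rw [Finset.eq_empty_iff_forall_notMem]
  intro σ hσ
  rw [Finset.mem_inter, hitSet, hitSet, Finset.mem_filter, Finset.mem_filter] at hσ
  obtain ⟨⟨-, hS⟩, -, hT⟩ := hσ
  rcases le_total S.card T.card with h | h
  · have : S ⊆ T := by
      rw [← hS, ← hT]
      exact Finset.image_subset_image (lows_mono h)
    exact h1 (this.ssubset_of_ne hne)
  · have : T ⊆ S := by
      rw [← hS, ← hT]
      exact Finset.image_subset_image (lows_mono h)
    exact h2 (this.ssubset_of_ne (Ne.symm hne))

lemma le_choose {a k : ℕ} (h1 : 1 ≤ k) (h2 : k < a) : a ≤ a.choose k := by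
  induction a with
  | zero => omega
  | succ a ih =>
    rcases eq_or_lt_of_le (Nat.lt_succ_iff.mp h2) with h | h
    · subst h; rw [Nat.choose_succ_self_right]
    · obtain ⟨k', rfl⟩ : ∃ k', k = k' + 1 := ⟨k - 1, by omega⟩
      rw [Nat.choose_succ_succ]
      have hrfl : a.choose (Nat.succ k') = a.choose (k' + 1) := rfl
      have hp : 0 < a.choose k' := Nat.choose_pos (by omega)
      have := ih h
      omega

lemma overlap_bound_aux (S T : Finset (Fin n)) (hST : S ⊂ T)
    (hS1 : 1 ≤ S.card) (hTn : T.card < n) :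
    (n+1) * (hitSet n S ∩ hitSet n T).card
      ≤ 2 * ((hitSet n S).card + (hitSet n T).card) := by
  set s := S.card with hs
  set t := T.card with ht
  have hst : s < t := Finset.card_lt_card hST
  have hc1 : t ≤ t.choose s := le_choose hS1 hst
  have hc2 : n - s ≤ (n - s).choose (t - s) := le_choose (by omega) (by omega)
  have key : n + 1 ≤ 2 * t.choose s ∨ n + 1 ≤ 2 * (n - s).choose (t - s) := by omega
  rw [card_hitSet_inter S T hST, card_hitSet, card_hitSet, ← hs, ← ht]
  rcases key with hk | hk
  · have e1 : t.choose s * (s.factorial * (t - s).factorial * (n - t).factorial)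
        = t.factorial * (n - t).factorial := by
      rw [← Nat.choose_mul_factorial_mul_factorial (le_of_lt hst)]
      ring
    calc (n+1) * (s.factorial * (t - s).factorial * (n - t).factorial)
        ≤ (2 * t.choose s) * (s.factorial * (t - s).factorial * (n - t).factorial) :=
          Nat.mul_le_mul_right _ hk
      _ = 2 * (t.choose s * (s.factorial * (t - s).factorial * (n - t).factorial)) := by ring
      _ = 2 * (t.factorial * (n - t).factorial) := by rw [e1]
      _ ≤ 2 * (s.factorial * (n - s).factorial + t.factorial * (n - t).factorial) := by
          apply Nat.mul_le_mul_left; omega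
  · have hnts : n - s - (t - s) = n - t := by omega
    have e1 : (n - s).choose (t - s) * (s.factorial * (t - s).factorial * (n - t).factorial)
        = s.factorial * (n - s).factorial := by
      rw [← Nat.choose_mul_factorial_mul_factorial (show t - s ≤ n - s by omega), hnts]
      ring
    calc (n+1) * (s.factorial * (t - s).factorial * (n - t).factorial)
        ≤ (2 * (n - s).choose (t - s)) * (s.factorial * (t - s).factorial * (n - t).factorial) :=
          Nat.mul_le_mul_right _ hk
      _ = 2 * ((n - s).choose (t - s) * (s.factorial * (t - s).factorial * (n - t).factorial)) := by
          ring
      _ = 2 * (s.factorial * (n - s).factorial) := by rw [e1]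
      _ ≤ 2 * (s.factorial * (n - s).factorial + t.factorial * (n - t).factorial) := by
          apply Nat.mul_le_mul_left; omega

lemma overlap_bound (S T : Finset (Fin n)) (hne : S ≠ T)
    (hS1 : 1 ≤ S.card) (hSn : S.card < n) (hT1 : 1 ≤ T.card) (hTn : T.card < n) :
    (n+1) * (hitSet n S ∩ hitSet n T).card
      ≤ 2 * ((hitSet n S).card + (hitSet n T).card) := by
  by_cases h1 : S ⊂ T
  · exact overlap_bound_aux S T h1 hS1 hTn
  by_cases h2 : T ⊂ S
  · rw [Finset.inter_comm]
    have := overlap_bound_aux T S h2 hT1 hSn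
    omega
  · rw [hitSet_inter_empty S T hne h1 h2]
    simp

end Hits

section Bonferroni
variable {ι α : Type*} [DecidableEq ι] [DecidableEq α]

lemma bonferroni_s6 (F : Finset ι) (f : ι → Finset α) :
    ∑ i ∈ F, (f i).card ≤ (F.biUnion f).card + ∑ p ∈ F.offDiag, ((f p.1) ∩ (f p.2)).card := by
  induction F using Finset.induction_on with
  | empty => simp
  | @insert a F' ha ih =>
    rw [Finset.sum_insert ha, Finset.biUnion_insert, Finset.offDiag_insert ha]
    have hd1 : Disjoint (F'.offDiag ∪ {a} ×ˢ F') (F' ×ˢ {a}) := by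
      rw [Finset.disjoint_left]
      rintro ⟨x, y⟩ hx hy
      rw [Finset.mem_product, Finset.mem_singleton] at hy
      rcases Finset.mem_union.mp hx with h | h
      · exact ha (hy.2 ▸ (Finset.mem_offDiag.mp h).2.1)
      · rw [Finset.mem_product] at h
        exact ha (hy.2 ▸ h.2)
    have hd2 : Disjoint F'.offDiag ({a} ×ˢ F') := by
      rw [Finset.disjoint_left]
      rintro ⟨x, y⟩ hx hy
      rw [Finset.mem_product, Finset.mem_singleton] at hy
      exact ha (hy.1 ▸ (Finset.mem_offDiag.mp hx).1)
    rw [Finset.sum_union hd1, Finset.sum_union hd2]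
    have hsum1 : ∑ p ∈ ({a} ×ˢ F'), ((f p.1) ∩ (f p.2)).card
        = ∑ i ∈ F', ((f a) ∩ (f i)).card := by
      rw [Finset.sum_product, Finset.sum_singleton]
    have hcap : ((f a) ∩ (F'.biUnion f)).card ≤ ∑ i ∈ F', ((f a) ∩ (f i)).card := by
      have : (f a) ∩ (F'.biUnion f) = F'.biUnion (fun i => (f a) ∩ (f i)) := by
        ext x; simp [Finset.mem_biUnion, Finset.mem_inter]; tauto
      rw [this]
      exact Finset.card_biUnion_le
    have hunion : ((f a) ∪ F'.biUnion f).card + ((f a) ∩ (F'.biUnion f)).card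
        = (f a).card + (F'.biUnion f).card := Finset.card_union_add_card_inter _ _
    omega

end Bonferroni

section Bounds
variable {n m : ℕ}

lemma chainCount_eq_biUnion (F : Finset (Finset (Fin n))) :
    chainCount F = (F.biUnion (hitSet n)).card := by
  rw [chainCount_eq_perm]
  congr 1
  ext σ
  simp [hitSet, Finset.mem_biUnion, Finset.mem_filter]

lemma image_univ_perm (σ : Equiv.Perm (Fin n)) :
    (Finset.univ : Finset (Fin n)).image ⇑σ = Finset.univ := by
  ext x
  simp only [Finset.mem_image, Finset.mem_univ, iff_true, true_and]
  exact ⟨σ.symm x, by simp⟩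

lemma chainCount_of_extreme (F : Finset (Finset (Fin n)))
    (h : ∅ ∈ F ∨ (Finset.univ : Finset (Fin n)) ∈ F) :
    chainCount F = n.factorial := by
  rw [chainCount_eq_perm]
  have : (Finset.univ.filter (fun σ : Equiv.Perm (Fin n) =>
      ∃ S ∈ F, (lows n S.card).image ⇑σ = S)) = Finset.univ := by
    rw [Finset.filter_eq_self]
    intro σ _
    rcases h with h | h
    · exact ⟨∅, h, by simp [lows_zero]⟩
    · refine ⟨Finset.univ, h, ?_⟩
      have : (Finset.univ : Finset (Fin n)).card = n := by simp
      rw [this, lows_self, image_univ_perm]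
  rw [this, Finset.card_univ, Fintype.card_perm, Fintype.card_fin]

lemma middle_le_hitSet (S : Finset (Fin n)) :
    (n/2).factorial * (n - n/2).factorial ≤ (hitSet n S).card := by
  set s := S.card with hs
  have hsn : s ≤ n := card_le_n S
  rw [card_hitSet, ← hs]
  have h1 : (n/2).factorial * (n - n/2).factorial * (n.choose s)
      ≤ s.factorial * (n - s).factorial * (n.choose s) := by
    calc (n/2).factorial * (n - n/2).factorial * (n.choose s)
        ≤ (n/2).factorial * (n - n/2).factorial * (n.choose (n/2)) :=
          Nat.mul_le_mul_left _ (Nat.choose_le_middle s n)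
      _ = n.factorial := by
          rw [← Nat.choose_mul_factorial_mul_factorial (Nat.div_le_self n 2)]; ring
      _ = s.factorial * (n - s).factorial * (n.choose s) := by
          rw [← Nat.choose_mul_factorial_mul_factorial hsn]; ring
  exact Nat.le_of_mul_le_mul_right h1 (Nat.choose_pos hsn)

lemma chainCount_lower (hm : 1 ≤ m) (hC : m ≤ n.choose (n/2))
    (F : Finset (Finset (Fin n))) (hF : F.card = m) :
    ((n+1) - 4*m) * (m * ((n/2).factorial * (n - n/2).factorial))
      ≤ (n+1) * chainCount F := by
  set L := (n/2).factorial * (n - n/2).factorial with hL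
  have hmLn : m * L ≤ n.factorial := by
    calc m * L ≤ n.choose (n/2) * L := Nat.mul_le_mul_right _ hC
      _ = n.factorial := by
          rw [← Nat.choose_mul_factorial_mul_factorial (Nat.div_le_self n 2), hL]; ring
  by_cases hext : ∅ ∈ F ∨ (Finset.univ : Finset (Fin n)) ∈ F
  · rw [chainCount_of_extreme F hext]
    calc ((n+1) - 4*m) * (m * L) ≤ (n+1) * (m * L) :=
          Nat.mul_le_mul_right _ (Nat.sub_le _ _)
      _ ≤ (n+1) * n.factorial := Nat.mul_le_mul_left _ hmLn
  · push_neg at hext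
    have hcards : ∀ S ∈ F, 1 ≤ S.card ∧ S.card < n := by
      intro S hS
      constructor
      · rw [Nat.one_le_iff_ne_zero]
        intro h
        exact hext.1 ((Finset.card_eq_zero.mp h) ▸ hS)
      · have : S ⊂ Finset.univ := Finset.ssubset_univ_iff.mpr (fun h => hext.2 (h ▸ hS))
        have := Finset.card_lt_card this
        simpa using this
    rw [chainCount_eq_biUnion]
    set SS := ∑ S ∈ F, (hitSet n S).card with hSS
    set E := ∑ p ∈ F.offDiag, ((hitSet n p.1) ∩ (hitSet n p.2)).card with hE
    have hb : SS ≤ (F.biUnion (hitSet n)).card + E := bonferroni_s6 F (hitSet n)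
    have h2 : m * L ≤ SS := by
      have := Finset.card_nsmul_le_sum F (fun S => (hitSet n S).card) L
        (fun S _ => middle_le_hitSet S)
      rwa [hF, smul_eq_mul] at this
    have hEbound : (n+1) * E ≤ 4 * m * SS := by
      have step1 : (n+1) * E = ∑ p ∈ F.offDiag, (n+1) * ((hitSet n p.1) ∩ (hitSet n p.2)).card := by
        rw [hE, Finset.mul_sum]
      have step2 : ∑ p ∈ F.offDiag, (n+1) * ((hitSet n p.1) ∩ (hitSet n p.2)).card
          ≤ ∑ p ∈ F.offDiag, 2 * ((hitSet n p.1).card + (hitSet n p.2).card) := by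
        apply Finset.sum_le_sum
        rintro ⟨S, T⟩ hp
        rw [Finset.mem_offDiag] at hp
        obtain ⟨hS, hT, hne⟩ := hp
        exact overlap_bound S T hne (hcards S hS).1 (hcards S hS).2
          (hcards T hT).1 (hcards T hT).2
      have step3 : ∑ p ∈ F.offDiag, 2 * ((hitSet n p.1).card + (hitSet n p.2).card)
          ≤ ∑ p ∈ F ×ˢ F, 2 * ((hitSet n p.1).card + (hitSet n p.2).card) := by
        apply Finset.sum_le_sum_of_subset
        intro p hp
        rw [Finset.mem_offDiag] at hp
        exact Finset.mem_product.mpr ⟨hp.1, hp.2.1⟩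
      have step4 : ∑ p ∈ F ×ˢ F, 2 * ((hitSet n p.1).card + (hitSet n p.2).card)
          = 4 * m * SS := by
        rw [Finset.sum_product]
        have hrow : ∀ x ∈ F, ∑ y ∈ F, 2 * ((hitSet n x).card + (hitSet n y).card)
            = 2 * m * (hitSet n x).card + 2 * SS := by
          intro x _
          calc ∑ y ∈ F, 2 * ((hitSet n x).card + (hitSet n y).card)
              = ∑ y ∈ F, (2 * (hitSet n x).card + 2 * (hitSet n y).card) := by
                apply Finset.sum_congr rfl; intros; ring
            _ = F.card * (2 * (hitSet n x).card) + ∑ y ∈ F, 2 * (hitSet n y).card := by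
                rw [Finset.sum_add_distrib, Finset.sum_const, smul_eq_mul]
            _ = 2 * m * (hitSet n x).card + 2 * SS := by
                rw [hF, ← Finset.mul_sum, ← hSS]; ring
        calc ∑ x ∈ F, ∑ y ∈ F, 2 * ((hitSet n x).card + (hitSet n y).card)
            = ∑ x ∈ F, (2 * m * (hitSet n x).card + 2 * SS) :=
              Finset.sum_congr rfl hrow
          _ = 2 * m * SS + F.card * (2 * SS) := by
              rw [Finset.sum_add_distrib, Finset.sum_const, smul_eq_mul, ← Finset.mul_sum, ← hSS]
          _ = 4 * m * SS := by rw [hF]; ring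
      calc (n+1) * E = ∑ p ∈ F.offDiag, (n+1) * ((hitSet n p.1) ∩ (hitSet n p.2)).card := step1
        _ ≤ ∑ p ∈ F.offDiag, 2 * ((hitSet n p.1).card + (hitSet n p.2).card) := step2
        _ ≤ ∑ p ∈ F ×ˢ F, 2 * ((hitSet n p.1).card + (hitSet n p.2).card) := step3
        _ = 4 * m * SS := step4
    -- final arithmetic
    have t1 : ((n+1) - 4*m) * (m * L) ≤ ((n+1) - 4*m) * SS := Nat.mul_le_mul_left _ h2
    have t2 : ((n+1) - 4*m) * SS = (n+1) * SS - 4 * m * SS := by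
      rw [Nat.sub_mul]
    have t3 : (n+1) * SS ≤ (n+1) * (F.biUnion (hitSet n)).card + (n+1) * E := by
      calc (n+1) * SS ≤ (n+1) * ((F.biUnion (hitSet n)).card + E) := Nat.mul_le_mul_left _ hb
        _ = (n+1) * (F.biUnion (hitSet n)).card + (n+1) * E := by ring
    have t4 : (n+1) * SS - 4 * m * SS ≤ (n+1) * (F.biUnion (hitSet n)).card := by omega
    omega

lemma exists_middle_family (hC : m ≤ n.choose (n/2)) :
    ∃ F : Finset (Finset (Fin n)), F.card = m ∧
      chainCount F = m * ((n/2).factorial * (n - n/2).factorial) := by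
  have hcard : m ≤ (Finset.powersetCard (n/2) (Finset.univ : Finset (Fin n))).card := by
    rw [Finset.card_powersetCard]
    simpa using hC
  obtain ⟨F, hFsub, hF⟩ := Finset.exists_subset_card_eq hcard
  have hmem : ∀ S ∈ F, S.card = n/2 := by
    intro S hS
    exact (Finset.mem_powersetCard.mp (hFsub hS)).2
  refine ⟨F, hF, ?_⟩
  rw [chainCount_eq_biUnion]
  have hdisj : ∀ x ∈ F, ∀ y ∈ F, x ≠ y → Disjoint (hitSet n x) (hitSet n y) := by
    intro x hx y hy hxy
    rw [Finset.disjoint_left]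
    intro σ hσx hσy
    rw [hitSet, Finset.mem_filter] at hσx hσy
    apply hxy
    rw [← hσx.2, ← hσy.2, hmem x hx, hmem y hy]
  rw [Finset.card_biUnion hdisj]
  calc ∑ S ∈ F, (hitSet n S).card
      = ∑ S ∈ F, (n/2).factorial * (n - n/2).factorial := by
        apply Finset.sum_congr rfl
        intro S hS
        rw [card_hitSet, hmem S hS]
    _ = m * ((n/2).factorial * (n - n/2).factorial) := by
        rw [Finset.sum_const, smul_eq_mul, hF]

lemma abar_le (hC : m ≤ n.choose (n/2)) :
    abar m n ≤ m * ((n/2).factorial * (n - n/2).factorial) := by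
  obtain ⟨F, hF, hcc⟩ := exists_middle_family hC
  exact Nat.sInf_le ⟨F, hF, hcc⟩

lemma abar_ge (hm : 1 ≤ m) (hC : m ≤ n.choose (n/2)) :
    ((n+1) - 4*m) * (m * ((n/2).factorial * (n - n/2).factorial))
      ≤ (n+1) * abar m n := by
  obtain ⟨F0, hF0, hcc0⟩ := exists_middle_family hC
  have hne : {a | ∃ F : Finset (Finset (Fin n)), F.card = m ∧ chainCount F = a}.Nonempty :=
    ⟨_, F0, hF0, hcc0⟩
  obtain ⟨F, hF, hcc⟩ := Nat.sInf_mem hne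
  rw [abar, ← hcc]
  exact chainCount_lower hm hC F hF

end Bounds

/-- Proposition. For fixed `m ≥ 1`,
`ā(m, n) ∼ m · n! / C(n, ⌊n/2⌋)`; that is,
`ā(m,n) · C(n, ⌊n/2⌋) / (m · n!) → 1` as `n → ∞`. -/
theorem abar_asymptotics (m : ℕ) (hm : 1 ≤ m) :
    Filter.Tendsto
      (fun n : ℕ => (abar m n : ℝ) * (n.choose (n / 2) : ℝ) / ((m : ℝ) * n.factorial))
      Filter.atTop (nhds 1) := by
  have hLC : ∀ n : ℕ, ((n/2).factorial * (n - n/2).factorial) * (n.choose (n/2)) = n.factorial := by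
    intro n
    rw [← Nat.choose_mul_factorial_mul_factorial (Nat.div_le_self n 2)]; ring
  have hmR : (0:ℝ) < m := by positivity
  -- lower comparison function tends to 1
  have hg : Filter.Tendsto (fun n : ℕ => ((n:ℝ)+1-4*m)/((n:ℝ)+1)) Filter.atTop (nhds 1) := by
    have h0 : Filter.Tendsto (fun n : ℕ => (4*m:ℝ)/((n:ℝ)+1)) Filter.atTop (nhds 0) := by
      apply Filter.Tendsto.div_atTop tendsto_const_nhds
      exact Filter.tendsto_atTop_add_const_right _ 1 tendsto_natCast_atTop_atTop
    have h1 := (tendsto_const_nhds (x := (1:ℝ)) (f := Filter.atTop (α := ℕ))).sub h0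
    rw [sub_zero] at h1
    apply h1.congr
    intro n
    have hne : ((n:ℝ)+1) ≠ 0 := by positivity
    field_simp
  apply tendsto_of_tendsto_of_tendsto_of_le_of_le' hg tendsto_const_nhds
  · -- eventually lower bound
    filter_upwards [Filter.eventually_ge_atTop (max (4*m) 2)] with n hn
    have hn4 : 4*m ≤ n := le_trans (le_max_left _ _) hn
    have hn2 : 2 ≤ n := le_trans (le_max_right _ _) hn
    have hC : m ≤ n.choose (n/2) := by
      calc m ≤ n := by omega
        _ = n.choose 1 := (Nat.choose_one_right n).symm
        _ ≤ n.choose (n/2) := Nat.choose_le_middle 1 n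
    set L := (n/2).factorial * (n - n/2).factorial with hL
    have hnat : ((n+1) - 4*m) * (m * L) ≤ (n+1) * abar m n := abar_ge hm hC
    have hLpos : 0 < L := by positivity
    have hCpos : 0 < n.choose (n/2) := Nat.choose_pos (Nat.div_le_self n 2)
    have hcast : (((n+1) - 4*m : ℕ) : ℝ) = (n:ℝ)+1-4*m := by
      push_cast [Nat.cast_sub (by omega : 4*m ≤ n+1)]; ring
    have hR : ((n:ℝ)+1-4*m) * (m * L) ≤ ((n:ℝ)+1) * abar m n := by
      have := Nat.cast_le (α := ℝ).mpr hnat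
      push_cast at this
      rw [← hcast]
      push_cast
      convert this using 1 <;> push_cast <;> ring
    rw [div_le_div_iff₀ (by positivity) (by positivity)]
    have hfact : ((m:ℝ) * n.factorial) = (m * L) * (n.choose (n/2) : ℝ) := by
      have := hLC n
      have hcast2 : ((L * n.choose (n/2) : ℕ) : ℝ) = (n.factorial : ℝ) := by
        rw [this]
      push_cast at hcast2
      rw [← hcast2]; ring
    rw [hfact]
    calc ((n:ℝ)+1-4*m) * ((m * L) * (n.choose (n/2) : ℝ))
        = (((n:ℝ)+1-4*m) * (m * L)) * (n.choose (n/2) : ℝ) := by ring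
      _ ≤ (((n:ℝ)+1) * abar m n) * (n.choose (n/2) : ℝ) := by
          apply mul_le_mul_of_nonneg_right hR (by positivity)
      _ = (abar m n : ℝ) * (n.choose (n/2) : ℝ) * ((n:ℝ)+1) := by ring
  · -- eventually upper bound
    filter_upwards [Filter.eventually_ge_atTop (max m 2)] with n hn
    have hC : m ≤ n.choose (n/2) := by
      have h1 : m ≤ n := le_trans (le_max_left _ _) hn
      calc m ≤ n := h1
        _ = n.choose 1 := (Nat.choose_one_right n).symm
        _ ≤ n.choose (n/2) := Nat.choose_le_middle 1 n
    have hub : abar m n ≤ m * ((n/2).factorial * (n - n/2).factorial) := abar_le hC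
    rw [div_le_one (by positivity)]
    have hnat : abar m n * n.choose (n/2) ≤ m * n.factorial := by
      calc abar m n * n.choose (n/2)
          ≤ (m * ((n/2).factorial * (n - n/2).factorial)) * n.choose (n/2) :=
            Nat.mul_le_mul_right _ hub
        _ = m * n.factorial := by rw [← hLC n]; ring
    have := Nat.cast_le (α := ℝ).mpr hnat
    push_cast at this
    convert this using 1 <;> push_cast <;> ring
end
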